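/- arXiv:0706.0431 — 6 statements merged into one kernel-verified Lean document; each statement's English description precedes it below -/
import Mathlib

section
/- Let Σ be a finite totally ordered alphabet and L ⊆ Σ^* an infinite regular language. Then for all integers p ≥ 1 and q ≥ 0, the arithmetic progression {q + kp : k ∈ ℕ} is S-recognizable; that is, the language {w ∈ L : ind_L(w) ∈ {q + kp : k ∈ ℕ}} is regular. -/
/-- Genealogical (shortlex) order on words. -/
def ShortLex {α : Type*} [LinearOrder α] (u w : List α) : Prop :=
  u.length < w.length ∨ (u.length = w.length ∧ List.Lex (· < ·) u w)

/-- `genIndex L w` is the number of words of `L` genealogically smaller than `w`. -/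
noncomputable def genIndex {α : Type*} [LinearOrder α] (L : Language α) (w : List α) : ℕ :=
  Set.ncard {u | u ∈ L ∧ ShortLex u w}

/-- `X ⊆ ℕ` is `S`-recognizable for the abstract numeration system `S = (L, Σ, <)`. -/
def SRecognizable {α : Type*} [LinearOrder α] (L : Language α) (X : Set ℕ) : Prop :=
  Language.IsRegular {w | w ∈ L ∧ genIndex L w ∈ X}

namespace APrec
attribute [local instance] Classical.propDecidable
set_option linter.unusedSectionVars false
set_option maxHeartbeats 1000000

/-! ### Arithmetic of the collapse map `pi` -/

variable (p q : ℕ)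

/-- Collapse of ℕ onto `{0,…,q+p-1}` identifying `n ~ n+p` for `n ≥ q`. -/
def pi (n : ℕ) : ℕ := if n < q + p then n else q + (n - q) % p

variable {p q}
variable (hp : 1 ≤ p)
include hp

lemma pi_lt (n : ℕ) : pi p q n < q + p := by
  unfold pi; split
  · assumption
  · have := Nat.mod_lt (n - q) hp; omega

lemma pi_of_ge {n : ℕ} (h : q ≤ n) : pi p q n = q + (n - q) % p := by
  unfold pi; split
  · have : n - q < p := by omega
    rw [Nat.mod_eq_of_lt this]; omega
  · rfl

lemma pi_modEq (n : ℕ) : pi p q n ≡ n [MOD p] := by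
  unfold pi; split
  · rfl
  · have h : q ≤ n := by omega
    calc q + (n - q) % p ≡ q + (n - q) [MOD p] :=
          Nat.ModEq.add_left q ((Nat.mod_modEq (n - q) p))
      _ = n := by omega

lemma pi_ge {n : ℕ} (h : q ≤ n) : q ≤ pi p q n := by
  rw [pi_of_ge hp h]; omega

lemma pi_eq_pi {a b : ℕ} (ha : q ≤ a) (hb : q ≤ b) (h : a ≡ b [MOD p]) :
    pi p q a = pi p q b := by
  rw [pi_of_ge hp ha, pi_of_ge hp hb]
  have : a - q ≡ b - q [MOD p] := by
    apply Nat.ModEq.add_right_cancel' q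
    rwa [Nat.sub_add_cancel ha, Nat.sub_add_cancel hb]
  exact congrArg (q + ·) this

omit hp in
lemma pi_of_lt {n : ℕ} (h : n < q + p) : pi p q n = n := if_pos h

lemma pi_pi (n : ℕ) : pi p q (pi p q n) = pi p q n := pi_of_lt (pi_lt hp n)

lemma pi_add_left (a b : ℕ) : pi p q (pi p q a + b) = pi p q (a + b) := by
  by_cases h : a < q + p
  · rw [pi_of_lt h]
  · have ha : q ≤ a := by omega
    exact pi_eq_pi hp (le_trans (pi_ge hp ha) (Nat.le_add_right _ _))
      (le_trans ha (Nat.le_add_right _ _)) ((pi_modEq hp a).add_right b)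

lemma pi_add_congr {a b : ℕ} (h : pi p q a = pi p q b) (c : ℕ) :
    pi p q (a + c) = pi p q (b + c) := by
  rw [← pi_add_left hp a c, h, pi_add_left hp]

lemma pi_mul_left (a b : ℕ) : pi p q (pi p q a * b) = pi p q (a * b) := by
  by_cases h : a < q + p
  · rw [pi_of_lt h]
  · rcases Nat.eq_zero_or_pos b with hb | hb
    · subst hb; simp
    · have ha : q ≤ a := by omega
      have h1 : q ≤ pi p q a * b := le_trans (pi_ge hp ha) (Nat.le_mul_of_pos_right _ hb)
      have h2 : q ≤ a * b := le_trans ha (Nat.le_mul_of_pos_right _ hb)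
      exact pi_eq_pi hp h1 h2 ((pi_modEq hp a).mul_right b)

lemma pi_mul_congr {a b : ℕ} (h : pi p q a = pi p q b) (c : ℕ) :
    pi p q (a * c) = pi p q (b * c) := by
  rw [← pi_mul_left hp a c, h, pi_mul_left hp]

lemma pi_sum_congr {ι : Type*} (s : Finset ι) (f g : ι → ℕ)
    (h : ∀ i ∈ s, pi p q (f i) = pi p q (g i)) :
    pi p q (∑ i ∈ s, f i) = pi p q (∑ i ∈ s, g i) := by
  classical
  induction s using Finset.induction_on with
  | empty => simp
  | @insert a s hx ih =>
    rw [Finset.sum_insert hx, Finset.sum_insert hx, add_comm (f a), add_comm (g a)]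
    rw [pi_add_congr hp (ih fun i hi => h i (Finset.mem_insert_of_mem hi)) (f a),
      add_comm, add_comm (∑ i ∈ s, g i)]
    exact pi_add_congr hp (h a (Finset.mem_insert_self a s)) _

lemma mem_AP_iff (n : ℕ) : (∃ k : ℕ, n = q + k * p) ↔ pi p q n = q := by
  constructor
  · rintro ⟨k, rfl⟩
    rw [pi_of_ge hp (Nat.le_add_right _ _)]
    simp [Nat.mul_mod_left]
  · intro h
    by_cases hq : q ≤ n
    · rw [pi_of_ge hp hq] at h
      have : (n - q) % p = 0 := by omega
      refine ⟨(n - q) / p, ?_⟩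
      have := Nat.div_mul_cancel ((Nat.dvd_of_mod_eq_zero this))
      omega
    · unfold pi at h
      rw [if_pos (by omega)] at h
      omega

omit hp

/-! ### Words of a given length -/

variable {α : Type*} [Fintype α] [LinearOrder α]

noncomputable def wordsLen : ℕ → Finset (List α)
  | 0 => {[]}
  | n + 1 => ((wordsLen n) ×ˢ (Finset.univ : Finset α)).image fun z => z.1 ++ [z.2]

lemma mem_wordsLen {n : ℕ} {y : List α} : y ∈ wordsLen n ↔ y.length = n := by
  induction n generalizing y with
  | zero => simp [wordsLen, List.length_eq_zero_iff]
  | succ n ih =>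
    simp only [wordsLen, Finset.mem_image, Finset.mem_product, Finset.mem_univ, and_true]
    constructor
    · rintro ⟨z, hz, rfl⟩
      simp [ih.mp hz]
    · intro hy
      have hne : y ≠ [] := by intro h; subst h; simp at hy
      refine ⟨(y.dropLast, y.getLast hne), ?_, ?_⟩
      · rw [ih]; simp [List.length_dropLast, hy]
      · exact List.dropLast_append_getLast hne

lemma snoc_inj : Function.Injective (fun z : List α × α => z.1 ++ [z.2]) := by
  rintro ⟨y, b⟩ ⟨z, c⟩ h
  simp only at h
  obtain ⟨h1, h2⟩ := List.append_inj' h rfl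
  simp_all

/-- Lex comparison of words extended by one letter. -/
lemma lex_snoc_iff {y u : List α} (hl : y.length = u.length) (b a : α) :
    List.Lex (· < ·) (y ++ [b]) (u ++ [a]) ↔
      List.Lex (· < ·) y u ∨ (y = u ∧ b < a) := by
  induction y generalizing u with
  | nil =>
    have : u = [] := by simpa using hl.symm
    subst this
    simp only [List.nil_append]
    rw [List.lex_singleton_iff]
    simp [List.not_lex_nil]
  | cons c y' ih =>
    cases u with
    | nil => simp at hl
    | cons d u' =>
      simp only [List.length_cons, add_left_inj] at hl
      constructor
      · intro h
        cases h with
        | rel h => exact Or.inl (List.Lex.rel h)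
        | cons h =>
          rcases (ih hl).mp h with h' | ⟨rfl, h'⟩
          · exact Or.inl (List.Lex.cons h')
          · exact Or.inr ⟨rfl, h'⟩
      · rintro (h | ⟨he, h⟩)
        · cases h with
          | rel h => exact List.Lex.rel h
          | cons h => exact List.Lex.cons ((ih hl).mpr (Or.inl h))
        · rw [List.cons_eq_cons] at he
          obtain ⟨rfl, rfl⟩ := he
          exact List.Lex.cons ((ih rfl).mpr (Or.inr ⟨rfl, h⟩))

lemma lex_irrefl (u : List α) : ¬ List.Lex (· < ·) u u := by
  intro h
  induction u with
  | nil => cases h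
  | cons a l ih =>
    cases h with
    | rel h => exact lt_irrefl _ h
    | cons h => exact ih h

/-- Splitting a count by the value of a map into a finite type. -/
lemma card_filter_mem {β Q : Type*} [Fintype Q] (s : Finset β) (f : β → Q) (T : Set Q) :
    (s.filter fun y => f y ∈ T).card
      = ∑ t : Q, if t ∈ T then (s.filter fun y => f y = t).card else 0 := by
  rw [Finset.card_eq_sum_card_fiberwise (f := f) (t := Finset.univ) (fun x _ => Finset.mem_univ _)]
  refine Finset.sum_congr rfl fun t _ => ?_
  by_cases ht : t ∈ T
  · rw [if_pos ht]
    congr 1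
    rw [Finset.filter_filter]
    exact Finset.filter_congr fun y _ => by
      constructor
      · exact fun h => h.2
      · exact fun h => ⟨by rwa [h], h⟩
  · rw [if_neg ht]
    rw [Finset.filter_filter, Finset.card_eq_zero, Finset.filter_eq_empty_iff]
    rintro y - ⟨h1, rfl⟩
    exact ht h1

/-! ### Counting functions attached to a DFA -/

variable {Q : Type*} [Fintype Q] (M : DFA α Q)

noncomputable def stepcnt (s t : Q) : ℕ :=
  (Finset.univ.filter fun b : α => M.step s b = t).card

noncomputable def lcnt (s : Q) (a : α) (t : Q) : ℕ :=
  (Finset.univ.filter fun b : α => b < a ∧ M.step s b = t).card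

noncomputable def cntE (n : ℕ) (t : Q) : ℕ :=
  ((wordsLen n).filter fun y => M.eval y = t).card

noncomputable def cntL (u : List α) (t : Q) : ℕ :=
  ((wordsLen u.length).filter fun y => List.Lex (· < ·) y u ∧ M.eval y = t).card

noncomputable def cntA (n : ℕ) : ℕ :=
  ((wordsLen n).filter fun y => M.eval y ∈ M.accept).card

noncomputable def cntH (n : ℕ) : ℕ := ∑ m ∈ Finset.range n, cntA M m

lemma card_snoc_filter (n : ℕ) (Φ : List α → Prop) [DecidablePred Φ]
    [DecidablePred fun z : List α × α => Φ (z.1 ++ [z.2])] :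
    ((wordsLen (n + 1)).filter Φ).card
      = (((wordsLen n) ×ˢ (Finset.univ : Finset α)).filter fun z => Φ (z.1 ++ [z.2])).card := by
  classical
  have h1 : (wordsLen (n+1) : Finset (List α)).filter Φ
      = ((((wordsLen n) ×ˢ (Finset.univ : Finset α)).filter
          fun z => Φ (z.1 ++ [z.2])).image fun z => z.1 ++ [z.2]) := by
    ext y
    simp only [Finset.mem_filter, Finset.mem_image, Finset.mem_product, Finset.mem_univ,
      and_true, mem_wordsLen]
    constructor
    · rintro ⟨hy, hΦ⟩
      have hne : y ≠ [] := by intro h; subst h; simp at hy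
      refine ⟨(y.dropLast, y.getLast hne), ⟨?_, ?_⟩, List.dropLast_append_getLast hne⟩
      · simp only [List.length_dropLast, hy]; rfl
      · rw [List.dropLast_append_getLast hne]; exact hΦ
    · rintro ⟨z, ⟨hz, hΦ⟩, rfl⟩
      exact ⟨by simp [hz], hΦ⟩
  rw [h1, Finset.card_image_of_injective _ snoc_inj]

lemma key_fiber (A : Finset (List α)) (P : List α → Prop) (R : Q → α → Prop)
    [DecidablePred fun z : List α × α => P z.1 ∧ R (M.eval z.1) z.2]
    [∀ s, DecidablePred fun y : List α => P y ∧ M.eval y = s]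
    [∀ s, DecidablePred (R s)] :
    ((A ×ˢ (Finset.univ : Finset α)).filter fun z => P z.1 ∧ R (M.eval z.1) z.2).card
      = ∑ s : Q, (A.filter fun y => P y ∧ M.eval y = s).card
          * ((Finset.univ : Finset α).filter fun b => R s b).card := by
  classical
  rw [Finset.card_eq_sum_card_fiberwise (f := fun z : List α × α => M.eval z.1)
    (t := Finset.univ) (fun x _ => Finset.mem_univ _)]
  refine Finset.sum_congr rfl fun s _ => ?_
  have heq : (((A ×ˢ (Finset.univ : Finset α)).filter
        fun z => P z.1 ∧ R (M.eval z.1) z.2).filter fun z => M.eval z.1 = s)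
      = (A.filter fun y => P y ∧ M.eval y = s) ×ˢ
          ((Finset.univ : Finset α).filter fun b => R s b) := by
    ext z
    simp only [Finset.mem_filter, Finset.mem_product, Finset.mem_univ, and_true, true_and]
    constructor
    · rintro ⟨⟨hA, h1, h2⟩, rfl⟩; exact ⟨⟨hA, h1, rfl⟩, h2⟩
    · rintro ⟨⟨hA, h1, hs⟩, h2⟩; exact ⟨⟨hA, h1, by rwa [hs]⟩, hs⟩
  rw [heq, Finset.card_product]

lemma cntE_succ (n : ℕ) (t : Q) :
    cntE M (n + 1) t = ∑ s : Q, cntE M n s * stepcnt M s t := by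
  unfold cntE stepcnt
  rw [card_snoc_filter]
  have heq : ((wordsLen n ×ˢ (Finset.univ : Finset α)).filter
        fun z => M.eval (z.1 ++ [z.2]) = t)
      = ((wordsLen n ×ˢ (Finset.univ : Finset α)).filter
        fun z => True ∧ M.step (M.eval z.1) z.2 = t) :=
    Finset.filter_congr fun z _ => by simp [DFA.eval_append_singleton]
  rw [heq]
  have hk := key_fiber M (wordsLen n) (fun _ => True) (fun s b => M.step s b = t)
  refine Eq.trans ?_ (Eq.trans hk ?_)
  · congr!
  · refine Finset.sum_congr rfl fun s _ => ?_
    have h3 : (Finset.filter (fun y => True ∧ M.eval y = s) (wordsLen n))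
        = Finset.filter (fun y : List α => M.eval y = s) (wordsLen n) :=
      Finset.filter_congr fun y _ => by simp
    rw [h3]

lemma cntA_eq (n : ℕ) :
    cntA M n = ∑ t : Q, if t ∈ M.accept then cntE M n t else 0 :=
  card_filter_mem (wordsLen n) M.eval M.accept

lemma cntL_snoc (u : List α) (a : α) (t : Q) :
    cntL M (u ++ [a]) t
      = (∑ s : Q, cntL M u s * stepcnt M s t) + lcnt M (M.eval u) a t := by
  unfold cntL stepcnt lcnt
  rw [show (u ++ [a]).length = u.length + 1 by simp]
  rw [card_snoc_filter]
  have hsplit : ((wordsLen u.length ×ˢ (Finset.univ : Finset α)).filter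
        fun z => List.Lex (· < ·) (z.1 ++ [z.2]) (u ++ [a]) ∧ M.eval (z.1 ++ [z.2]) = t)
      = ((wordsLen u.length ×ˢ (Finset.univ : Finset α)).filter
          fun z => List.Lex (· < ·) z.1 u ∧ M.step (M.eval z.1) z.2 = t)
        ∪ ((wordsLen u.length).filter fun y => y = u) ×ˢ
            ((Finset.univ : Finset α).filter fun b => b < a ∧ M.step (M.eval u) b = t) := by
    ext z
    simp only [Finset.mem_union, Finset.mem_filter, Finset.mem_product, Finset.mem_univ,
      true_and, and_true, DFA.eval_append_singleton]
    constructor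
    · rintro ⟨hw, hlex, hst⟩
      rcases (lex_snoc_iff (mem_wordsLen.mp hw) z.2 a).mp hlex with h | ⟨he, h⟩
      · exact Or.inl ⟨hw, h, hst⟩
      · exact Or.inr ⟨⟨hw, he⟩, h, by rwa [he] at hst⟩
    · rintro (⟨hw, h1, h2⟩ | ⟨⟨hw, he⟩, h1, h2⟩)
      · exact ⟨hw, (lex_snoc_iff (mem_wordsLen.mp hw) z.2 a).mpr (Or.inl h1), h2⟩
      · exact ⟨hw, (lex_snoc_iff (mem_wordsLen.mp hw) z.2 a).mpr (Or.inr ⟨he, h1⟩),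
          by rwa [he]⟩
  rw [hsplit]
  have hdisj : Disjoint
      ((wordsLen u.length ×ˢ (Finset.univ : Finset α)).filter
          fun z => List.Lex (· < ·) z.1 u ∧ M.step (M.eval z.1) z.2 = t)
      (((wordsLen u.length).filter fun y => y = u) ×ˢ
            ((Finset.univ : Finset α).filter fun b => b < a ∧ M.step (M.eval u) b = t)) := by
    rw [Finset.disjoint_left]
    rintro z hz1 hz2
    rw [Finset.mem_filter] at hz1
    rw [Finset.mem_product, Finset.mem_filter] at hz2
    exact lex_irrefl u (hz2.1.2 ▸ hz1.2.1)
  rw [Finset.card_union_of_disjoint hdisj, Finset.card_product]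
  have hu : ((wordsLen u.length).filter fun y => y = u) = {u} := by
    ext y
    simp only [Finset.mem_filter, Finset.mem_singleton, mem_wordsLen]
    exact ⟨fun h => h.2, fun h => ⟨by rw [h], h⟩⟩
  rw [hu, Finset.card_singleton, one_mul]
  congr 1
  have hk := key_fiber M (wordsLen u.length) (fun y => List.Lex (· < ·) y u)
    (fun s b => M.step s b = t)
  refine Eq.trans ?_ (Eq.trans hk ?_)
  · congr!
  · refine Finset.sum_congr rfl fun s _ => ?_
    congr!

/-! ### The genealogical index via the counting functions -/

lemma genIndex_eq (w : List α) :
    genIndex M.accepts w = cntH M w.length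
      + ((wordsLen w.length).filter
          fun y => List.Lex (· < ·) y w ∧ M.eval y ∈ M.accept).card := by
  classical
  have hset : {u : List α | u ∈ M.accepts ∧ ShortLex u w}
      = (((Finset.range w.length).biUnion
            fun m => (wordsLen m).filter fun y => M.eval y ∈ M.accept)
          ∪ ((wordsLen w.length).filter
            fun y => List.Lex (· < ·) y w ∧ M.eval y ∈ M.accept) : Finset (List α)) := by
    ext u
    rw [Set.mem_setOf_eq, Finset.mem_coe, Finset.mem_union, Finset.mem_biUnion]
    simp only [Finset.mem_filter, Finset.mem_range, mem_wordsLen, DFA.mem_accepts, ShortLex]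
    constructor
    · rintro ⟨hacc, h | ⟨hlen, hlex⟩⟩
      · exact Or.inl ⟨u.length, h, rfl, hacc⟩
      · exact Or.inr ⟨hlen, hlex, hacc⟩
    · rintro (⟨m, hm, hlen, hacc⟩ | ⟨hlen, hlex, hacc⟩)
      · exact ⟨hacc, Or.inl (hlen ▸ hm)⟩
      · exact ⟨hacc, Or.inr ⟨hlen, hlex⟩⟩
  rw [genIndex, hset, Set.ncard_coe_finset]
  have hdisj : Disjoint
      ((Finset.range w.length).biUnion
          fun m => (wordsLen m).filter fun y => M.eval y ∈ M.accept)
      ((wordsLen w.length).filter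
          fun y => List.Lex (· < ·) y w ∧ M.eval y ∈ M.accept) := by
    rw [Finset.disjoint_left]
    intro y hy1 hy2
    rw [Finset.mem_biUnion] at hy1
    obtain ⟨m, hm, hy1⟩ := hy1
    rw [Finset.mem_filter, mem_wordsLen] at hy1 hy2
    rw [Finset.mem_range] at hm
    omega
  rw [Finset.card_union_of_disjoint hdisj]
  have hbi : ((Finset.range w.length).biUnion
        fun m => (wordsLen m).filter fun y => M.eval y ∈ M.accept).card
      = cntH M w.length := by
    rw [Finset.card_biUnion]
    · rfl
    · intro i _ j _ hij
      rw [Function.onFun, Finset.disjoint_left]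
      intro y hy1 hy2
      rw [Finset.mem_filter, mem_wordsLen] at hy1 hy2
      exact hij (hy1.1 ▸ hy2.1)
  rw [hbi]
  congr!

lemma genIndex_eq' (w : List α) :
    genIndex M.accepts w
      = cntH M w.length + ∑ t : Q, if t ∈ M.accept then cntL M w t else 0 := by
  rw [genIndex_eq]
  congr 1
  have h1 : ((wordsLen w.length).filter
        fun y => List.Lex (· < ·) y w ∧ M.eval y ∈ M.accept)
      = (((wordsLen w.length).filter fun y => List.Lex (· < ·) y w).filter
          fun y => M.eval y ∈ M.accept) := by
    ext y
    simp only [Finset.mem_filter]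
    tauto
  rw [h1, card_filter_mem _ M.eval M.accept]
  refine Finset.sum_congr rfl fun t _ => ?_
  by_cases ht : t ∈ M.accept
  · rw [if_pos ht, if_pos ht]
    have h2 : (((wordsLen w.length).filter fun y => List.Lex (· < ·) y w).filter
          fun y => M.eval y = t)
        = ((wordsLen w.length).filter
          fun y => List.Lex (· < ·) y w ∧ M.eval y = t) := by
      ext y
      simp only [Finset.mem_filter]
      tauto
    rw [h2]; rfl
  · rw [if_neg ht, if_neg ht]

/-! ### The product automaton -/

variable (p q)

/-- The automaton tracking the DFA state together with (collapsed) counts. -/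
noncomputable def prodDFA (hp : 1 ≤ p) :
    DFA α (Q × Fin (q + p) × (Q → Fin (q + p)) × (Q → Fin (q + p))) where
  step := fun z a =>
    (M.step z.1 a,
     ⟨pi p q ((z.2.1 : ℕ) + ∑ t : Q, if t ∈ M.accept then (z.2.2.1 t : ℕ) else 0),
       pi_lt hp _⟩,
     fun t => ⟨pi p q (∑ s : Q, (z.2.2.1 s : ℕ) * stepcnt M s t), pi_lt hp _⟩,
     fun t => ⟨pi p q ((∑ s : Q, (z.2.2.2 s : ℕ) * stepcnt M s t) + lcnt M z.1 a t),
       pi_lt hp _⟩)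
  start :=
    (M.start,
     ⟨pi p q (cntH M 0), pi_lt hp _⟩,
     fun t => ⟨pi p q (cntE M 0 t), pi_lt hp _⟩,
     fun t => ⟨pi p q (cntL M [] t), pi_lt hp _⟩)
  accept := {z | z.1 ∈ M.accept ∧
    pi p q ((z.2.1 : ℕ) + ∑ t : Q, if t ∈ M.accept then (z.2.2.2 t : ℕ) else 0) = q}

lemma pi_add_sum_ite (hp : 1 ≤ p) (A : ℕ) (f : Q → ℕ) (T : Set Q) :
    pi p q (pi p q A + ∑ t : Q, if t ∈ T then pi p q (f t) else 0)
      = pi p q (A + ∑ t : Q, if t ∈ T then f t else 0) := by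
  rw [pi_add_left hp]
  rw [add_comm A, add_comm A]
  refine pi_add_congr hp ?_ A
  refine pi_sum_congr hp _ _ _ fun t _ => ?_
  by_cases ht : t ∈ T
  · rw [if_pos ht, if_pos ht, pi_pi hp]
  · rw [if_neg ht, if_neg ht]

lemma prodDFA_eval (hp : 1 ≤ p) (u : List α) :
    ((prodDFA p q M hp).eval u).1 = M.eval u ∧
    (((prodDFA p q M hp).eval u).2.1 : ℕ) = pi p q (cntH M u.length) ∧
    (∀ t, (((prodDFA p q M hp).eval u).2.2.1 t : ℕ) = pi p q (cntE M u.length t)) ∧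
    (∀ t, (((prodDFA p q M hp).eval u).2.2.2 t : ℕ) = pi p q (cntL M u t)) := by
  induction u using List.reverseRecOn with
  | nil =>
    exact ⟨rfl, rfl, fun t => rfl, fun t => rfl⟩
  | append_singleton u a ih =>
    obtain ⟨ih1, ih2, ih3, ih4⟩ := ih
    rw [DFA.eval_append_singleton]
    have hlen : (u ++ [a]).length = u.length + 1 := by simp
    refine ⟨?_, ?_, ?_, ?_⟩
    · show M.step ((prodDFA p q M hp).eval u).1 a = _
      rw [ih1, DFA.eval_append_singleton]
    · show pi p q ((((prodDFA p q M hp).eval u).2.1 : ℕ)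
          + ∑ t : Q, if t ∈ M.accept then ((((prodDFA p q M hp).eval u).2.2.1 t : ℕ)) else 0)
        = pi p q (cntH M (u ++ [a]).length)
      rw [ih2]
      have h1 : (∑ t : Q,
            if t ∈ M.accept then ((((prodDFA p q M hp).eval u).2.2.1 t : ℕ)) else 0)
          = ∑ t : Q, if t ∈ M.accept then pi p q (cntE M u.length t) else 0 := by
        refine Finset.sum_congr rfl fun t _ => ?_
        by_cases ht : t ∈ M.accept
        · rw [if_pos ht, if_pos ht, ih3]
        · rw [if_neg ht, if_neg ht]
      rw [h1, pi_add_sum_ite p q hp, ← cntA_eq, hlen,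
        show cntH M (u.length + 1) = cntH M u.length + cntA M u.length from
          Finset.sum_range_succ _ _]
    · intro t
      show pi p q (∑ s : Q, ((((prodDFA p q M hp).eval u).2.2.1 s : ℕ)) * stepcnt M s t)
        = pi p q (cntE M (u ++ [a]).length t)
      rw [hlen, cntE_succ]
      have h1 : (∑ s : Q, ((((prodDFA p q M hp).eval u).2.2.1 s : ℕ)) * stepcnt M s t)
          = ∑ s : Q, pi p q (cntE M u.length s) * stepcnt M s t :=
        Finset.sum_congr rfl fun s _ => by rw [ih3]
      rw [h1]
      exact pi_sum_congr hp Finset.univ _ _ fun s _ => pi_mul_left hp _ _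
    · intro t
      show pi p q ((∑ s : Q, ((((prodDFA p q M hp).eval u).2.2.2 s : ℕ)) * stepcnt M s t)
            + lcnt M (((prodDFA p q M hp).eval u).1) a t)
        = pi p q (cntL M (u ++ [a]) t)
      rw [ih1, cntL_snoc]
      have h1 : (∑ s : Q, ((((prodDFA p q M hp).eval u).2.2.2 s : ℕ)) * stepcnt M s t)
          = ∑ s : Q, pi p q (cntL M u s) * stepcnt M s t :=
        Finset.sum_congr rfl fun s _ => by rw [ih4]
      rw [h1]
      exact pi_add_congr hp
        (pi_sum_congr hp Finset.univ _ _ fun s _ => pi_mul_left hp _ _) _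

end APrec

/-- In any abstract numeration system, every arithmetic progression is `S`-recognizable. -/
theorem arithmetic_progression_SRecognizable {α : Type*} [Fintype α] [LinearOrder α]
    (L : Language α) (hreg : L.IsRegular) (hinf : L.Infinite)
    (p q : ℕ) (hp : 1 ≤ p) :
    SRecognizable L {n | ∃ k : ℕ, n = q + k * p} := by
  classical
  obtain ⟨Q, fQ, M, hM⟩ := hreg
  letI := fQ
  subst hM
  refine ⟨Q × Fin (q + p) × (Q → Fin (q + p)) × (Q → Fin (q + p)), inferInstance,
    APrec.prodDFA p q M hp, ?_⟩
  ext w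
  obtain ⟨h1, h2, h3, h4⟩ := APrec.prodDFA_eval p q M hp w
  rw [DFA.mem_accepts]
  show (((APrec.prodDFA p q M hp).eval w).1 ∈ M.accept ∧
      APrec.pi p q ((((APrec.prodDFA p q M hp).eval w).2.1 : ℕ)
        + ∑ t : Q, if t ∈ M.accept
            then ((((APrec.prodDFA p q M hp).eval w).2.2.2 t : ℕ)) else 0) = q)
    ↔ (w ∈ M.accepts ∧ genIndex M.accepts w ∈ {n | ∃ k : ℕ, n = q + k * p})
  rw [h1, h2]
  have hs : (∑ t : Q, if t ∈ M.accept
        then ((((APrec.prodDFA p q M hp).eval w).2.2.2 t : ℕ)) else 0)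
      = ∑ t : Q, if t ∈ M.accept then APrec.pi p q (APrec.cntL M w t) else 0 := by
    refine Finset.sum_congr rfl fun t _ => ?_
    by_cases ht : t ∈ M.accept
    · rw [if_pos ht, if_pos ht, h4]
    · rw [if_neg ht, if_neg ht]
  rw [hs, APrec.pi_add_sum_ite p q hp, ← APrec.genIndex_eq']
  exact and_congr (DFA.mem_accepts M).symm
    ⟨fun h => (APrec.mem_AP_iff hp _).mpr h, fun h => (APrec.mem_AP_iff hp _).mp h⟩
end

section
/- Let Σ be a finite totally ordered alphabet and L ⊆ Σ^* an infinite regular language that is slender, i.e., there exists d such that #(L ∩ Σ^n) ≤ d for all n ≥ 0. If X ⊆ ℕ is S-recognizable, then for every λ ∈ ℕ the set λX = {λx : x ∈ X} is S-recognizable. -/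
set_option linter.unusedSectionVars false
set_option linter.unusedVariables false
set_option maxHeartbeats 800000

/-- The number of words of length `n` in `L`. -/
noncomputable def uCount {α : Type*} (L : Language α) (n : ℕ) : ℕ :=
  Set.ncard {w | w ∈ L ∧ w.length = n}

open Set

namespace SlenderANS
variable {α : Type*} [Fintype α] [LinearOrder α]

def quot (u : List α) (K : Language α) : Language α := {v | u ++ v ∈ K}
@[simp] lemma mem_quot {u v : List α} {K : Language α} : v ∈ quot u K ↔ u ++ v ∈ K := Iff.rfl
@[simp] lemma quot_nil (K : Language α) : quot [] K = K := rfl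
lemma quot_quot (u v : List α) (K : Language α) : quot v (quot u K) = quot (u ++ v) K := by
  ext w; simp only [quot, Set.mem_setOf_eq, List.append_assoc]; rfl

def sec (K : Language α) (n : ℕ) : Set (List α) := {w | w ∈ K ∧ w.length = n}

lemma finite_length_eq (n : ℕ) : {w : List α | w.length = n}.Finite := by
  induction n with
  | zero =>
    have : {w : List α | w.length = 0} = {([] : List α)} := by
      ext w; simp [List.length_eq_zero_iff]
    rw [this]; exact Set.finite_singleton _
  | succ n ih =>
    have : {w : List α | w.length = n + 1} =
        ⋃ a ∈ (Set.univ : Set α), (List.cons a) '' {w : List α | w.length = n} := by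
      ext w
      constructor
      · intro hw
        match w, hw with
        | a :: t, hw => exact Set.mem_biUnion (Set.mem_univ a) ⟨t, by simpa using hw, rfl⟩
      · rintro ⟨s, ⟨a, rfl⟩, hs⟩
        simp only [Set.mem_iUnion] at hs
        obtain ⟨_, t, ht, rfl⟩ := hs
        simp only [Set.mem_setOf_eq] at ht ⊢
        simp [ht]
    rw [this]
    exact Set.Finite.biUnion Set.finite_univ (fun a _ => ih.image _)

lemma sec_finite (K : Language α) (n : ℕ) : (sec K n).Finite :=
  (finite_length_eq n).subset (fun _ h => h.2)

lemma uCount_eq_ncard_sec (K : Language α) (n : ℕ) : uCount K n = (sec K n).ncard := rfl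

lemma ncard_biUnion {ι β : Type*} (s : Finset ι) (f : ι → Set β)
    (hfin : ∀ i ∈ s, (f i).Finite)
    (hdisj : ∀ i ∈ s, ∀ j ∈ s, i ≠ j → Disjoint (f i) (f j)) :
    (⋃ i ∈ s, f i).ncard = ∑ i ∈ s, (f i).ncard := by
  classical
  induction s using Finset.induction_on with
  | empty => simp
  | @insert a s ha ih =>
    rw [Finset.set_biUnion_insert, Finset.sum_insert ha]
    have hfs : (⋃ i ∈ s, f i).Finite :=
      Set.Finite.biUnion s.finite_toSet (fun i hi => hfin i (Finset.mem_insert_of_mem hi))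
    have hd : Disjoint (f a) (⋃ i ∈ s, f i) := by
      rw [Set.disjoint_iUnion₂_right]
      intro i hi
      exact hdisj a (Finset.mem_insert_self a s) i (Finset.mem_insert_of_mem hi)
        (fun h => ha (h ▸ hi))
    rw [Set.ncard_union_eq hd (hfin a (Finset.mem_insert_self a s)) hfs,
      ih (fun i hi => hfin i (Finset.mem_insert_of_mem hi))
        (fun i hi j hj hij => hdisj i (Finset.mem_insert_of_mem hi) j
          (Finset.mem_insert_of_mem hj) hij)]

lemma sec_succ_eq (K : Language α) (n : ℕ) :
    sec K (n + 1) = ⋃ a ∈ (Finset.univ : Finset α), (List.cons a) '' sec (quot [a] K) n := by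
  ext w
  constructor
  · rintro ⟨hw, hlen⟩
    match w with
    | a :: t =>
      refine Set.mem_biUnion (Finset.mem_coe.mpr (Finset.mem_univ a)) ?_
      exact ⟨t, ⟨by simpa using hw, by simpa using hlen⟩, rfl⟩
  · intro hw
    simp only [Set.mem_iUnion] at hw
    obtain ⟨a, _, t, ⟨ht, hlen⟩, rfl⟩ := hw
    exact ⟨by simpa using ht, by simp [hlen]⟩

lemma uCount_succ (K : Language α) (n : ℕ) :
    uCount K (n + 1) = ∑ a ∈ (Finset.univ : Finset α), uCount (quot [a] K) n := by
  rw [uCount_eq_ncard_sec, sec_succ_eq]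
  rw [ncard_biUnion _ _ (fun a _ => (sec_finite _ _).image _)
    (fun a _ b _ hab => by
      rw [Set.disjoint_left]
      rintro w ⟨t, _, rfl⟩ ⟨t', _, h⟩
      exact hab (List.cons.inj h).1.symm)]
  refine Finset.sum_congr rfl (fun a _ => ?_)
  rw [Set.ncard_image_of_injective _ List.cons_injective, uCount_eq_ncard_sec]

lemma uCount_quot_le (K : Language α) (u : List α) (m : ℕ) :
    uCount (quot u K) m ≤ uCount K (u.length + m) := by
  rw [uCount_eq_ncard_sec, uCount_eq_ncard_sec]
  have h1 : (fun v => u ++ v) '' sec (quot u K) m ⊆ sec K (u.length + m) := by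
    rintro w ⟨v, ⟨hv, hlen⟩, rfl⟩
    exact ⟨hv, by simp [hlen]⟩
  calc (sec (quot u K) m).ncard
      = ((fun v => u ++ v) '' sec (quot u K) m).ncard :=
        (Set.ncard_image_of_injective _ (List.append_right_injective u)).symm
    _ ≤ (sec K (u.length + m)).ncard := Set.ncard_le_ncard h1 (sec_finite _ _)

noncomputable def rank (K : Language α) (v : List α) : ℕ :=
  Set.ncard {y | y ∈ K ∧ y.length = v.length ∧ List.Lex (· < ·) y v}

def lexSet (K : Language α) (v : List α) : Set (List α) :=
  {y | y ∈ K ∧ y.length = v.length ∧ List.Lex (· < ·) y v}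

lemma lexSet_subset_sec (K : Language α) (v : List α) : lexSet K v ⊆ sec K v.length :=
  fun y hy => ⟨hy.1, hy.2.1⟩

lemma lexSet_finite (K : Language α) (v : List α) : (lexSet K v).Finite :=
  (sec_finite K v.length).subset (lexSet_subset_sec K v)

lemma rank_eq_ncard (K : Language α) (v : List α) : rank K v = (lexSet K v).ncard := rfl

lemma lexSet_cons (K : Language α) (a : α) (v : List α) :
    lexSet K (a :: v) =
      (⋃ b ∈ Finset.univ.filter (· < a), (List.cons b) '' sec (quot [b] K) v.length) ∪
        (List.cons a) '' lexSet (quot [a] K) v := by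
  ext y
  constructor
  · rintro ⟨hy, hlen, hlex⟩
    match y with
    | b :: t =>
      have hlt : t.length = v.length := by simpa using hlen
      cases hlex with
      | rel h =>
        refine Or.inl (Set.mem_biUnion (Finset.mem_coe.mpr ?_) ⟨t, ⟨by simpa using hy, hlt⟩, rfl⟩)
        simp only [Finset.mem_filter, Finset.mem_univ, true_and]
        exact h
      | cons h =>
        exact Or.inr ⟨t, ⟨by simpa using hy, hlt, h⟩, rfl⟩
  · rintro (hy | hy)
    · simp only [Set.mem_iUnion] at hy
      obtain ⟨b, hb, t, ⟨ht, hlen⟩, rfl⟩ := hy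
      simp only [Finset.mem_coe, Finset.mem_filter, Finset.mem_univ, true_and] at hb
      refine ⟨by simpa using ht, ?_, List.Lex.rel hb⟩
      simp only [List.length_cons, hlen]
    · obtain ⟨t, ⟨ht, hlen, hlex⟩, rfl⟩ := hy
      refine ⟨by simpa using ht, ?_, List.Lex.cons hlex⟩
      simp only [List.length_cons, hlen]

lemma rank_cons (K : Language α) (a : α) (v : List α) :
    rank K (a :: v) =
      (∑ b ∈ Finset.univ.filter (· < a), uCount (quot [b] K) v.length) +
        rank (quot [a] K) v := by
  classical
  rw [rank_eq_ncard, lexSet_cons]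
  have hfinU : (⋃ b ∈ Finset.univ.filter (· < a), (List.cons b) '' sec (quot [b] K) v.length).Finite :=
    Set.Finite.biUnion (Finset.univ.filter (· < a)).finite_toSet
      (fun b _ => (sec_finite _ _).image _)
  have hdisj : Disjoint
      (⋃ b ∈ Finset.univ.filter (· < a), (List.cons b) '' sec (quot [b] K) v.length)
      ((List.cons a) '' lexSet (quot [a] K) v) := by
    rw [Set.disjoint_left]
    rintro w hw ⟨t, _, rfl⟩
    simp only [Set.mem_iUnion] at hw
    obtain ⟨b, hb, t', _, h⟩ := hw
    simp only [Finset.mem_coe, Finset.mem_filter, Finset.mem_univ, true_and] at hb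
    exact absurd (List.cons.inj h).1 (ne_of_lt hb)
  rw [Set.ncard_union_eq hdisj hfinU ((lexSet_finite _ _).image _)]
  congr 1
  · rw [ncard_biUnion _ _ (fun b _ => (sec_finite _ _).image _)
      (fun b _ c _ hbc => by
        rw [Set.disjoint_left]
        rintro w ⟨t, _, rfl⟩ ⟨t', _, h⟩
        exact hbc (List.cons.inj h).1.symm)]
    exact Finset.sum_congr rfl (fun b _ =>
      by rw [Set.ncard_image_of_injective _ List.cons_injective]; rfl)
  · rw [Set.ncard_image_of_injective _ List.cons_injective]; rfl

lemma rank_le_uCount (K : Language α) (v : List α) : rank K v ≤ uCount K v.length :=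
  Set.ncard_le_ncard (lexSet_subset_sec K v) (sec_finite _ _)

lemma rank_lt_uCount {K : Language α} {v : List α} (hv : v ∈ K) :
    rank K v < uCount K v.length := by
  rw [rank_eq_ncard, uCount_eq_ncard_sec]
  refine Set.ncard_lt_ncard ?_ (sec_finite _ _)
  constructor
  · exact lexSet_subset_sec K v
  · intro hsub
    have hv' : v ∈ lexSet K v := hsub ⟨hv, rfl⟩
    exact (List.Lex.asymm (· < ·)).asymm v v hv'.2.2 hv'.2.2


noncomputable def V (L : Language α) (n : ℕ) : ℕ := ∑ m ∈ Finset.range n, uCount L m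

lemma V_succ (L : Language α) (n : ℕ) : V L (n + 1) = V L n + uCount L n :=
  Finset.sum_range_succ _ _

lemma V_mono (L : Language α) : Monotone (V L) := fun n m h =>
  Finset.sum_le_sum_of_subset (Finset.range_subset_range.mpr h)

lemma genIndex_decomp (L : Language α) (w : List α) :
    genIndex L w = V L w.length + rank L w := by
  have hset : {u | u ∈ L ∧ ShortLex u w} =
      (⋃ m ∈ Finset.range w.length, sec L m) ∪ lexSet L w := by
    ext u
    constructor
    · rintro ⟨hu, h | ⟨hlen, hlex⟩⟩
      · exact Or.inl (Set.mem_biUnion (Finset.mem_range.mpr h) ⟨hu, rfl⟩)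
      · exact Or.inr ⟨hu, hlen, hlex⟩
    · rintro (h | h)
      · simp only [Set.mem_iUnion] at h
        obtain ⟨m, hm, hu, hlen⟩ := h
        exact ⟨hu, Or.inl (hlen ▸ Finset.mem_range.mp hm)⟩
      · exact ⟨h.1, Or.inr ⟨h.2.1, h.2.2⟩⟩
  have hA : (⋃ m ∈ Finset.range w.length, sec L m).Finite :=
    Set.Finite.biUnion (Finset.range w.length).finite_toSet (fun m _ => sec_finite L m)
  have hdisj : Disjoint (⋃ m ∈ Finset.range w.length, sec L m) (lexSet L w) := by
    rw [Set.disjoint_left]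
    rintro u hu hu'
    simp only [Set.mem_iUnion] at hu
    obtain ⟨m, hm, _, hlen⟩ := hu
    exact absurd (hu'.2.1 ▸ hlen ▸ Finset.mem_range.mp hm) (lt_irrefl _)
  rw [genIndex, hset, Set.ncard_union_eq hdisj hA (lexSet_finite _ _)]
  congr 1
  rw [ncard_biUnion _ _ (fun m _ => sec_finite L m)
    (fun m _ m' _ hmm => by
      rw [Set.disjoint_left]
      rintro u ⟨_, h1⟩ ⟨_, h2⟩
      exact hmm (h1.symm.trans h2))]
  rfl

noncomputable def AA (K : Language α) : List α → ℕ → ℕ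
  | [], _ => 0
  | a :: u, m =>
    (∑ b ∈ Finset.univ.filter (· < a), uCount (quot [b] K) (u.length + m)) + AA (quot [a] K) u m

lemma rank_append (u : List α) (K : Language α) (v : List α) :
    rank K (u ++ v) = AA K u v.length + rank (quot u K) v := by
  induction u generalizing K with
  | nil => simp [AA]
  | cons a u ih =>
    rw [List.cons_append, rank_cons, AA, ih (quot [a] K), quot_quot]
    simp only [List.length_append, List.singleton_append]
    ring

lemma genIndex_append (L : Language α) (u v : List α) :
    genIndex L (u ++ v) = (V L (u.length + v.length) + AA L u v.length) + rank (quot u L) v := by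
  rw [genIndex_decomp, List.length_append, rank_append, add_assoc]

/-- cut lemma for finding the letter where the cumulative count passes `k`. -/
lemma exists_cut (f : α → ℕ) (k : ℕ) (h : k < ∑ a ∈ Finset.univ, f a) :
    ∃ a : α, (∑ b ∈ Finset.univ.filter (· < a), f b) ≤ k ∧
      k < (∑ b ∈ Finset.univ.filter (· < a), f b) + f a := by
  classical
  have hne : (Finset.univ : Finset α).Nonempty := by
    by_contra hc
    rw [Finset.not_nonempty_iff_eq_empty] at hc
    rw [hc] at h; simp at h
  have hsplit : ∀ a : α, Finset.univ.filter (· ≤ a) = insert a (Finset.univ.filter (· < a)) := by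
    intro a
    ext b
    simp only [Finset.mem_filter, Finset.mem_univ, true_and, Finset.mem_insert]
    constructor
    · intro hb; rcases eq_or_lt_of_le hb with h1 | h1
      · exact Or.inl h1
      · exact Or.inr (by simpa using h1)
    · rintro (rfl | hb); · exact le_refl _
      · exact le_of_lt (by simpa using hb)
  have hsum_le : ∀ a : α, (∑ b ∈ Finset.univ.filter (· ≤ a), f b) =
      (∑ b ∈ Finset.univ.filter (· < a), f b) + f a := by
    intro a
    rw [hsplit a, Finset.sum_insert (by simp), add_comm]
  set S := Finset.univ.filter (fun a : α => k < ∑ b ∈ Finset.univ.filter (· ≤ a), f b) with hS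
  have hSne : S.Nonempty := by
    refine ⟨Finset.max' Finset.univ hne, ?_⟩
    rw [hS]
    simp only [Finset.mem_filter, Finset.mem_univ, true_and]
    have : Finset.univ.filter (· ≤ Finset.max' Finset.univ hne) = Finset.univ := by
      ext b; simp [Finset.le_max' _ b (Finset.mem_univ b)]
    rw [this]; exact h
  refine ⟨S.min' hSne, ?_, ?_⟩
  · by_contra hc
    push_neg at hc
    have hlt : (Finset.univ.filter (· < S.min' hSne)).Nonempty := by
      by_contra hc2
      rw [Finset.not_nonempty_iff_eq_empty] at hc2
      rw [hc2] at hc; simp at hc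
    set a'' := (Finset.univ.filter (· < S.min' hSne)).max' hlt with ha''
    have hsub : Finset.univ.filter (· < S.min' hSne) ⊆ Finset.univ.filter (· ≤ a'') := by
      intro b hb
      simp only [Finset.mem_filter, Finset.mem_univ, true_and] at hb ⊢
      rw [ha'']
      exact Finset.le_max' (Finset.univ.filter (· < S.min' hSne)) b
        (Finset.mem_filter.mpr ⟨Finset.mem_univ _, hb⟩)
    have h1 : k < ∑ b ∈ Finset.univ.filter (· ≤ a''), f b :=
      lt_of_lt_of_le hc (Finset.sum_le_sum_of_subset hsub)
    have ha''S : a'' ∈ S := by rw [hS]; simp only [Finset.mem_filter, Finset.mem_univ, true_and]; exact h1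
    have : S.min' hSne ≤ a'' := Finset.min'_le _ _ ha''S
    have h2 : a'' < S.min' hSne := by
      have := (Finset.mem_filter.mp ((Finset.univ.filter (· < S.min' hSne)).max'_mem hlt)).2
      exact this
    exact absurd this (not_le.mpr h2)
  · have h3 := S.min'_mem hSne
    have h4 := (Finset.mem_filter.mp h3).2
    exact lt_of_lt_of_eq h4 (hsum_le _)

lemma rank_surj (K : Language α) (n : ℕ) :
    ∀ k, k < uCount K n → ∃ w, w ∈ K ∧ w.length = n ∧ rank K w = k := by
  induction n generalizing K with
  | zero =>
    intro k hk
    have hsub : sec K 0 ⊆ {([] : List α)} := by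
      rintro w ⟨_, hw⟩; simp [List.length_eq_zero_iff.mp hw]
    have h1 : uCount K 0 ≤ 1 := by
      rw [uCount_eq_ncard_sec]
      calc (sec K 0).ncard ≤ ({([] : List α)} : Set (List α)).ncard :=
        Set.ncard_le_ncard hsub (Set.finite_singleton _)
      _ = 1 := Set.ncard_singleton _
    have hk0 : k = 0 := by omega
    have hmem : ([] : List α) ∈ K := by
      by_contra hc
      have : sec K 0 = ∅ := by
        rw [Set.eq_empty_iff_forall_notMem]
        rintro w ⟨hw, hlen⟩
        exact hc (List.length_eq_zero_iff.mp hlen ▸ hw)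
      rw [uCount_eq_ncard_sec, this] at hk
      simp at hk
    refine ⟨[], hmem, rfl, ?_⟩
    rw [hk0, rank_eq_ncard]
    have : lexSet K ([] : List α) = ∅ := by
      rw [Set.eq_empty_iff_forall_notMem]
      rintro y ⟨_, _, hlex⟩
      nomatch hlex
    rw [this]; simp
  | succ n ih =>
    intro k hk
    rw [uCount_succ] at hk
    obtain ⟨a, h1, h2⟩ := exists_cut _ k hk
    obtain ⟨t, ht, htlen, htrank⟩ := ih (quot [a] K) (k - ∑ b ∈ Finset.univ.filter (· < a), uCount (quot [b] K) n) (by omega)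
    refine ⟨a :: t, by simpa using ht, by simp [htlen], ?_⟩
    rw [rank_cons, htlen, htrank]
    omega


/-- A finitely-valued sequence evolving deterministically is eventually periodic. -/
lemma ev_periodic {β : Type*} [Finite β] (f : ℕ → β) (F : β → β)
    (hf : ∀ n, f (n + 1) = F (f n)) :
    ∃ N P, 0 < P ∧ ∀ n, N ≤ n → f (n + P) = f n := by
  obtain ⟨i, j, hij, heq⟩ := Finite.exists_ne_map_eq_of_infinite f
  have key : ∀ i j : ℕ, i < j → f i = f j → ∃ N P, 0 < P ∧ ∀ n, N ≤ n → f (n + P) = f n := by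
    intro i j hlt heq
    refine ⟨i, j - i, by omega, ?_⟩
    intro n hn
    induction n, hn using Nat.le_induction with
    | base => rw [show i + (j - i) = j by omega]; exact heq.symm
    | succ n hn ih =>
      rw [show n + 1 + (j - i) = (n + (j - i)) + 1 by omega, hf, ih, hf]
  rcases lt_or_gt_of_ne hij with h | h
  · exact key i j h heq
  · exact key j i h heq.symm

/-- iterate the period -/
lemma periodic_iterate {β : Type*} (f : ℕ → β) (N P : ℕ)
    (hper : ∀ n, N ≤ n → f (n + P) = f n) :
    ∀ k n, N ≤ n → f (n + k * P) = f n := by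
  intro k
  induction k with
  | zero => simp
  | succ k ih =>
    intro n hn
    rw [show n + (k + 1) * P = (n + k * P) + P by ring, hper _ (by omega), ih n hn]

/-- The range of left quotients of a regular language is finite. -/
lemma finite_quot_range {L : Language α} (h : L.IsRegular) :
    (Set.range fun u => quot u L).Finite := by
  obtain ⟨σ, fin, M, hM⟩ := h
  have key : ∀ u, quot u L = M.acceptsFrom (M.eval u) := by
    intro u
    ext v
    rw [mem_quot, ← hM, DFA.mem_acceptsFrom]
    show M.evalFrom M.start (u ++ v) ∈ M.accept ↔ _
    rw [M.evalFrom_of_append]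
    rfl
  have hsub : (Set.range fun u => quot u L) ⊆ Set.range (fun s : σ => M.acceptsFrom s) := by
    rintro _ ⟨u, rfl⟩
    exact ⟨M.eval u, (key u).symm⟩
  exact Set.Finite.subset (Set.finite_range _) hsub

lemma finite_range_factor {β γ δ : Type*} (f : β → γ) (e : β → δ)
    (hfac : ∀ a b, e a = e b → f a = f b) (he : (Set.range e).Finite) :
    (Set.range f).Finite := by
  haveI := he.to_subtype
  have hsub : Set.range f ⊆ Set.range (fun d : ↥(Set.range e) => f d.2.choose) := by
    rintro _ ⟨b, rfl⟩
    exact ⟨⟨e b, ⟨b, rfl⟩⟩, hfac _ _ (⟨b, rfl⟩ : ∃ a, e a = e b).choose_spec⟩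
  exact Set.Finite.subset (Set.finite_range _) hsub

/-- Myhill–Nerode: finitely many left quotients implies regular. -/
lemma regular_of_finite_quot {Z : Language α} (h : (Set.range fun u => quot u Z).Finite) :
    Z.IsRegular := by
  haveI := h.to_subtype
  haveI : Fintype ↥(Set.range fun u => quot u Z) := Fintype.ofFinite _
  set Q := ↥(Set.range fun u => quot u Z) with hQ
  let M0 : DFA α Q :=
    { step := fun K a => ⟨quot [a] K.1, by
        obtain ⟨u, hu⟩ := K.2
        refine ⟨u ++ [a], ?_⟩
        show quot (u ++ [a]) Z = _
        rw [← quot_quot]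
        exact congrArg (quot [a]) hu⟩
      start := ⟨Z, ⟨[], quot_nil Z⟩⟩
      accept := {K | [] ∈ K.1} }
  have hval : ∀ (v : List α) (s : Q), (M0.evalFrom s v).1 = quot v s.1 := by
    intro v
    induction v with
    | nil => intro s; simp
    | cons a v ih =>
      intro s
      show (M0.evalFrom (M0.step s a) v).1 = _
      rw [ih]
      show quot v (quot [a] s.1) = _
      rw [quot_quot]
      rfl
  have hacc : M0.accepts = Z := by
    ext w
    rw [DFA.mem_accepts]
    show (M0.evalFrom M0.start w) ∈ M0.accept ↔ _
    have : (M0.evalFrom M0.start w).1 = quot w Z := hval w M0.start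
    show [] ∈ (M0.evalFrom M0.start w).1 ↔ w ∈ Z
    rw [this]
    simp [mem_quot]
  let e := Fintype.equivFin Q
  exact ⟨Fin (Fintype.card Q), inferInstance, (DFA.reindex e) M0, by
    rw [DFA.accepts_reindex]; exact hacc⟩


def cPred (K J : Language α) (ℓ k : ℕ) : Prop :=
  ∃ w, w ∈ J ∧ w.length = ℓ ∧ rank K w = k

lemma cPred_succ (K J : Language α) (ℓ k : ℕ) :
    cPred K J (ℓ + 1) k ↔ ∃ a : α,
      (∑ b ∈ Finset.univ.filter (· < a), uCount (quot [b] K) ℓ) ≤ k ∧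
        cPred (quot [a] K) (quot [a] J) ℓ
          (k - ∑ b ∈ Finset.univ.filter (· < a), uCount (quot [b] K) ℓ) := by
  constructor
  · rintro ⟨w, hw, hlen, hrank⟩
    match w with
    | a :: t =>
      rw [rank_cons] at hrank
      have hlt : t.length = ℓ := by simpa using hlen
      rw [hlt] at hrank
      exact ⟨a, by omega, t, by simpa using hw, hlt, by omega⟩
  · rintro ⟨a, hle, t, ht, hlen, hrank⟩
    refine ⟨a :: t, by simpa using ht, by simp [hlen], ?_⟩
    rw [rank_cons, hlen, hrank]
    omega

lemma combined_period (L M : Language α) (hregL : L.IsRegular) (hregM : M.IsRegular)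
    (d : ℕ) (hd : ∀ n, uCount L n ≤ d) :
    ∃ N P, 0 < P ∧
      (∀ (u : List α) (m : ℕ), N ≤ m →
        uCount (quot u L) (m + P) = uCount (quot u L) m) ∧
      (∀ (u u' : List α) (m k : ℕ), N ≤ m → k ≤ d →
        (cPred (quot u L) (quot u' M) (m + P) k ↔ cPred (quot u L) (quot u' M) m k)) := by
  classical
  have hQL : (Set.range fun u => quot u L).Finite := finite_quot_range hregL
  have hQM : (Set.range fun u => quot u M).Finite := finite_quot_range hregM
  haveI := hQL.to_subtype
  haveI := hQM.to_subtype
  set QL := ↥(Set.range fun u => quot u L) with hQLdef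
  set QM := ↥(Set.range fun u => quot u M) with hQMdef
  have hbound : ∀ (K : QL) (m : ℕ), uCount K.1 m ≤ d := by
    rintro ⟨K, u, rfl⟩ m
    exact le_trans (uCount_quot_le L u m) (hd _)
  let stepL : QL → α → QL := fun K a => ⟨quot [a] K.1, by
    obtain ⟨u, hu⟩ := K.2
    refine ⟨u ++ [a], ?_⟩
    show quot (u ++ [a]) L = _
    rw [← quot_quot]
    exact congrArg (quot [a]) hu⟩
  let stepM : QM → α → QM := fun J a => ⟨quot [a] J.1, by
    obtain ⟨u, hu⟩ := J.2
    refine ⟨u ++ [a], ?_⟩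
    show quot (u ++ [a]) M = _
    rw [← quot_quot]
    exact congrArg (quot [a]) hu⟩
  let St := (QL → Fin (d + 1)) × (QL → QM → Fin (d + 1) → Prop)
  let f : ℕ → St := fun m =>
    (fun K => ⟨uCount K.1 m, Nat.lt_succ_of_le (hbound K m)⟩,
     fun K J k => cPred K.1 J.1 m k.val)
  let F : St → St := fun gc =>
    (fun K => ⟨min d (∑ a ∈ Finset.univ, (gc.1 (stepL K a)).val),
        Nat.lt_succ_of_le (min_le_left _ _)⟩,
     fun K J k => ∃ a : α,
       (∑ b ∈ Finset.univ.filter (· < a), (gc.1 (stepL K b)).val) ≤ k.val ∧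
         gc.2 (stepL K a) (stepM J a)
           ⟨k.val - ∑ b ∈ Finset.univ.filter (· < a), (gc.1 (stepL K b)).val,
             Nat.lt_succ_of_le (le_trans (Nat.sub_le _ _) (Nat.lt_succ_iff.mp k.2))⟩)
  have hf : ∀ m, f (m + 1) = F (f m) := by
    intro m
    refine Prod.ext ?_ ?_
    · funext K
      apply Fin.ext
      show uCount K.1 (m + 1) = min d (∑ a ∈ Finset.univ, uCount (quot [a] K.1) m)
      rw [uCount_succ]
      exact (min_eq_right (by rw [← uCount_succ]; exact hbound K (m+1))).symm
    · funext K J k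
      apply propext
      show cPred K.1 J.1 (m + 1) k.val ↔ _
      rw [cPred_succ]
  haveI : Finite St := by
    have : Finite Prop := inferInstance
    infer_instance
  obtain ⟨N, P, hP, hper⟩ := ev_periodic f F hf
  refine ⟨N, P, hP, ?_, ?_⟩
  · intro u m hm
    have := congrFun (congrArg Prod.fst (hper m hm)) ⟨quot u L, ⟨u, rfl⟩⟩
    exact congrArg Fin.val this
  · intro u u' m k hm hk
    have := congrFun (congrFun (congrArg Prod.snd (hper m hm))
      ⟨quot u L, ⟨u, rfl⟩⟩) ⟨quot u' M, ⟨u', rfl⟩⟩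
    have h2 := congrFun this ⟨k, Nat.lt_succ_of_le hk⟩
    exact iff_of_eq h2


section Consequences

variable (L : Language α) (N P : ℕ)

lemma sum_window_const (hu : ∀ m, N ≤ m → uCount L (m + P) = uCount L m) :
    ∀ ℓ, N ≤ ℓ →
      ∑ i ∈ Finset.range P, uCount L (ℓ + i) = ∑ i ∈ Finset.range P, uCount L (N + i) := by
  intro ℓ hℓ
  induction ℓ, hℓ using Nat.le_induction with
  | base => rfl
  | succ ℓ hℓ ih =>
    have e1 : ∑ i ∈ Finset.range (P + 1), uCount L (ℓ + i) =
        (∑ i ∈ Finset.range P, uCount L (ℓ + i)) + uCount L (ℓ + P) :=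
      Finset.sum_range_succ _ _
    have e2 : ∑ i ∈ Finset.range (P + 1), uCount L (ℓ + i) =
        (∑ i ∈ Finset.range P, uCount L (ℓ + (i + 1))) + uCount L (ℓ + 0) :=
      Finset.sum_range_succ' _ _
    have e3 : ∑ i ∈ Finset.range P, uCount L (ℓ + (i + 1)) =
        ∑ i ∈ Finset.range P, uCount L ((ℓ + 1) + i) := by
      refine Finset.sum_congr rfl (fun i _ => ?_)
      congr 1
      omega
    have e4 : uCount L (ℓ + P) = uCount L ℓ := hu ℓ hℓ
    rw [e3] at e2
    simp only [Nat.add_zero] at e2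
    rw [← ih]
    omega

lemma V_add_sum : ∀ (j ℓ : ℕ), V L (ℓ + j) = V L ℓ + ∑ i ∈ Finset.range j, uCount L (ℓ + i) := by
  intro j ℓ
  induction j with
  | zero => simp
  | succ j ih =>
    rw [show ℓ + (j + 1) = (ℓ + j) + 1 by omega, V_succ, ih, Finset.sum_range_succ]
    omega

lemma V_window (hu : ∀ m, N ≤ m → uCount L (m + P) = uCount L m) :
    ∀ ℓ, N ≤ ℓ → V L (ℓ + P) = V L ℓ + ∑ i ∈ Finset.range P, uCount L (N + i) := by
  intro ℓ hℓ
  rw [V_add_sum, sum_window_const L N P hu ℓ hℓ]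

lemma V_iter (hu : ∀ m, N ≤ m → uCount L (m + P) = uCount L m) :
    ∀ (j : ℕ) (ℓ : ℕ), N ≤ ℓ →
      V L (ℓ + j * P) = V L ℓ + j * ∑ i ∈ Finset.range P, uCount L (N + i) := by
  intro j
  induction j with
  | zero => simp
  | succ j ih =>
    intro ℓ hℓ
    rw [show ℓ + (j + 1) * P = (ℓ + j * P) + P by ring,
      V_window L N P hu _ (by omega), ih ℓ hℓ]
    ring

lemma C_pos (hinf : L.Infinite) (hP : 0 < P)
    (hu : ∀ m, N ≤ m → uCount L (m + P) = uCount L m) :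
    0 < ∑ i ∈ Finset.range P, uCount L (N + i) := by
  by_contra hc
  push_neg at hc
  have hzero : ∀ i, i < P → uCount L (N + i) = 0 := by
    intro i hi
    have := Finset.sum_eq_zero_iff.mp (Nat.le_zero.mp hc)
    exact this i (Finset.mem_range.mpr hi)
  have hall : ∀ m, N ≤ m → uCount L m = 0 := by
    intro m hm
    have h1 : m = (N + (m - N) % P) + ((m - N) / P) * P := by
      have h := Nat.div_add_mod (m - N) P
      rw [Nat.mul_comm] at h
      omega
    have h2 : uCount L ((N + (m - N) % P) + ((m - N) / P) * P) = uCount L (N + (m - N) % P) :=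
      periodic_iterate (uCount L) N P hu _ _ (by omega)
    rw [h1, h2]
    exact hzero _ (Nat.mod_lt _ hP)
  have hsubset : L ≤ ⋃ m ∈ Finset.range N, {w : List α | w.length = m} := by
    intro w hw
    by_contra hc2
    have hlen : N ≤ w.length := by
      by_contra hc3
      exact hc2 (Set.mem_biUnion (Finset.mem_range.mpr (by omega)) rfl)
    have h0 : uCount L w.length = 0 := hall _ hlen
    have : w ∈ sec L w.length := ⟨hw, rfl⟩
    rw [uCount_eq_ncard_sec] at h0
    have hempty := (Set.ncard_eq_zero (sec_finite L w.length)).mp h0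
    rw [hempty] at this
    exact absurd this (Set.notMem_empty w)
  have hfin : (⋃ m ∈ Finset.range N, {w : List α | w.length = m}).Finite :=
    Set.Finite.biUnion (Finset.range N).finite_toSet (fun m _ => finite_length_eq m)
  exact hinf (hfin.subset hsubset)

lemma V_lower (hP : 0 < P) (hu : ∀ m, N ≤ m → uCount L (m + P) = uCount L m)
    (hC : 0 < ∑ i ∈ Finset.range P, uCount L (N + i)) :
    ∀ k, k ≤ V L (N + k * P) := by
  intro k
  rw [V_iter L N P hu k N (le_refl N)]
  have : k ≤ k * ∑ i ∈ Finset.range P, uCount L (N + i) := Nat.le_mul_of_pos_right k hC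
  omega

lemma exists_decomp (hP : 0 < P) (hu : ∀ m, N ≤ m → uCount L (m + P) = uCount L m)
    (hC : 0 < ∑ i ∈ Finset.range P, uCount L (N + i)) (n : ℕ) :
    ∃ ℓ k, n = V L ℓ + k ∧ k < uCount L ℓ := by
  have hub : ∃ m, n < V L m := by
    refine ⟨N + (n + 1) * P, ?_⟩
    have := V_lower L N P hP hu hC (n + 1)
    omega
  classical
  set m0 := Nat.find hub with hm0
  have hm0pos : m0 ≠ 0 := by
    intro h0
    have := Nat.find_spec hub
    rw [← hm0] at this
    rw [h0] at this
    simp [V] at this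
  have hlow : V L (m0 - 1) ≤ n := by
    have := Nat.find_min hub (m := m0 - 1) (by omega)
    omega
  have hhigh : n < V L m0 := by
    have := Nat.find_spec hub
    rw [← hm0] at this
    exact this
  refine ⟨m0 - 1, n - V L (m0 - 1), by omega, ?_⟩
  have : V L m0 = V L (m0 - 1) + uCount L (m0 - 1) := by
    rw [show m0 = (m0 - 1) + 1 by omega, V_succ]
    congr 1 <;> omega
  omega

lemma decomp_unique {ℓ k ℓ' k' : ℕ} (h : V L ℓ + k = V L ℓ' + k')
    (hk : k < uCount L ℓ) (hk' : k' < uCount L ℓ') : ℓ = ℓ' ∧ k = k' := by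
  rcases lt_trichotomy ℓ ℓ' with hlt | heq | hlt
  · have h1 : V L (ℓ + 1) ≤ V L ℓ' := V_mono L hlt
    rw [V_succ] at h1
    omega
  · constructor
    · exact heq
    · rw [heq] at h; omega
  · have h1 : V L (ℓ' + 1) ≤ V L ℓ := V_mono L hlt
    rw [V_succ] at h1
    omega

end Consequences


/-- Direction 1: an `S`-recognizable set is ultimately periodic. -/
lemma SRecognizable.ultimately_periodic {L : Language α} (hreg : L.IsRegular)
    (hinf : L.Infinite) {d : ℕ} (hd : ∀ n, uCount L n ≤ d)
    {X : Set ℕ} (hX : SRecognizable L X) :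
    ∃ T p, 0 < p ∧ ∀ n, T ≤ n → (n ∈ X ↔ n + p ∈ X) := by
  set M : Language α := {w | w ∈ L ∧ genIndex L w ∈ X} with hMdef
  have hMsub : M ≤ L := fun w hw => hw.1
  obtain ⟨N, P, hP, hu, hc⟩ := combined_period L M hreg hX d hd
  have hu0 : ∀ m, N ≤ m → uCount L (m + P) = uCount L m := by
    intro m hm
    have := hu [] m hm
    simpa using this
  set C := ∑ i ∈ Finset.range P, uCount L (N + i) with hC
  have hCpos : 0 < C := C_pos L N P hinf hP hu0
  refine ⟨V L N, C, hCpos, ?_⟩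
  intro n hn
  obtain ⟨ℓ, k, hdec, hk⟩ := exists_decomp L N P hP hu0 hCpos n
  have hℓN : N ≤ ℓ := by
    by_contra hcon
    have h1 : V L (ℓ + 1) ≤ V L N := V_mono L (by omega)
    rw [V_succ] at h1
    omega
  have hkd : k ≤ d := by have := hd ℓ; omega
  have hcharac : ∀ ℓ' , k < uCount L ℓ' → (V L ℓ' + k ∈ X ↔ cPred L M ℓ' k) := by
    intro ℓ' hk'
    constructor
    · intro hmem
      obtain ⟨w, hwL, hwidx⟩ : ∃ w, w ∈ L ∧ genIndex L w = V L ℓ' + k := by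
        obtain ⟨ℓ'', k'', hdec'', hk''⟩ := exists_decomp L N P hP hu0 hCpos (V L ℓ' + k)
        obtain ⟨w, hw1, hw2, hw3⟩ := rank_surj L ℓ'' k'' hk''
        refine ⟨w, hw1, ?_⟩
        rw [genIndex_decomp, hw2, hw3, hdec'']
      have hwM : w ∈ M := ⟨hwL, by rw [hwidx]; exact hmem⟩
      have hrk : rank L w < uCount L w.length := rank_lt_uCount hwL
      rw [genIndex_decomp] at hwidx
      obtain ⟨h1, h2⟩ := decomp_unique L hwidx hrk hk'
      exact ⟨w, hwM, h1, h2⟩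
    · rintro ⟨w, hwM, hwlen, hwrank⟩
      have : genIndex L w = V L ℓ' + k := by
        rw [genIndex_decomp, hwlen, hwrank]
      rw [← this]
      exact hwM.2
  have step1 : (n ∈ X ↔ cPred L M ℓ k) := by
    have := hcharac ℓ hk
    rw [← hdec] at this
    exact this
  have hkP : k < uCount L (ℓ + P) := by rw [hu0 ℓ hℓN]; exact hk
  have step2 : (n + C ∈ X ↔ cPred L M (ℓ + P) k) := by
    have h1 : V L (ℓ + P) = V L ℓ + C := V_window L N P hu0 ℓ hℓN
    have := hcharac (ℓ + P) hkP
    rw [h1] at this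
    rw [show n + C = V L ℓ + C + k by omega]
    rw [show V L ℓ + C + k = V L ℓ + k + C by omega]
    rw [show V L ℓ + k + C = (V L ℓ + C) + k by omega]
    exact this
  have step3 : (cPred L M (ℓ + P) k ↔ cPred L M ℓ k) := by
    have := hc [] [] ℓ k hℓN hkd
    simpa using this
  rw [step1, step2, step3]


lemma up_mod {Y : Set ℕ} {T p : ℕ} (hp : 0 < p)
    (hY : ∀ n, T ≤ n → (n ∈ Y ↔ n + p ∈ Y)) :
    ∀ m n, T ≤ m → T ≤ n → m % p = n % p → (m ∈ Y ↔ n ∈ Y) := by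
  have hjump : ∀ (j m : ℕ), T ≤ m → (m ∈ Y ↔ m + j * p ∈ Y) := by
    intro j
    induction j with
    | zero => simp
    | succ j ih =>
      intro m hm
      rw [ih m hm, show m + (j + 1) * p = (m + j * p) + p by ring]
      exact hY _ (by omega)
  have hkey : ∀ m n, T ≤ m → m ≤ n → m % p = n % p → (m ∈ Y ↔ n ∈ Y) := by
    intro m n hm hmn hmod
    have hdvd : p ∣ (n - m) := (Nat.modEq_iff_dvd' hmn).mp hmod
    obtain ⟨j, hj⟩ := hdvd
    rw [mul_comm] at hj
    rw [hjump j m hm, show m + j * p = n by omega]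
  intro m n hm hn hmod
  rcases le_total m n with h | h
  · exact hkey m n hm h hmod
  · exact (hkey n m hn h hmod.symm).symm

lemma up_mul {X : Set ℕ} {T p : ℕ} (hp : 0 < p)
    (hX : ∀ n, T ≤ n → (n ∈ X ↔ n + p ∈ X)) (lam : ℕ) :
    ∃ T' p', 0 < p' ∧ ∀ n, T' ≤ n →
      (n ∈ {m | ∃ x ∈ X, m = lam * x} ↔ n + p' ∈ {m | ∃ x ∈ X, m = lam * x}) := by
  rcases Nat.eq_zero_or_pos lam with rfl | hlam
  · refine ⟨1, 1, one_pos, ?_⟩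
    intro n hn
    constructor
    · rintro ⟨x, _, hx⟩; omega
    · rintro ⟨x, _, hx⟩; omega
  · refine ⟨lam * T, lam * p, by positivity, ?_⟩
    intro n hn
    constructor
    · rintro ⟨x, hxX, rfl⟩
      have hxT : T ≤ x := by
        by_contra hcon
        have : lam * x < lam * T := mul_lt_mul_of_pos_left (by omega) hlam
        omega
      refine ⟨x + p, (hX x hxT).mp hxX, by ring⟩
    · rintro ⟨x, hxX, hx⟩
      have hxTp : T + p ≤ x := by
        by_contra hcon
        have : lam * x < lam * (T + p) := mul_lt_mul_of_pos_left (by omega) hlam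
        have : lam * (T + p) = lam * T + lam * p := by ring
        omega
      refine ⟨x - p, ?_, ?_⟩
      · have := hX (x - p) (by omega)
        rw [show x - p + p = x by omega] at this
        exact this.mpr hxX
      · have : lam * x = lam * (x - p) + lam * p := by
          rw [← Nat.mul_add]
          congr 1
          omega
        omega


/-- Direction 2: an ultimately periodic set is `S`-recognizable. -/
lemma regular_of_up {L : Language α} (hreg : L.IsRegular) (hinf : L.Infinite)
    {d : ℕ} (hd : ∀ n, uCount L n ≤ d) {Y : Set ℕ} {T p : ℕ} (hp : 0 < p)
    (hY : ∀ n, T ≤ n → (n ∈ Y ↔ n + p ∈ Y)) :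
    Language.IsRegular {w | w ∈ L ∧ genIndex L w ∈ Y} := by
  classical
  set Z : Language α := {w | w ∈ L ∧ genIndex L w ∈ Y} with hZdef
  obtain ⟨N, P, hP, hu, -⟩ := combined_period L L hreg hreg d hd
  have hu0 : ∀ m, N ≤ m → uCount L (m + P) = uCount L m := by
    intro m hm; simpa using hu [] m hm
  set C := ∑ i ∈ Finset.range P, uCount L (N + i) with hC
  have hCpos : 0 < C := C_pos L N P hinf hP hu0
  have hAA : ∀ (u w : List α) (m : ℕ), N ≤ m →
      AA (quot w L) u (m + P) = AA (quot w L) u m := by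
    intro u
    induction u with
    | nil => intro w m hm; rfl
    | cons a u ih =>
      intro w m hm
      simp only [AA]
      congr 1
      · refine Finset.sum_congr rfl (fun b _ => ?_)
        rw [quot_quot, show u.length + (m + P) = (u.length + m) + P by omega,
          hu (w ++ [b]) (u.length + m) (by omega)]
      · rw [quot_quot]
        exact ih (w ++ [a]) m hm
  have hAA0 : ∀ (u : List α) (m : ℕ), N ≤ m → AA L u (m + P) = AA L u m := by
    intro u m hm
    have h1 := hAA u [] m hm
    rw [quot_nil] at h1
    exact h1
  set Q := P * p with hQdef
  have hQpos : 0 < Q := by positivity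
  have hAAQ : ∀ (u : List α) (m : ℕ), N ≤ m → AA L u (m + Q) = AA L u m := by
    intro u m hm
    have := periodic_iterate (AA L u) N P (fun m hm => hAA0 u m hm) p m hm
    rw [show m + Q = m + p * P by rw [hQdef]; ring]
    exact this
  have hVQ : ∀ n, N ≤ n → V L (n + Q) = V L n + p * C := by
    intro n hn
    have := V_iter L N P hu0 p n hn
    rw [show n + Q = n + p * P by rw [hQdef]; ring]
    exact this
  set MM := max N (N + T * P) with hMM
  have hVT : ∀ n, N + T * P ≤ n → T ≤ V L n := by
    intro n hn
    have h1 := V_lower L N P hP hu0 hCpos T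
    exact le_trans h1 (V_mono L hn)
  set hfun : List α → ℕ → ℕ := fun u m => V L (u.length + m) + AA L u m with hfdef
  have HEP : ∀ (u : List α) (m : ℕ), MM ≤ m →
      min (hfun u m) T = min (hfun u (m + Q)) T ∧ hfun u m % p = hfun u (m + Q) % p := by
    intro u m hm
    have hmN : N ≤ m := le_trans (le_max_left _ _) hm
    have hshift : hfun u (m + Q) = hfun u m + p * C := by
      show V L (u.length + (m + Q)) + AA L u (m + Q) = (V L (u.length + m) + AA L u m) + p * C
      rw [show u.length + (m + Q) = (u.length + m) + Q by omega,
        hVQ (u.length + m) (by omega), hAAQ u m hmN]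
      ring
    constructor
    · have hge : T ≤ hfun u m := by
        have h1 : T ≤ V L (u.length + m) :=
          hVT _ (le_trans (le_trans (le_max_right _ _) hm) (by omega))
        show T ≤ V L (u.length + m) + AA L u m
        omega
      rw [min_eq_right hge, min_eq_right (by omega)]
    · rw [hshift, Nat.add_mul_mod_self_left]
  -- the finite data map
  have hQL : (Set.range fun u => quot u L).Finite := finite_quot_range hreg
  haveI := hQL.to_subtype
  set E : List α → ↥(Set.range fun u => quot u L) × (Fin (MM + Q) → Fin (T + 1) × Fin p) :=
    fun u => (⟨quot u L, ⟨u, rfl⟩⟩, fun i =>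
      (⟨min (hfun u i.val) T, Nat.lt_succ_of_le (min_le_right _ _)⟩,
       ⟨hfun u i.val % p, Nat.mod_lt _ hp⟩)) with hEdef
  have hE : ∀ u u', E u = E u' → quot u Z = quot u' Z := by
    intro u u' heq
    have h1 : quot u L = quot u' L :=
      congrArg Subtype.val (congrArg Prod.fst heq)
    have hdata : ∀ i : Fin (MM + Q),
        min (hfun u i.val) T = min (hfun u' i.val) T ∧
          hfun u i.val % p = hfun u' i.val % p := by
      intro i
      have h2 := congrFun (congrArg Prod.snd heq) i
      exact ⟨congrArg Fin.val (congrArg Prod.fst h2), congrArg Fin.val (congrArg Prod.snd h2)⟩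
    have hall : ∀ m, min (hfun u m) T = min (hfun u' m) T ∧
        hfun u m % p = hfun u' m % p := by
      intro m
      induction m using Nat.strong_induction_on with
      | _ m ih =>
        by_cases hm : m < MM + Q
        · exact hdata ⟨m, hm⟩
        · have hm' : MM ≤ m - Q := by omega
          have e1 := HEP u (m - Q) hm'
          have e2 := HEP u' (m - Q) hm'
          have e3 := ih (m - Q) (by omega)
          rw [show (m - Q) + Q = m by omega] at e1 e2
          exact ⟨by rw [← e1.1, ← e2.1]; exact e3.1, by rw [← e1.2, ← e2.2]; exact e3.2⟩
    have hv : ∀ (u0 v : List α), v ∈ quot u0 Z ↔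
        (v ∈ quot u0 L ∧ hfun u0 v.length + rank (quot u0 L) v ∈ Y) := by
      intro u0 v
      show (u0 ++ v ∈ L ∧ genIndex L (u0 ++ v) ∈ Y) ↔ _
      rw [genIndex_append]
      rfl
    ext v
    rw [hv u v, hv u' v, h1]
    have hkey : (hfun u v.length + rank (quot u' L) v ∈ Y ↔
        hfun u' v.length + rank (quot u' L) v ∈ Y) := by
      set m := v.length
      set r := rank (quot u' L) v
      have hm := hall m
      rcases lt_or_ge (hfun u m) T with hlt | hge
      · have e1 : min (hfun u m) T = hfun u m := min_eq_left (le_of_lt hlt)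
        have e2 : hfun u' m = hfun u m := by
          have := hm.1
          rw [e1] at this
          rcases le_or_gt (hfun u' m) T with h' | h'
          · rw [min_eq_left h'] at this; omega
          · rw [min_eq_right (le_of_lt h')] at this; omega
        rw [e2]
      · have e1 : min (hfun u m) T = T := min_eq_right hge
        have e2 : T ≤ hfun u' m := by
          have := hm.1
          rw [e1] at this
          rcases le_or_gt T (hfun u' m) with h' | h'
          · exact h'
          · rw [min_eq_left (le_of_lt h')] at this; omega
        refine up_mod hp hY _ _ (by omega) (by omega) ?_
        exact Nat.ModEq.add_right r hm.2
    rw [hkey]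
  have hfin : (Set.range fun u => quot u Z).Finite :=
    finite_range_factor _ E hE (Set.toFinite _)
  exact regular_of_finite_quot hfin

end SlenderANS

/-- For a numeration system built on a slender regular language, multiplication by any
constant preserves `S`-recognizability. -/
theorem slender_mul_SRecognizable {α : Type*} [Fintype α] [LinearOrder α]
    (L : Language α) (hreg : L.IsRegular) (hinf : L.Infinite)
    (hslender : ∃ d : ℕ, ∀ n : ℕ, uCount L n ≤ d)
    (X : Set ℕ) (hX : SRecognizable L X) (lam : ℕ) :
    SRecognizable L {m | ∃ x ∈ X, m = lam * x} := by
  obtain ⟨d, hd⟩ := hslender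
  obtain ⟨T, p, hp, hXup⟩ := SlenderANS.SRecognizable.ultimately_periodic hreg hinf hd hX
  obtain ⟨T', p', hp', hYup⟩ := SlenderANS.up_mul hp hXup lam
  exact SlenderANS.regular_of_up hreg hinf hd hp' hYup
end

section
/- Let β be a positive integer and take ℓ = 2. Multiplication by β² preserves B_2-recognizability — i.e., for every X ⊆ ℕ, regularity of the language {word(rep_2(x)) : x ∈ X} implies regularity of the language {word(rep_2(β²·x)) : x ∈ X} — if and only if β is odd. -/
/-- `valB ℓ n = Σ_{i=1}^{ℓ} C(n_i + ⋯ + n_ℓ + ℓ − i, ℓ − i + 1)` (0-based indexing). -/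
def valB (ℓ : ℕ) (n : Fin ℓ → ℕ) : ℕ :=
  ∑ i : Fin ℓ,
    Nat.choose ((∑ j ∈ Finset.univ.filter (fun j => i ≤ j), n j) + (ℓ - 1 - (i : ℕ)))
      (ℓ - (i : ℕ))

/-- `repB ℓ` is the inverse of the bijection `valB ℓ`. -/
noncomputable def repB (ℓ : ℕ) : ℕ → (Fin ℓ → ℕ) := Function.invFun (valB ℓ)

/-- The word `a_1^{n_1} a_2^{n_2} ⋯ a_ℓ^{n_ℓ}` over the alphabet `Fin ℓ`. -/
def wordB (ℓ : ℕ) (n : Fin ℓ → ℕ) : List (Fin ℓ) :=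
  (List.ofFn (fun i : Fin ℓ => List.replicate (n i) i)).flatten

namespace B2

/-- triangular number -/
def T (n : ℕ) : ℕ := n * (n + 1) / 2

lemma two_T (n : ℕ) : 2 * T n = n * (n + 1) := by
  have h : 2 ∣ n * (n + 1) := (Nat.even_mul_succ_self n).two_dvd
  exact Nat.mul_div_cancel' h

lemma T_succ (n : ℕ) : T (n + 1) = T n + (n + 1) := by
  have h1 := two_T n
  have h2 := two_T (n + 1)
  have h3 : (n + 1) * (n + 1 + 1) = n * (n + 1) + 2 * (n + 1) := by ring
  linarith

lemma T_mono : Monotone T := by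
  intro a b h
  induction b with
  | zero => have : a = 0 := by omega
            subst this; exact le_rfl
  | succ n ih =>
    rcases Nat.lt_or_ge a (n+1) with h' | h'
    · have h1 := ih (by omega)
      have h2 := T_succ n
      omega
    · have : a = n + 1 := by omega
      subst this; exact le_rfl

lemma T_add (m k : ℕ) : T (m + k) = T m + m * k + T k := by
  have h1 := two_T (m + k)
  have h2 := two_T m
  have h3 := two_T k
  have h4 : (m + k) * (m + k + 1) = m * (m + 1) + 2 * (m * k) + k * (k + 1) := by ring
  linarith

lemma T_lt_iff {a b : ℕ} : T a < T b ↔ a < b := by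
  constructor
  · intro h; by_contra h'
    exact absurd (T_mono (by omega : b ≤ a)) (by omega)
  · intro h
    have : T (a + 1) ≤ T b := T_mono (by omega)
    have := T_succ a
    omega

/-- the pairing value -/
def pv (p q : ℕ) : ℕ := T (p + q) + q

lemma pv_inj {p q p' q' : ℕ} (h : pv p q = pv p' q') : p = p' ∧ q = q' := by
  unfold pv at h
  have hs : p + q = p' + q' := by
    by_contra hne
    rcases Nat.lt_or_ge (p+q) (p'+q') with h1 | h1
    · have h2 : T (p+q+1) ≤ T (p'+q') := T_mono (by omega)
      have := T_succ (p+q); omega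
    · have h1' : p' + q' < p + q := by omega
      have h2 : T (p'+q'+1) ≤ T (p+q) := T_mono (by omega)
      have := T_succ (p'+q'); omega
  rw [hs] at h; omega

lemma pv_surj (x : ℕ) : ∃ p q, pv p q = x := by
  induction x with
  | zero => exact ⟨0, 0, rfl⟩
  | succ n ih =>
    obtain ⟨p, q, h⟩ := ih
    rcases p with _ | p'
    · refine ⟨q + 1, 0, ?_⟩
      have e1 : pv 0 q = T q + q := by simp [pv]
      have e2 : pv (q+1) 0 = T (q+1) := by simp [pv]
      have e3 := T_succ q
      omega
    · refine ⟨p', q + 1, ?_⟩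
      have e1 : pv (p'+1) q = T (p'+1+q) + q := rfl
      have e2 : pv p' (q+1) = T (p'+1+q) + (q+1) := by
        show T (p' + (q+1)) + (q+1) = _
        rw [show p' + (q+1) = p'+1+q by ring]
      omega

lemma valB_two (n : Fin 2 → ℕ) : valB 2 n = pv (n 0) (n 1) := by
  have h : valB 2 n = Nat.choose (n 0 + n 1 + 1) 2 + Nat.choose (n 1 + 0) 1 := by
    simp [valB, Fin.sum_univ_two, Finset.sum_filter]
  rw [h]
  have h2 : Nat.choose (n 0 + n 1 + 1) 2 = T (n 0 + n 1) := by
    rw [Nat.choose_two_right]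
    simp [T, Nat.mul_comm]
  simp [h2, pv]

lemma valB_two_pair (p q : ℕ) : valB 2 ![p, q] = pv p q := by
  rw [valB_two]; simp

lemma valB_bij : Function.Bijective (valB 2) := by
  constructor
  · intro m n h
    rw [valB_two, valB_two] at h
    obtain ⟨h0, h1⟩ := pv_inj h
    funext i
    fin_cases i <;> assumption
  · intro x
    obtain ⟨p, q, h⟩ := pv_surj x
    exact ⟨![p, q], by rw [valB_two_pair]; exact h⟩

lemma valB_repB (x : ℕ) : valB 2 (repB 2 x) = x :=
  Function.rightInverse_invFun valB_bij.2 x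

lemma repB_pv (p q : ℕ) : repB 2 (pv p q) = ![p, q] := by
  have := Function.leftInverse_invFun valB_bij.1 ![p, q]
  rw [valB_two_pair] at this
  exact this

/-- word with p zeros then q ones -/
def w2 (p q : ℕ) : List (Fin 2) := List.replicate p 0 ++ List.replicate q 1

lemma wordB_two (n : Fin 2 → ℕ) : wordB 2 n = w2 (n 0) (n 1) := by
  simp [wordB, w2, List.ofFn_succ]

lemma w2_inj {p q p' q' : ℕ} (h : w2 p q = w2 p' q') : p = p' ∧ q = q' := by
  have h0 := congrArg (List.count 0) h
  have h1 := congrArg (List.count 1) h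
  simp [w2, List.count_append, List.count_replicate] at h0 h1
  exact ⟨h0, h1⟩

lemma word_repB (x : ℕ) : ∃ p q, pv p q = x ∧ wordB 2 (repB 2 x) = w2 p q := by
  obtain ⟨p, q, h⟩ := pv_surj x
  exact ⟨p, q, h, by rw [← h, repB_pv, wordB_two]; simp⟩

/-- language of a set of pairs -/
def lang (S : Set (ℕ × ℕ)) : Language (Fin 2) := {w | ∃ p q, (p, q) ∈ S ∧ w = w2 p q}

lemma lang_eq (X : Set ℕ) (f : ℕ → ℕ) :
    {w : List (Fin 2) | ∃ x ∈ X, w = wordB 2 (repB 2 (f x))} =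
      lang {pq : ℕ × ℕ | ∃ x ∈ X, pv pq.1 pq.2 = f x} := by
  ext w
  constructor
  · rintro ⟨x, hx, rfl⟩
    obtain ⟨p, q, hpv, hw⟩ := word_repB (f x)
    exact ⟨p, q, ⟨x, hx, hpv⟩, hw⟩
  · rintro ⟨p, q, ⟨x, hx, hpv⟩, rfl⟩
    refine ⟨x, hx, ?_⟩
    obtain ⟨p', q', hpv', hw⟩ := word_repB (f x)
    obtain ⟨rfl, rfl⟩ := pv_inj (hpv.trans hpv'.symm)
    exact hw.symm

end B2

namespace B2

/-- doubly eventually periodic set of pairs -/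
def Good (S : Set (ℕ × ℕ)) (M N : ℕ) : Prop :=
  1 ≤ M ∧ ∀ p q : ℕ,
    (N ≤ p → ((p, q) ∈ S ↔ (p + M, q) ∈ S)) ∧
    (N ≤ q → ((p, q) ∈ S ↔ (p, q + M) ∈ S))

lemma Good.iter1 {S : Set (ℕ×ℕ)} {M N : ℕ} (h : Good S M N) (k : ℕ) {p : ℕ} (hp : N ≤ p) (q : ℕ) :
    ((p, q) ∈ S ↔ (p + k * M, q) ∈ S) := by
  induction k with
  | zero => simp
  | succ k ih =>
    have h2 := ((h.2 (p + k * M) q).1 (by omega))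
    rw [show p + (k+1) * M = p + k * M + M by ring]
    exact ih.trans h2

lemma Good.iter2 {S : Set (ℕ×ℕ)} {M N : ℕ} (h : Good S M N) (k : ℕ) (p : ℕ) {q : ℕ} (hq : N ≤ q) :
    ((p, q) ∈ S ↔ (p, q + k * M) ∈ S) := by
  induction k with
  | zero => simp
  | succ k ih =>
    have h2 := ((h.2 p (q + k * M)).2 (by omega))
    rw [show q + (k+1) * M = q + k * M + M by ring]
    exact ih.trans h2

/-- the clock value: identity below `N+M`, then wraps with period `M`. -/
def clk (M N x : ℕ) : ℕ := if x < N + M then x else N + (x - N) % M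

lemma clk_lt {M N : ℕ} (hM : 1 ≤ M) (x : ℕ) : clk M N x < N + M := by
  unfold clk; split
  · omega
  · have := Nat.mod_lt (x - N) (show 0 < M by omega)
    omega

lemma clk_zero {M N : ℕ} (hM : 1 ≤ M) : clk M N 0 = 0 := by
  unfold clk; rw [if_pos (by omega)]

lemma clk_drop {M N x : ℕ} (hM : 1 ≤ M) (hx : N + M ≤ x) :
    clk M N x = clk M N (x - M) := by
  have h1 : ¬ x < N + M := by omega
  have h2 : (x - N) % M = (x - N - M) % M := Nat.mod_eq_sub_mod (by omega)
  unfold clk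
  rw [if_neg h1]
  have h2' : (x - N) % M = (x - M - N) % M := by
    rw [h2]; congr 1; omega
  split
  · have h4 : (x - M - N) % M = x - M - N := Nat.mod_eq_of_lt (by omega)
    omega
  · omega

lemma clk_transfer {M N : ℕ} (hM : 1 ≤ M) (P : ℕ → Prop)
    (hP : ∀ n, N ≤ n → (P n ↔ P (n + M))) : ∀ x, (P (clk M N x) ↔ P x) := by
  intro x
  induction x using Nat.strong_induction_on with
  | _ x ih =>
    by_cases hx : x < N + M
    · unfold clk; rw [if_pos hx]
    · have hx' : N + M ≤ x := by omega
      rw [clk_drop hM hx']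
      have h1 := ih (x - M) (by omega)
      have h2 := hP (x - M) (by omega)
      rw [show x - M + M = x by omega] at h2
      exact h1.trans h2

lemma clk_step {M N : ℕ} (hM : 1 ≤ M) (x : ℕ) :
    clk M N (clk M N x + 1) = clk M N (x + 1) := by
  by_cases hx : x < N + M
  · have h : clk M N x = x := by unfold clk; rw [if_pos hx]
    rw [h]
  · have hx' : N + M ≤ x := by omega
    have hc : clk M N x = N + (x - N) % M := by unfold clk; rw [if_neg (by omega)]
    have hr : (x - N) % M < M := Nat.mod_lt _ (by omega)
    have key : (x + 1 - N) % M = ((x - N) % M + 1) % M := by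
      rw [show x + 1 - N = (x - N) + 1 by omega]
      exact (Nat.mod_add_mod _ _ _).symm
    rcases Nat.lt_or_ge ((x - N) % M + 1) M with h1 | h1
    · have e1 : clk M N (clk M N x + 1) = N + (x - N) % M + 1 := by
        rw [hc]; unfold clk; rw [if_pos (by omega)]
      have e2 : clk M N (x + 1) = N + (x + 1 - N) % M := by
        unfold clk; rw [if_neg (by omega)]
      rw [e1, e2, key, Nat.mod_eq_of_lt h1]
      omega
    · have h2 : (x - N) % M + 1 = M := by omega
      have e1 : clk M N (clk M N x + 1) = N + M % M := by
        rw [hc]; unfold clk; rw [if_neg (by omega)]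
        congr 1
        rw [show N + (x - N) % M + 1 - N = (x - N) % M + 1 by omega, h2]
      have e2 : clk M N (x + 1) = N + (x + 1 - N) % M := by
        unfold clk; rw [if_neg (by omega)]
      rw [e1, e2, key, h2, Nat.mod_self]

section DFAConstr

variable (S : Set (ℕ × ℕ)) (M N : ℕ)

/-- clock successor on `Fin (N+M)` -/
def nxt (hM : 1 ≤ M) (c : Fin (N + M)) : Fin (N + M) :=
  ⟨clk M N ((c : ℕ) + 1), clk_lt hM _⟩

/-- the DFA recognizing `lang S` when `Good S M N` -/
def mkDFA (hM : 1 ≤ M) : DFA (Fin 2) (Option (Fin (N + M) × Fin (N + M) × Bool)) where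
  step := fun st x =>
    match st with
    | none => none
    | some (a, b, sb) =>
      if x = 0 then (if sb then none else some (nxt M N hM a, b, false))
      else some (a, nxt M N hM b, true)
  start := some (⟨0, by omega⟩, ⟨0, by omega⟩, false)
  accept := {st | ∃ a b sb, st = some (a, b, sb) ∧ ((a : ℕ), (b : ℕ)) ∈ S}

variable (hM : 1 ≤ M)

lemma nxt_iter_val (k : ℕ) :
    (((nxt M N hM)^[k] ⟨0, by omega⟩ : Fin (N + M)) : ℕ) = clk M N k := by
  induction k with
  | zero => simp [clk_zero hM]
  | succ k ih =>
    rw [Function.iterate_succ_apply', ← clk_step hM k]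
    show clk M N (_ + 1) = _
    rw [ih]

lemma mkDFA_evalA (p : ℕ) (a b : Fin (N + M)) :
    (mkDFA S M N hM).evalFrom (some (a, b, false)) (List.replicate p 0) =
      some ((nxt M N hM)^[p] a, b, false) := by
  induction p generalizing a with
  | zero => simp [DFA.evalFrom]
  | succ p ih =>
    rw [List.replicate_succ]
    have hstep : (mkDFA S M N hM).evalFrom (some (a, b, false)) ((0 : Fin 2) :: List.replicate p 0)
        = (mkDFA S M N hM).evalFrom (some (nxt M N hM a, b, false)) (List.replicate p 0) := rfl
    rw [hstep, ih, ← Function.iterate_succ_apply]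

lemma mkDFA_evalB (q : ℕ) (a b : Fin (N + M)) (sb : Bool) :
    (mkDFA S M N hM).evalFrom (some (a, b, sb)) (List.replicate q 1) =
      some (a, (nxt M N hM)^[q] b, sb || decide (0 < q)) := by
  induction q generalizing b sb with
  | zero => simp [DFA.evalFrom]
  | succ q ih =>
    rw [List.replicate_succ]
    have hstep : (mkDFA S M N hM).evalFrom (some (a, b, sb)) ((1 : Fin 2) :: List.replicate q 1)
        = (mkDFA S M N hM).evalFrom (some (a, nxt M N hM b, true)) (List.replicate q 1) := rfl
    rw [hstep, ih, ← Function.iterate_succ_apply]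
    simp

lemma mkDFA_eval_w2 (p q : ℕ) :
    (mkDFA S M N hM).evalFrom (mkDFA S M N hM).start (w2 p q) =
      some ((nxt M N hM)^[p] ⟨0, by omega⟩, (nxt M N hM)^[q] ⟨0, by omega⟩, decide (0 < q)) := by
  unfold w2
  rw [DFA.evalFrom_of_append]
  have h0 : (mkDFA S M N hM).start = some (⟨0, by omega⟩, ⟨0, by omega⟩, false) := rfl
  rw [h0, mkDFA_evalA, mkDFA_evalB]
  simp

lemma mkDFA_eval_none (w : List (Fin 2)) :
    (mkDFA S M N hM).evalFrom none w = none := by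
  induction w with
  | nil => rfl
  | cons x w ih => exact ih

lemma mkDFA_dich (w : List (Fin 2)) :
    (∃ p q, w = w2 p q) ∨ (mkDFA S M N hM).evalFrom (mkDFA S M N hM).start w = none := by
  induction w using List.reverseRecOn with
  | nil => exact Or.inl ⟨0, 0, rfl⟩
  | append_singleton w x ih =>
    rcases ih with ⟨p, q, rfl⟩ | hnone
    · fin_cases x
      · rcases Nat.eq_zero_or_pos q with hq | hq
        · subst hq
          left; refine ⟨p + 1, 0, ?_⟩
          simp [w2, List.replicate_succ']
        · right
          rw [DFA.evalFrom_append_singleton, mkDFA_eval_w2 S M N hM]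
          show (if _ then _ else _) = none
          simp [hq]
      · left
        refine ⟨p, q + 1, ?_⟩
        simp [w2, List.replicate_succ', List.append_assoc]
    · right
      rw [DFA.evalFrom_append_singleton, hnone]
      rfl

lemma lang_subset_form {w : List (Fin 2)} (hw : w ∈ lang S) : ∃ p q, w = w2 p q := by
  obtain ⟨p, q, _, rfl⟩ := hw
  exact ⟨p, q, rfl⟩

lemma mem_lang_iff {p q : ℕ} : w2 p q ∈ lang S ↔ (p, q) ∈ S := by
  constructor
  · rintro ⟨p', q', hS, hw⟩
    obtain ⟨rfl, rfl⟩ := w2_inj hw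
    exact hS
  · intro h; exact ⟨p, q, h, rfl⟩

theorem good_regular (h : Good S M N) : (lang S).IsRegular := by
  have hM : 1 ≤ M := h.1
  refine ⟨Option (Fin (N + M) × Fin (N + M) × Bool), inferInstance, mkDFA S M N hM, ?_⟩
  ext w
  rw [DFA.mem_accepts]
  rcases mkDFA_dich S M N hM w with ⟨p, q, rfl⟩ | hnone
  · show _ ∈ (mkDFA S M N hM).accept ↔ _
    rw [show (mkDFA S M N hM).eval (w2 p q) = _ from mkDFA_eval_w2 S M N hM p q]
    have haccept : (some ((nxt M N hM)^[p] ⟨0, by omega⟩, (nxt M N hM)^[q] ⟨0, by omega⟩,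
        decide (0 < q)) ∈ (mkDFA S M N hM).accept) ↔ (clk M N p, clk M N q) ∈ S := by
      constructor
      · rintro ⟨a, b, sb, heq, hS⟩
        obtain ⟨rfl, rfl, rfl⟩ : _ ∧ _ ∧ _ := by
          injection heq with h1
          injection h1 with h1 h2
          injection h2 with h2 h3
          exact ⟨h1.symm, h2.symm, h3.symm⟩
        rwa [nxt_iter_val, nxt_iter_val] at hS
      · intro hS
        exact ⟨_, _, _, rfl, by rwa [nxt_iter_val, nxt_iter_val]⟩
    rw [haccept, mem_lang_iff]
    have t1 : ((clk M N p, clk M N q) ∈ S) ↔ ((p, clk M N q) ∈ S) :=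
      clk_transfer hM (fun z => (z, clk M N q) ∈ S) (fun n hn => (h.2 n (clk M N q)).1 hn) p
    have t2 : ((p, clk M N q) ∈ S) ↔ ((p, q) ∈ S) :=
      clk_transfer hM (fun z => (p, z) ∈ S) (fun n hn => (h.2 p n).2 hn) q
    rw [t1, t2]
  · rw [show (mkDFA S M N hM).eval w = none from hnone]
    constructor
    · rintro ⟨a, b, sb, heq, -⟩; exact absurd heq (by simp)
    · intro hw
      obtain ⟨p, q, rfl⟩ := lang_subset_form S hw
      rw [mkDFA_eval_w2 S M N hM] at hnone
      exact absurd hnone (by simp)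

end DFAConstr

section Extract

lemma iter_period {σ : Type} [Fintype σ] (g : σ → σ) (x : σ) :
    ∀ m, Fintype.card σ ≤ m → g^[m + Nat.factorial (Fintype.card σ)] x = g^[m] x := by
  set n := Fintype.card σ with hn
  have hinj : ¬ Function.Injective (fun i : Fin (n + 1) => g^[(i : ℕ)] x) := by
    intro hinj
    have := Fintype.card_le_of_injective _ hinj
    simp at this
    omega
  rw [Function.not_injective_iff] at hinj
  obtain ⟨a, b, heq, hne⟩ := hinj
  wlog hab : (a : ℕ) < (b : ℕ) generalizing a b
  · exact this b a heq.symm hne.symm (by omega)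
  have per : ∀ j, g^[j + (b : ℕ)] x = g^[j + (a : ℕ)] x := by
    intro j
    rw [Function.iterate_add_apply, Function.iterate_add_apply, heq]
  have step : ∀ m, (a : ℕ) ≤ m → g^[m + ((b : ℕ) - (a : ℕ))] x = g^[m] x := by
    intro m hm
    have h1 : m + ((b : ℕ) - (a : ℕ)) = (m - (a : ℕ)) + (b : ℕ) := by omega
    have h2 : m = (m - (a : ℕ)) + (a : ℕ) := by omega
    rw [h1, per, ← h2]
  have key : ∀ k m, (a : ℕ) ≤ m → g^[m + k * ((b : ℕ) - (a : ℕ))] x = g^[m] x := by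
    intro k
    induction k with
    | zero => simp
    | succ k ih =>
      intro m hm
      rw [show m + (k+1) * ((b:ℕ) - (a:ℕ)) = (m + k * ((b:ℕ) - (a:ℕ))) + ((b:ℕ) - (a:ℕ)) by ring,
        step _ (by omega), ih m hm]
  intro m hm
  have hd : ((b : ℕ) - (a : ℕ)) ∣ Nat.factorial n :=
    Nat.dvd_factorial (by omega) (by have := b.isLt; omega)
  obtain ⟨e, he⟩ := hd
  rw [he, show m + ((b:ℕ) - (a:ℕ)) * e = m + e * ((b:ℕ) - (a:ℕ)) by ring]
  exact key e m (by have := b.isLt; omega)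

lemma evalFrom_replicate {σ : Type} (D : DFA (Fin 2) σ) (x : Fin 2) (k : ℕ) (e : σ) :
    D.evalFrom e (List.replicate k x) = (fun s => D.step s x)^[k] e := by
  induction k generalizing e with
  | zero => rfl
  | succ k ih =>
    rw [List.replicate_succ]
    show D.evalFrom (D.step e x) (List.replicate k x) = _
    rw [ih, ← Function.iterate_succ_apply]

theorem regular_good (S : Set (ℕ × ℕ)) (h : (lang S).IsRegular) : ∃ M N, Good S M N := by
  obtain ⟨σ, fin, D, hD⟩ := h
  set n := Fintype.card σ with hn
  refine ⟨Nat.factorial n, n, Nat.one_le_iff_ne_zero.mpr (Nat.factorial_ne_zero n), ?_⟩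
  have memiff : ∀ p q : ℕ, ((p, q) ∈ S ↔
      (fun s => D.step s 1)^[q] ((fun s => D.step s 0)^[p] D.start) ∈ D.accept) := by
    intro p q
    rw [← mem_lang_iff, ← hD, DFA.mem_accepts]
    have heval : D.eval (w2 p q) = (fun s => D.step s 1)^[q] ((fun s => D.step s 0)^[p] D.start) := by
      show D.evalFrom D.start (List.replicate p 0 ++ List.replicate q 1) = _
      rw [DFA.evalFrom_of_append, evalFrom_replicate, evalFrom_replicate]
    rw [heval]
  intro p q
  constructor
  · intro hp
    rw [memiff, memiff]
    rw [iter_period (fun s => D.step s 0) D.start p hp]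
  · intro hq
    rw [memiff, memiff]
    rw [iter_period (fun s => D.step s 1) _ q hq]

end Extract

end B2

namespace B2

lemma T_zero : T 0 = 0 := rfl

lemma T_pos {n : ℕ} (hn : 1 ≤ n) : 1 ≤ T n := by
  have := T_mono hn
  simp [T] at this ⊢
  omega

/-- master identity: `T(βs + t + c) = β²T(s) + cβs + ct + T(c) + T(t)` for `β = 2t+1`. -/
lemma idc (t s c : ℕ) :
    T ((2*t+1)*s + t + c) =
      (2*t+1)^2 * T s + c*((2*t+1)*s) + c*t + T c + T t := by
  have h1 := two_T ((2*t+1)*s + t + c)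
  have h2 := two_T s
  have h3 := two_T c
  have h4 := two_T t
  have h2' : (2*t+1)^2 * (2 * T s) = (2*t+1)^2 * (s*(s+1)) := by rw [h2]
  have expand : ((2*t+1)*s + t + c) * ((2*t+1)*s + t + c + 1) =
      (2*t+1)^2*(s*(s+1)) + 2*(c*((2*t+1)*s)) + 2*(c*t) + c*(c+1) + t*(t+1) := by ring
  linarith

/-- scaling identity: `tB + T(B) = β²T(A)` where `A = β²M`, `B = β³M = βA`. -/
lemma idm (t M : ℕ) :
    t * ((2*t+1)^3*M) + T ((2*t+1)^3*M) = (2*t+1)^2 * T ((2*t+1)^2*M) := by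
  have h1 := two_T ((2*t+1)^3*M)
  have h2 := two_T ((2*t+1)^2*M)
  have h2' : (2*t+1)^2 * (2 * T ((2*t+1)^2*M)) = (2*t+1)^2 * (((2*t+1)^2*M)*((2*t+1)^2*M+1)) := by
    rw [h2]
  have expand : 2*(t * ((2*t+1)^3*M)) + ((2*t+1)^3*M)*((2*t+1)^3*M+1) =
      (2*t+1)^2 * (((2*t+1)^2*M)*((2*t+1)^2*M+1)) := by ring
  linarith

lemma Tt_lt_sq (t : ℕ) : T t < (2*t+1)^2 := by
  have h := two_T t
  nlinarith

lemma pv_x0 (x : ℕ) : pv x 0 = T x := by simp [pv]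

/-- the image set of pairs under multiplication by `β²` -/
def Sgoal (t : ℕ) (S : Set (ℕ × ℕ)) : Set (ℕ × ℕ) :=
  {pq | ∃ u v, (u, v) ∈ S ∧ pv pq.1 pq.2 = (2*t+1)^2 * pv u v}

/-- classification of the image pair -/
lemma witness0 {t u v p' q' : ℕ} (hpv : pv p' q' = (2*t+1)^2 * pv u v) :
    (∃ c, c < 2*t+1 ∧ p' + q' = (2*t+1)*(u+v) + t + c) ∨
    (v = 0 ∧ 1 ≤ t ∧ p' + q' < T t) ∨
    (v = 0 ∧ 1 ≤ t ∧ p' + 1 = T t ∧ q' + T t = (2*t+1)*u + t) := by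
  have hpv' : T (p'+q') + q' = (2*t+1)^2 * T (u+v) + (2*t+1)^2 * v := by
    have : pv p' q' = T (p'+q') + q' := rfl
    have h2 : pv u v = T (u+v) + v := rfl
    rw [this, h2] at hpv
    linarith [hpv]
  have h0 : T ((2*t+1)*(u+v) + t + 0) = (2*t+1)^2 * T (u+v) + T t := by
    rw [idc]; simp [T_zero]
  rw [Nat.add_zero] at h0
  by_cases hv : T t ≤ (2*t+1)^2 * v
  · left
    -- upper bound : p'+q' < β(u+v)+t+β
    have hub : p' + q' < (2*t+1)*(u+v) + t + (2*t+1) := by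
      rw [← T_lt_iff]
      have hβ := idc t (u+v) (2*t+1)
      have hvs : (2*t+1)^2 * v ≤ (2*t+1)^2 * (u+v) := Nat.mul_le_mul_left _ (by omega)
      have hTb : 1 ≤ T (2*t+1) := T_pos (by omega)
      have hsq : (2*t+1)^2 * (u+v) = (2*t+1)*((2*t+1)*(u+v)) := by ring
      have e1 : T (p'+q') ≤ (2*t+1)^2 * T (u+v) + (2*t+1)^2*(u+v) := by linarith
      nlinarith [hβ, hTb, hsq, e1]
    have hlb : (2*t+1)*(u+v) + t ≤ p' + q' := by
      have h5 : T ((2*t+1)*(u+v)+t) < T (p'+q'+1) := by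
        have := T_succ (p'+q')
        linarith
      have := T_lt_iff.mp h5
      omega
    exact ⟨(p'+q') - ((2*t+1)*(u+v)+t), by omega, by omega⟩
  · right
    have hv0 : v = 0 := by
      by_contra hne
      have h1 : (2*t+1)^2 * 1 ≤ (2*t+1)^2 * v := Nat.mul_le_mul_left _ (by omega)
      have := Tt_lt_sq t
      omega
    have ht1 : 1 ≤ t := by
      by_contra h
      have : t = 0 := by omega
      subst this
      simp [T_zero] at hv
    subst hv0
    have hTt : 1 ≤ T t := T_pos ht1
    rw [Nat.mul_zero, Nat.add_zero] at hpv'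
    simp only [Nat.add_zero] at hpv' h0
    by_cases hsm : (2*t+1)*u + t < T t
    · left
      refine ⟨rfl, ht1, ?_⟩
      have h5 : T (p'+q') < T ((2*t+1)*u+t) := by linarith
      have h6 := T_lt_iff.mp h5
      omega
    · push_neg at hsm
      right
      have ht0 : 1 ≤ (2*t+1)*u + t := by
        have : 1 ≤ t := ht1
        omega
      obtain ⟨d, hd⟩ : ∃ d, d + 1 = (2*t+1)*u + t := ⟨(2*t+1)*u + t - 1, by omega⟩
      have h7 : T (d+1) = T d + (d+1) := T_succ d
      have h8 : T (d+1) = T (p'+q') + q' + T t := by rw [hd]; linarith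
      have hsm' : T t ≤ d + 1 := by rw [hd]; exact hsm
      have h9 : T d ≤ T (p'+q') + (p'+q') := by linarith
      have h10 : d < (p'+q')+1 := T_lt_iff.mp (by linarith [T_succ (p'+q')])
      have h11 : T (p'+q') < T (d+1) := by linarith
      have h12 := T_lt_iff.mp h11
      have hs' : p'+q' = d := by omega
      have hTs' : T (p'+q') = T d := by rw [hs']
      have hkey : q' + T t = d + 1 := by linarith
      refine ⟨rfl, ht1, by omega, by rw [← hd]; exact hkey⟩

end B2

namespace B2

lemma pv_addP (p q B : ℕ) : pv (p+B) q = pv p q + ((p+q)*B + T B) := by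
  simp only [pv]
  rw [show p+B+q = (p+q)+B by ring, T_add]
  ring

lemma pv_addQ (p q B : ℕ) : pv p (q+B) = pv p q + ((p+q)*B + T B + B) := by
  simp only [pv]
  rw [show p+(q+B) = (p+q)+B by ring, T_add]
  ring

lemma pv_add2 (u v a b : ℕ) : pv (u+a) (v+b) = pv u v + ((u+v)*(a+b) + T (a+b) + b) := by
  simp only [pv]
  rw [show u+a+(v+b) = (u+v)+(a+b) by ring, T_add]
  ring

lemma eqE2 {t u v p' q' c : ℕ}
    (h1 : p' + q' = (2*t+1)*(u+v) + t + c)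
    (h2 : pv p' q' = (2*t+1)^2 * pv u v) :
    (2*t+1)^2 * v = q' + c*((2*t+1)*(u+v)) + c*t + T c + T t := by
  have h3 := idc t (u+v) c
  have h2' : T (p'+q') + q' = (2*t+1)^2 * T (u+v) + (2*t+1)^2 * v := by
    have e : pv p' q' = T (p'+q') + q' := rfl
    have e2 : pv u v = T (u+v) + v := rfl
    rw [e, e2] at h2
    linarith
  rw [h1] at h2'
  linarith

lemma eqE1 {t u v p' q' c : ℕ} (hc : c < 2*t+1)
    (h1 : p' + q' = (2*t+1)*(u+v) + t + c)
    (h2 : pv p' q' = (2*t+1)^2 * pv u v) :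
    p' + (2*t+1)*(2*t-c)*v = (2*t+1)*(1+c)*u + (t + c + c*t + T c + T t) := by
  have e2 := eqE2 h1 h2
  have h1z : ((p':ℤ) + q') = (2*t+1)*((u:ℤ)+v) + t + c := by exact_mod_cast h1
  have e2z : ((2*t+1:ℤ))^2 * v = (q':ℤ) + c*((2*t+1)*((u:ℤ)+v)) + c*t + (T c : ℤ) + (T t : ℤ) := by
    exact_mod_cast e2
  have hcz : (c:ℤ) ≤ 2*t := by exact_mod_cast Nat.lt_succ_iff.mp (by omega : c < 2*t+1)
  zify [show c ≤ 2*t by omega]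
  linear_combination h1z + e2z

/-- `Dm` is a uniform upper bound for `t + c + c*t + T c + T t` over `c < 2t+1`. -/
def Dm (t : ℕ) : ℕ := t + (2*t+1) + (2*t+1)*t + T (2*t+1) + T t

lemma Dc_le_Dm {t c : ℕ} (hc : c < 2*t+1) :
    t + c + c*t + T c + T t ≤ Dm t := by
  have h1 : c*t ≤ (2*t+1)*t := Nat.mul_le_mul_right t (by omega)
  have h2 : T c ≤ T (2*t+1) := T_mono (by omega)
  unfold Dm
  omega

/-- lower bound on `u` from a large `p'` -/
lemma boundP {t u v p' q' c : ℕ} (K : ℕ) (hc : c < 2*t+1)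
    (h1 : p' + q' = (2*t+1)*(u+v) + t + c)
    (h2 : pv p' q' = (2*t+1)^2 * pv u v)
    (hp : (2*t+1)^2*((2*t+1)*K) + Dm t ≤ p') :
    (2*t+1)*K ≤ u ∧ (1 ≤ c → K ≤ v) := by
  have e1 := eqE1 hc h1 h2
  have hD := Dc_le_Dm hc
  have hmul : (2*t+1)*(1+c)*u ≤ (2*t+1)*(2*t+1)*u :=
    Nat.mul_le_mul_right u (Nat.mul_le_mul_left _ (by omega))
  have hu0 : (2*t+1)^2*((2*t+1)*K) ≤ (2*t+1)*(2*t+1)*u := by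
    have : p' ≤ (2*t+1)*(1+c)*u + Dm t := by omega
    omega
  have hring : (2*t+1)^2*((2*t+1)*K) = (2*t+1)*(2*t+1)*((2*t+1)*K) := by ring
  have hu : (2*t+1)*K ≤ u := by
    refine Nat.le_of_mul_le_mul_left ?_ (show 0 < (2*t+1)*(2*t+1) by positivity)
    calc (2*t+1)*(2*t+1)*((2*t+1)*K) = (2*t+1)^2*((2*t+1)*K) := by ring
    _ ≤ (2*t+1)*(2*t+1)*u := hu0
  refine ⟨hu, fun hc1 => ?_⟩
  have e2 := eqE2 h1 h2
  have hv1 : (2*t+1)*u ≤ c*((2*t+1)*(u+v)) := by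
    calc (2*t+1)*u ≤ (2*t+1)*(u+v) := Nat.mul_le_mul_left _ (by omega)
    _ ≤ c*((2*t+1)*(u+v)) := Nat.le_mul_of_pos_left _ (by omega)
  have hv2 : (2*t+1)*((2*t+1)*K) ≤ (2*t+1)*u := Nat.mul_le_mul_left _ hu
  have hv3 : (2*t+1)*((2*t+1)*K) ≤ (2*t+1)^2*v := by
    have := eqE2 h1 h2
    omega
  refine Nat.le_of_mul_le_mul_left ?_ (show 0 < (2*t+1)*(2*t+1) by positivity)
  calc (2*t+1)*(2*t+1)*K = (2*t+1)*((2*t+1)*K) := by ring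
  _ ≤ (2*t+1)^2*v := hv3
  _ = (2*t+1)*(2*t+1)*v := by ring

/-- lower bounds on `v` (and `u`) from a large `q'` -/
lemma boundQ {t u v p' q' c : ℕ} (K : ℕ) (hc : c < 2*t+1)
    (h1 : p' + q' = (2*t+1)*(u+v) + t + c)
    (h2 : pv p' q' = (2*t+1)^2 * pv u v)
    (hq : (2*t+1)^2*((2*t+1)*K + Dm t) ≤ q') :
    ((2*t+1)*K + Dm t ≤ v) ∧ (c + 2 ≤ 2*t+1 → K ≤ u) := by
  have e2 := eqE2 h1 h2
  have hv : (2*t+1)*K + Dm t ≤ v := by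
    refine Nat.le_of_mul_le_mul_left ?_ (show 0 < (2*t+1)*(2*t+1) by positivity)
    have hq' : (2*t+1)*(2*t+1)*((2*t+1)*K + Dm t) ≤ (2*t+1)^2*v := by
      have hr : (2*t+1)*(2*t+1)*((2*t+1)*K + Dm t) = (2*t+1)^2*((2*t+1)*K + Dm t) := by ring
      omega
    calc (2*t+1)*(2*t+1)*((2*t+1)*K + Dm t) ≤ (2*t+1)^2*v := hq'
    _ = (2*t+1)*(2*t+1)*v := by ring
  refine ⟨hv, fun hc2 => ?_⟩
  have e1 := eqE1 hc h1 h2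
  have hD := Dc_le_Dm hc
  have h3 : (2*t+1)*v ≤ (2*t+1)*(2*t-c)*v := by
    have h4 : 1 ≤ 2*t - c := by omega
    calc (2*t+1)*v = ((2*t+1)*1)*v := by ring
    _ ≤ ((2*t+1)*(2*t-c))*v := Nat.mul_le_mul_right v (Nat.mul_le_mul_left _ h4)
  have hmul : (2*t+1)*(1+c)*u ≤ (2*t+1)*(2*t+1)*u :=
    Nat.mul_le_mul_right u (Nat.mul_le_mul_left _ (by omega))
  have h5 : (2*t+1)*((2*t+1)*K + Dm t) ≤ (2*t+1)*v := Nat.mul_le_mul_left _ hv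
  have h6 : (2*t+1)*((2*t+1)*K + Dm t) = (2*t+1)*(2*t+1)*K + (2*t+1)*(Dm t) := by ring
  have h7 : Dm t ≤ (2*t+1)*(Dm t) := Nat.le_mul_of_pos_left _ (by omega)
  have h8 : (2*t+1)*(2*t+1)*K ≤ (2*t+1)*(2*t+1)*u := by omega
  exact Nat.le_of_mul_le_mul_left h8 (by positivity)

end B2

namespace B2

lemma deltaP {t M u v p' q' c : ℕ}
    (e1 : p' + q' = (2*t+1)*(u+v) + t + c) :
    (p'+q')*((2*t+1)^3*M) + T ((2*t+1)^3*M) =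
      (2*t+1)^2*((u+v)*((2*t+1)^2*M) + T ((2*t+1)^2*M) + (c*(2*t+1))*M) := by
  have e1z : ((p':ℤ) + q') = (2*t+1)*((u:ℤ)+v) + t + c := by exact_mod_cast e1
  have idmz : (t:ℤ)*((2*t+1)^3*M) + (T ((2*t+1)^3*M) : ℤ) =
      (2*t+1)^2 * (T ((2*t+1)^2*M) : ℤ) := by exact_mod_cast idm t M
  zify
  linear_combination ((2*t+1:ℤ)^3*M)*e1z + idmz

lemma deltaQ {t M u v p' q' c : ℕ}
    (e1 : p' + q' = (2*t+1)*(u+v) + t + c) :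
    (p'+q')*((2*t+1)^3*M) + T ((2*t+1)^3*M) + (2*t+1)^3*M =
      (2*t+1)^2*((u+v)*((2*t+1)^2*M) + T ((2*t+1)^2*M) + ((1+c)*(2*t+1))*M) := by
  have e1z : ((p':ℤ) + q') = (2*t+1)*((u:ℤ)+v) + t + c := by exact_mod_cast e1
  have idmz : (t:ℤ)*((2*t+1)^3*M) + (T ((2*t+1)^3*M) : ℤ) =
      (2*t+1)^2 * (T ((2*t+1)^2*M) : ℤ) := by exact_mod_cast idm t M
  zify
  linear_combination ((2*t+1:ℤ)^3*M)*e1z + idmz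

lemma deltaB1 {t M u p' q' : ℕ}
    (e0 : p' + 1 = T t) (e1 : q' + T t = (2*t+1)*u + t) :
    (p'+q')*((2*t+1)^3*M) + T ((2*t+1)^3*M) + (2*t+1)^3*M =
      (2*t+1)^2*(u*((2*t+1)^2*M) + T ((2*t+1)^2*M)) := by
  have e0z : ((p':ℤ) + 1) = (T t : ℤ) := by exact_mod_cast e0
  have e1z : ((q':ℤ) + (T t : ℤ)) = (2*t+1)*(u:ℤ) + t := by exact_mod_cast e1
  have idmz : (t:ℤ)*((2*t+1)^3*M) + (T ((2*t+1)^3*M) : ℤ) =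
      (2*t+1)^2 * (T ((2*t+1)^2*M) : ℤ) := by exact_mod_cast idm t M
  zify
  linear_combination ((2*t+1:ℤ)^3*M)*e0z + ((2*t+1:ℤ)^3*M)*e1z + idmz

section Shifts

variable {t S M N : ℕ} {Sp : Set (ℕ × ℕ)}

lemma shiftP {c u v p' q' : ℕ} (hG : Good Sp M N) (hc : c < 2*t+1)
    (hu : N ≤ u) (hv : 1 ≤ c → N ≤ v) :
    ((u, v) ∈ Sp ∧ p' + q' = (2*t+1)*(u+v) + t + c ∧ pv p' q' = (2*t+1)^2 * pv u v)
    ↔ ((u + ((2*t+1-c)*(2*t+1))*M, v + (c*(2*t+1))*M) ∈ Sp ∧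
        (p' + (2*t+1)^3*M) + q' =
          (2*t+1)*((u + ((2*t+1-c)*(2*t+1))*M) + (v + (c*(2*t+1))*M)) + t + c ∧
        pv (p' + (2*t+1)^3*M) q' =
          (2*t+1)^2 * pv (u + ((2*t+1-c)*(2*t+1))*M) (v + (c*(2*t+1))*M)) := by
  have hsplit : ((2*t+1-c)*(2*t+1))*M + (c*(2*t+1))*M = (2*t+1)^2*M := by
    have h : (2*t+1-c) + c = 2*t+1 := by omega
    calc ((2*t+1-c)*(2*t+1))*M + (c*(2*t+1))*M = (((2*t+1-c)+c)*(2*t+1))*M := by ring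
    _ = (2*t+1)^2*M := by rw [h]; ring
  have hmem : ((u,v) ∈ Sp ↔ (u + ((2*t+1-c)*(2*t+1))*M, v + (c*(2*t+1))*M) ∈ Sp) := by
    have i1 := hG.iter1 ((2*t+1-c)*(2*t+1)) hu v
    by_cases hc0 : c = 0
    · subst hc0; simpa using i1
    · have i2 := hG.iter2 (c*(2*t+1)) (u + ((2*t+1-c)*(2*t+1))*M) (hv (by omega))
      exact i1.trans i2
  have harith : (2*t+1)*((u + ((2*t+1-c)*(2*t+1))*M) + (v + (c*(2*t+1))*M)) =
      (2*t+1)*(u+v) + (2*t+1)^3*M := by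
    calc (2*t+1)*((u + ((2*t+1-c)*(2*t+1))*M) + (v + (c*(2*t+1))*M))
        = (2*t+1)*(u+v) + (2*t+1)*(((2*t+1-c)*(2*t+1))*M + (c*(2*t+1))*M) := by ring
    _ = (2*t+1)*(u+v) + (2*t+1)*((2*t+1)^2*M) := by rw [hsplit]
    _ = (2*t+1)*(u+v) + (2*t+1)^3*M := by ring
  have hsEq : (p' + q' = (2*t+1)*(u+v) + t + c) ↔
      ((p' + (2*t+1)^3*M) + q' =
        (2*t+1)*((u + ((2*t+1-c)*(2*t+1))*M) + (v + (c*(2*t+1))*M)) + t + c) := by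
    rw [harith]; omega
  have hsum : (u + ((2*t+1-c)*(2*t+1))*M) + (v + (c*(2*t+1))*M) = (u+v) + (2*t+1)^2*M := by
    omega
  have hdL : pv (p' + (2*t+1)^3*M) q' =
      pv p' q' + ((p'+q')*((2*t+1)^3*M) + T ((2*t+1)^3*M)) := pv_addP p' q' _
  have hdR : (2*t+1)^2 * pv (u + ((2*t+1-c)*(2*t+1))*M) (v + (c*(2*t+1))*M) =
      (2*t+1)^2 * pv u v +
        (2*t+1)^2*((u+v)*((2*t+1)^2*M) + T ((2*t+1)^2*M) + (c*(2*t+1))*M) := by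
    rw [pv_add2, hsplit, Nat.mul_add]
  constructor
  · rintro ⟨m, e1, e2⟩
    refine ⟨hmem.mp m, hsEq.mp e1, ?_⟩
    rw [hdL, hdR, e2, deltaP e1]
  · rintro ⟨m, e1, e2⟩
    have e1' := hsEq.mpr e1
    refine ⟨hmem.mpr m, e1', ?_⟩
    rw [hdL, hdR, deltaP e1'] at e2
    omega

lemma shiftQ {c u v p' q' : ℕ} (hG : Good Sp M N) (hc : c < 2*t+1)
    (hv : N ≤ v) (hu : c + 2 ≤ 2*t+1 → N ≤ u) :
    ((u, v) ∈ Sp ∧ p' + q' = (2*t+1)*(u+v) + t + c ∧ pv p' q' = (2*t+1)^2 * pv u v)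
    ↔ ((u + ((2*t-c)*(2*t+1))*M, v + ((1+c)*(2*t+1))*M) ∈ Sp ∧
        p' + (q' + (2*t+1)^3*M) =
          (2*t+1)*((u + ((2*t-c)*(2*t+1))*M) + (v + ((1+c)*(2*t+1))*M)) + t + c ∧
        pv p' (q' + (2*t+1)^3*M) =
          (2*t+1)^2 * pv (u + ((2*t-c)*(2*t+1))*M) (v + ((1+c)*(2*t+1))*M)) := by
  have hsplit : ((2*t-c)*(2*t+1))*M + ((1+c)*(2*t+1))*M = (2*t+1)^2*M := by
    have h : (2*t-c) + (1+c) = 2*t+1 := by omega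
    calc ((2*t-c)*(2*t+1))*M + ((1+c)*(2*t+1))*M = (((2*t-c)+(1+c))*(2*t+1))*M := by ring
    _ = (2*t+1)^2*M := by rw [h]; ring
  have hmem : ((u,v) ∈ Sp ↔ (u + ((2*t-c)*(2*t+1))*M, v + ((1+c)*(2*t+1))*M) ∈ Sp) := by
    have i2 := hG.iter2 ((1+c)*(2*t+1)) u hv
    by_cases hc0 : c = 2*t
    · subst hc0
      have hz : (2*t-2*t)*(2*t+1) = 0 := by rw [Nat.sub_self, Nat.zero_mul]
      rw [hz]
      simpa using i2
    · have i1 := hG.iter1 ((2*t-c)*(2*t+1)) (hu (by omega)) v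
      have i2' := hG.iter2 ((1+c)*(2*t+1)) (u + ((2*t-c)*(2*t+1))*M) hv
      exact i1.trans i2'
  have harith : (2*t+1)*((u + ((2*t-c)*(2*t+1))*M) + (v + ((1+c)*(2*t+1))*M)) =
      (2*t+1)*(u+v) + (2*t+1)^3*M := by
    calc (2*t+1)*((u + ((2*t-c)*(2*t+1))*M) + (v + ((1+c)*(2*t+1))*M))
        = (2*t+1)*(u+v) + (2*t+1)*(((2*t-c)*(2*t+1))*M + ((1+c)*(2*t+1))*M) := by ring
    _ = (2*t+1)*(u+v) + (2*t+1)*((2*t+1)^2*M) := by rw [hsplit]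
    _ = (2*t+1)*(u+v) + (2*t+1)^3*M := by ring
  have hsEq : (p' + q' = (2*t+1)*(u+v) + t + c) ↔
      (p' + (q' + (2*t+1)^3*M) =
        (2*t+1)*((u + ((2*t-c)*(2*t+1))*M) + (v + ((1+c)*(2*t+1))*M)) + t + c) := by
    rw [harith]; omega
  have hdL : pv p' (q' + (2*t+1)^3*M) =
      pv p' q' + ((p'+q')*((2*t+1)^3*M) + T ((2*t+1)^3*M) + (2*t+1)^3*M) := pv_addQ p' q' _
  have hdR : (2*t+1)^2 * pv (u + ((2*t-c)*(2*t+1))*M) (v + ((1+c)*(2*t+1))*M) =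
      (2*t+1)^2 * pv u v +
        (2*t+1)^2*((u+v)*((2*t+1)^2*M) + T ((2*t+1)^2*M) + ((1+c)*(2*t+1))*M) := by
    rw [pv_add2, hsplit, Nat.mul_add]
  constructor
  · rintro ⟨m, e1, e2⟩
    refine ⟨hmem.mp m, hsEq.mp e1, ?_⟩
    rw [hdL, hdR, e2, deltaQ e1]
  · rintro ⟨m, e1, e2⟩
    have e1' := hsEq.mpr e1
    refine ⟨hmem.mpr m, e1', ?_⟩
    rw [hdL, hdR, deltaQ e1'] at e2
    omega

lemma shiftB1 {u p' q' : ℕ} (hG : Good Sp M N) (hu : N ≤ u) :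
    ((u, 0) ∈ Sp ∧ q' + T t = (2*t+1)*u + t ∧ p' + 1 = T t ∧
      pv p' q' = (2*t+1)^2 * pv u 0)
    ↔ ((u + (2*t+1)^2*M, 0) ∈ Sp ∧
        (q' + (2*t+1)^3*M) + T t = (2*t+1)*(u + (2*t+1)^2*M) + t ∧ p' + 1 = T t ∧
        pv p' (q' + (2*t+1)^3*M) = (2*t+1)^2 * pv (u + (2*t+1)^2*M) 0) := by
  have hmem : ((u, 0) ∈ Sp ↔ (u + (2*t+1)^2*M, 0) ∈ Sp) := by
    have i1 := hG.iter1 ((2*t+1)*(2*t+1)) hu 0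
    rw [show ((2*t+1)*(2*t+1))*M = (2*t+1)^2*M by ring] at i1
    exact i1
  have harith : (2*t+1)*(u + (2*t+1)^2*M) = (2*t+1)*u + (2*t+1)^3*M := by ring
  have hsEq : (q' + T t = (2*t+1)*u + t) ↔
      ((q' + (2*t+1)^3*M) + T t = (2*t+1)*(u + (2*t+1)^2*M) + t) := by
    rw [harith]; omega
  have hdL : pv p' (q' + (2*t+1)^3*M) =
      pv p' q' + ((p'+q')*((2*t+1)^3*M) + T ((2*t+1)^3*M) + (2*t+1)^3*M) := pv_addQ p' q' _
  have hdR : (2*t+1)^2 * pv (u + (2*t+1)^2*M) 0 =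
      (2*t+1)^2 * pv u 0 + (2*t+1)^2*(u*((2*t+1)^2*M) + T ((2*t+1)^2*M)) := by
    have h := pv_add2 u 0 ((2*t+1)^2*M) 0
    simp only [Nat.add_zero] at h
    rw [h, Nat.mul_add]
  constructor
  · rintro ⟨m, e1, e0, e2⟩
    refine ⟨hmem.mp m, hsEq.mp e1, e0, ?_⟩
    rw [hdL, hdR, e2, deltaB1 e0 e1]
  · rintro ⟨m, e1, e0, e2⟩
    have e1' := hsEq.mpr e1
    refine ⟨hmem.mpr m, e1', e0, ?_⟩
    rw [hdL, hdR, deltaB1 e0 e1'] at e2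
    omega

end Shifts

end B2

namespace B2

/-- threshold for the image set -/
def Np (t M N : ℕ) : ℕ :=
  (2*t+1)^2*((2*t+1)*(N + (2*t+1)^2*M) + Dm t) + Dm t + T t + 2*t + 3

section Main
variable {t M N : ℕ} {Sp : Set (ℕ × ℕ)}

lemma du_le {t c M : ℕ} (hc : c ≤ 2*t+1) : (c*(2*t+1))*M ≤ (2*t+1)^2*M := by
  have h1 : c*(2*t+1) ≤ (2*t+1)*(2*t+1) := Nat.mul_le_mul_right _ hc
  calc (c*(2*t+1))*M ≤ ((2*t+1)*(2*t+1))*M := Nat.mul_le_mul_right M h1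
  _ = (2*t+1)^2*M := by ring

lemma K_le_bK {t M N : ℕ} :
    N + (2*t+1)^2*M ≤ (2*t+1)*(N + (2*t+1)^2*M) :=
  Nat.le_mul_of_pos_left _ (by omega)

lemma bK_le_Np {t M N : ℕ} :
    (2*t+1)*(N + (2*t+1)^2*M) + 2*t + 3 ≤ Np t M N := by
  unfold Np
  have h2 : (2*t+1)*(N + (2*t+1)^2*M) ≤
      (2*t+1)^2*((2*t+1)*(N + (2*t+1)^2*M) + Dm t) := by
    calc (2*t+1)*(N + (2*t+1)^2*M) ≤ (2*t+1)*(N + (2*t+1)^2*M) + Dm t := by omega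
    _ ≤ (2*t+1)^2*((2*t+1)*(N + (2*t+1)^2*M) + Dm t) :=
        Nat.le_mul_of_pos_left _ (by positivity)
  omega

theorem good_S' (hG : Good Sp M N) :
    Good (Sgoal t Sp) ((2*t+1)^3*M) (Np t M N) := by
  have hM := hG.1
  have hB1 : 1 ≤ (2*t+1)^3*M := by
    have : 0 < (2*t+1)^3*M := by positivity
    omega
  have hKN : N ≤ N + (2*t+1)^2*M := by omega
  have hboundP_le : (2*t+1)^2*((2*t+1)*(N + (2*t+1)^2*M)) + Dm t ≤ Np t M N := by
    unfold Np
    have : (2*t+1)^2*((2*t+1)*(N + (2*t+1)^2*M)) ≤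
        (2*t+1)^2*((2*t+1)*(N + (2*t+1)^2*M) + Dm t) := Nat.mul_le_mul_left _ (by omega)
    omega
  have hboundQ_le : (2*t+1)^2*((2*t+1)*(N + (2*t+1)^2*M) + Dm t) ≤ Np t M N := by
    unfold Np; omega
  have hTt_le : T t + 2*t + 2 ≤ Np t M N := by unfold Np; omega
  refine ⟨hB1, fun p' q' => ⟨fun hp' => ?_, fun hq' => ?_⟩⟩
  · -- p'-direction
    constructor
    · rintro ⟨u, v, hS, hpv⟩
      rcases witness0 hpv with ⟨c, hc, h1⟩ | ⟨hv0, ht1, hsm⟩ | ⟨hv0, ht1, he0, he1⟩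
      · obtain ⟨hu, hv⟩ := boundP (N + (2*t+1)^2*M) hc h1 hpv (by omega)
        have hKb := K_le_bK (t := t) (M := M) (N := N)
        have hu' : N ≤ u := by omega
        have hv' : 1 ≤ c → N ≤ v := fun h => le_trans hKN (hv h)
        have hres := (shiftP (M := M) hG hc hu' hv').mp ⟨hS, h1, hpv⟩
        exact ⟨_, _, hres.1, hres.2.2⟩
      · exact absurd hsm (by omega)
      · exact absurd he0 (by omega)
    · rintro ⟨u, v, hS, hpv⟩
      rcases witness0 hpv with ⟨c, hc, h1⟩ | ⟨hv0, ht1, hsm⟩ | ⟨hv0, ht1, he0, he1⟩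
      · obtain ⟨hu, hv⟩ := boundP (N + (2*t+1)^2*M) hc h1 hpv (by omega)
        have hdu := du_le (M := M) (show 2*t+1-c ≤ 2*t+1 by omega)
        have hdu' : ((2*t+1-c)*(2*t+1))*M ≤ (2*t+1)^2*M := hdu
        have hdv : (c*(2*t+1))*M ≤ (2*t+1)^2*M := du_le (by omega)
        have hKb := K_le_bK (t := t) (M := M) (N := N)
        have hu0N : N ≤ u - ((2*t+1-c)*(2*t+1))*M := by omega
        have hv0N : 1 ≤ c → N ≤ v - (c*(2*t+1))*M := by
          intro h; have := hv h; omega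
        have hiff := shiftP (M := M) (p' := p') (q' := q') hG hc hu0N hv0N
        have hueq : u - ((2*t+1-c)*(2*t+1))*M + ((2*t+1-c)*(2*t+1))*M = u := by omega
        have hveq : v - (c*(2*t+1))*M + (c*(2*t+1))*M = v := by
          rcases Nat.eq_zero_or_pos c with h | h
          · subst h; simp
          · have := hv h; omega
        rw [hueq, hveq] at hiff
        have hres := hiff.mpr ⟨hS, h1, hpv⟩
        exact ⟨_, _, hres.1, hres.2.2⟩
      · exact absurd hsm (by omega)
      · exact absurd he0 (by omega)
  · -- q'-direction
    constructor
    · rintro ⟨u, v, hS, hpv⟩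
      rcases witness0 hpv with ⟨c, hc, h1⟩ | ⟨hv0, ht1, hsm⟩ | ⟨hv0, ht1, he0, he1⟩
      · obtain ⟨hv, hu⟩ := boundQ (N + (2*t+1)^2*M) hc h1 hpv (by omega)
        have hKb := K_le_bK (t := t) (M := M) (N := N)
        have hv' : N ≤ v := by omega
        have hu' : c + 2 ≤ 2*t+1 → N ≤ u := fun h => le_trans hKN (hu h)
        have hres := (shiftQ (M := M) hG hc hv' hu').mp ⟨hS, h1, hpv⟩
        exact ⟨_, _, hres.1, hres.2.2⟩
      · exact absurd hsm (by omega)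
      · -- B1 up
        subst hv0
        have hbKle := bK_le_Np (t := t) (M := M) (N := N)
        have huK : (2*t+1)*(N + (2*t+1)^2*M) ≤ (2*t+1)*u := by omega
        have hu' : N ≤ u := by
          have := Nat.le_of_mul_le_mul_left huK (show 0 < 2*t+1 by omega)
          omega
        have hres := (shiftB1 (t := t) (M := M) (p' := p') hG hu').mp ⟨hS, he1, he0, hpv⟩
        exact ⟨_, _, hres.1, hres.2.2.2⟩
    · rintro ⟨u, v, hS, hpv⟩
      rcases witness0 hpv with ⟨c, hc, h1⟩ | ⟨hv0, ht1, hsm⟩ | ⟨hv0, ht1, he0, he1⟩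
      · obtain ⟨hv, hu⟩ := boundQ (N + (2*t+1)^2*M) hc h1 hpv (by omega)
        have hdu : ((2*t-c)*(2*t+1))*M ≤ (2*t+1)^2*M := du_le (by omega)
        have hdv : ((1+c)*(2*t+1))*M ≤ (2*t+1)^2*M := du_le (by omega)
        have hKb := K_le_bK (t := t) (M := M) (N := N)
        have hv0N : N ≤ v - ((1+c)*(2*t+1))*M := by omega
        have hu0N : c + 2 ≤ 2*t+1 → N ≤ u - ((2*t-c)*(2*t+1))*M := by
          intro h; have := hu h; omega
        have hiff := shiftQ (M := M) (p' := p') (q' := q') hG hc hv0N hu0N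
        have hueq : u - ((2*t-c)*(2*t+1))*M + ((2*t-c)*(2*t+1))*M = u := by
          rcases Nat.lt_or_ge c (2*t) with h | h
          · have := hu (by omega); omega
          · have hc2 : c = 2*t := by omega
            subst hc2
            have hz : (2*t-2*t)*(2*t+1) = 0 := by rw [Nat.sub_self, Nat.zero_mul]
            rw [hz]; simp
        have hveq : v - ((1+c)*(2*t+1))*M + ((1+c)*(2*t+1))*M = v := by omega
        rw [hueq, hveq] at hiff
        have hres := hiff.mpr ⟨hS, h1, hpv⟩
        exact ⟨_, _, hres.1, hres.2.2⟩
      · exact absurd hsm (by omega)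
      · -- B1 down
        subst hv0
        have hbKle := bK_le_Np (t := t) (M := M) (N := N)
        have hmono : (2*t+1)*N ≤ (2*t+1)*(N + (2*t+1)^2*M) := Nat.mul_le_mul_left _ (by omega)
        have huK : (2*t+1)*(N + (2*t+1)^2*M) ≤ (2*t+1)*u := by omega
        have huN : N + (2*t+1)^2*M ≤ u :=
          Nat.le_of_mul_le_mul_left huK (show 0 < 2*t+1 by omega)
        have hu0N : N ≤ u - (2*t+1)^2*M := by omega
        have hueq : u - (2*t+1)^2*M + (2*t+1)^2*M = u := by omega
        have hiff := shiftB1 (t := t) (M := M) (p' := p') (q' := q') hG hu0N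
        rw [hueq] at hiff
        have hres := hiff.mpr ⟨hS, he1, he0, hpv⟩
        exact ⟨_, _, hres.1, hres.2.2.2⟩

end Main

end B2

namespace B2

lemma lang_eq_id (X : Set ℕ) :
    {w : List (Fin 2) | ∃ x ∈ X, w = wordB 2 (repB 2 x)} =
      lang {pq : ℕ × ℕ | pv pq.1 pq.2 ∈ X} := by
  ext w
  constructor
  · rintro ⟨x, hx, rfl⟩
    obtain ⟨p, q, hpv, hw⟩ := word_repB x
    exact ⟨p, q, by show pv p q ∈ X; rw [hpv]; exact hx, hw⟩
  · rintro ⟨p, q, hm, rfl⟩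
    refine ⟨pv p q, hm, ?_⟩
    obtain ⟨p', q', hpv', hw⟩ := word_repB (pv p q)
    obtain ⟨rfl, rfl⟩ := pv_inj hpv'
    exact hw.symm

lemma lang_eq_mulgen (k : ℕ) (X : Set ℕ) :
    {w : List (Fin 2) | ∃ x ∈ X, w = wordB 2 (repB 2 (k * x))} =
      lang {pq : ℕ × ℕ | ∃ x ∈ X, pv pq.1 pq.2 = k * x} :=
  lang_eq X (fun x => k * x)

lemma Sgoal_eq (t : ℕ) (X : Set ℕ) :
    {pq : ℕ × ℕ | ∃ x ∈ X, pv pq.1 pq.2 = (2*t+1)^2 * x} =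
      Sgoal t {pq : ℕ × ℕ | pv pq.1 pq.2 ∈ X} := by
  ext ⟨p, q⟩
  constructor
  · rintro ⟨x, hx, hpv⟩
    obtain ⟨u, v, huv⟩ := pv_surj x
    refine ⟨u, v, ?_, ?_⟩
    · show pv u v ∈ X
      rw [huv]; exact hx
    · rw [huv]; exact hpv
  · rintro ⟨u, v, hm, hpv⟩
    exact ⟨pv u v, hm, hpv⟩

theorem odd_preserves (t : ℕ) (X : Set ℕ)
    (h : Language.IsRegular {w : List (Fin 2) | ∃ x ∈ X, w = wordB 2 (repB 2 x)}) :
    Language.IsRegular {w : List (Fin 2) | ∃ x ∈ X, w = wordB 2 (repB 2 ((2*t+1)^2 * x))} := by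
  rw [lang_eq_id] at h
  rw [lang_eq_mulgen, Sgoal_eq]
  obtain ⟨M, N, hG⟩ := regular_good _ h
  exact good_regular _ _ _ (good_S' hG)

/-! ### even counterexample -/

lemma even_idT (g s : ℕ) :
    T (2*((g+1)*s) + g) + (g+1)*s = 4*(g+1)^2*(T s) + T g := by
  have h1 := two_T (2*((g+1)*s) + g)
  have h2 := two_T s
  have h3 := two_T g
  have h2' : 4*(g+1)^2*(2*T s) = 4*(g+1)^2*(s*(s+1)) := by rw [h2]
  have expand : (2*((g+1)*s) + g) * (2*((g+1)*s) + g + 1) + 2*((g+1)*s) =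
      4*(g+1)^2*(s*(s+1)) + g*(g+1) := by ring
  linarith

lemma even_pv (g s : ℕ) (hs : T g ≤ (g+1)*s) :
    pv ((g+1)*s + g + T g) ((g+1)*s - T g) = (2*(g+1))^2 * T s := by
  obtain ⟨G, hG⟩ : ∃ G, (g+1)*s = G := ⟨_, rfl⟩
  rw [hG] at hs ⊢
  have hTid : T (2*G + g) + G = 4*(g+1)^2*(T s) + T g := by rw [← hG]; exact even_idT g s
  have hring : (2*(g+1))^2 * T s = 4*(g+1)^2*(T s) := by ring
  have hsum : (G + g + T g) + (G - T g) = 2*G + g := by omega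
  show T ((G + g + T g) + (G - T g)) + (G - T g) = _
  rw [hsum, hring]
  omega

lemma even_unique (g p q s : ℕ) (h : pv p q = (2*(g+1))^2 * T s)
    (hq : 2*((g+1)*(T g)) + 2*g + 2 + T g ≤ q) : p = q + g + 2*(T g) := by
  obtain ⟨G, hG⟩ : ∃ G, (g+1)*s = G := ⟨_, rfl⟩
  have hTid : T (2*G + g) + G = 4*(g+1)^2*(T s) + T g := by rw [← hG]; exact even_idT g s
  have hGbound : s ≤ G := by rw [← hG]; exact Nat.le_mul_of_pos_left _ (by omega)
  have hdag : T (p+q) + q + T g = T (2*G + g) + G := by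
    have e : pv p q = T (p+q) + q := rfl
    have hring : (2*(g+1))^2 * T s = 4*(g+1)^2*(T s) := by ring
    rw [e, hring] at h
    omega
  have hub : p + q ≤ 2*G + g := by
    by_contra hcon
    push_neg at hcon
    have h5 : T (2*G + g + 1) ≤ T (p+q) := T_mono (by omega)
    have h6 := T_succ (2*G + g)
    omega
  have hlb : 2*G + g ≤ p + q := by
    by_contra hcon
    push_neg at hcon
    have h5 : T (p+q+1) ≤ T (2*G + g) := T_mono (by omega)
    have h6 := T_succ (p+q)
    have hsg : G + 1 ≤ T g := by omega
    have hsle : s ≤ T g := by omega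
    have hA : G ≤ (g+1)*(T g) := by rw [← hG]; exact Nat.mul_le_mul_left _ hsle
    omega
  have hs' : p + q = 2*G + g := by omega
  rw [hs'] at hdag
  omega

def S2 (g : ℕ) : Set (ℕ × ℕ) := {pq : ℕ × ℕ | ∃ s, pv pq.1 pq.2 = (2*(g+1))^2 * T s}

lemma even_not_regular (g : ℕ) : ¬ (lang (S2 g)).IsRegular := by
  rintro ⟨σ, fin, D, hD⟩
  obtain ⟨n, hn⟩ : ∃ n, n = Fintype.card σ := ⟨_, rfl⟩
  obtain ⟨s0, hs0⟩ : ∃ s0, s0 = T g + (2*((g+1)*(T g)) + 2*g + 2 + T g) + n + 1 := ⟨_, rfl⟩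
  obtain ⟨G, hG⟩ : ∃ G, (g+1)*s0 = G := ⟨_, rfl⟩
  have hsG : s0 ≤ G := by rw [← hG]; exact Nat.le_mul_of_pos_left _ (by omega)
  have hsle : T g ≤ G := by omega
  obtain ⟨p, hp⟩ : ∃ p, p = G + g + T g := ⟨_, rfl⟩
  obtain ⟨q, hq⟩ : ∃ q, q = G - T g := ⟨_, rfl⟩
  have hq' : q + T g = G := by omega
  have hqbig : 2*((g+1)*(T g)) + 2*g + 2 + T g + n + 1 ≤ q := by omega
  have hmem : w2 p q ∈ lang (S2 g) := by
    refine (mem_lang_iff _).mpr ⟨s0, ?_⟩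
    have := even_pv g s0 (by omega)
    rw [hG] at this
    rw [hp, hq]
    exact this
  have hlenw : (w2 p q).length = p + q := by simp [w2]
  have hlen : Fintype.card σ ≤ (w2 p q).length := by omega
  rw [← hD] at hmem
  obtain ⟨a, b, c, hsplit, hablen, hbne, hpump⟩ := D.pumping_lemma hmem hlen
  have hk : a.length + b.length ≤ p := by omega
  have htake : a ++ b = List.replicate (a.length + b.length) (0 : Fin 2) := by
    have h1 : (a ++ b ++ c).take (a.length + b.length) = a ++ b := by
      rw [show a ++ b ++ c = (a ++ b) ++ c from by simp, List.take_append_of_le_length (by simp)]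
      simp
    have h2 : (w2 p q).take (a.length + b.length) =
        List.replicate (a.length + b.length) (0 : Fin 2) := by
      unfold w2
      rw [List.take_append_of_le_length (by simp; omega), List.take_replicate]
      congr 1
      omega
    rw [← hsplit, h2] at h1
    exact h1.symm
  have ha : a = List.replicate a.length (0 : Fin 2) :=
    List.eq_replicate_length.mpr (fun x hx =>
      List.eq_of_mem_replicate (htake ▸ List.mem_append_left b hx))
  have hb : b = List.replicate b.length (0 : Fin 2) :=
    List.eq_replicate_length.mpr (fun x hx =>
      List.eq_of_mem_replicate (htake ▸ List.mem_append_right a hx))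
  have hc : c = List.replicate (p - (a.length + b.length)) (0 : Fin 2) ++
      List.replicate q (1 : Fin 2) := by
    have h1 : ((a ++ b) ++ c).drop (a.length + b.length) = c := by
      rw [show a.length + b.length = (a ++ b).length from by simp]
      exact List.drop_left
    have h2 : (w2 p q).drop (a.length + b.length) =
        List.replicate (p - (a.length + b.length)) (0 : Fin 2) ++
          List.replicate q (1 : Fin 2) := by
      unfold w2
      rw [List.drop_append_of_le_length (by simp; omega), List.drop_replicate]
    rw [show (a ++ b) ++ c = a ++ b ++ c from by simp, ← hsplit, h2] at h1
    exact h1.symm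
  have hpmem : a ++ (b ++ b) ++ c ∈ D.accepts := by
    apply hpump
    refine ⟨a ++ (b ++ b), ⟨a, rfl, b ++ b, ?_, rfl⟩, c, rfl, by simp⟩
    refine Language.mem_kstar.mpr ⟨[b, b], by simp, ?_⟩
    intro y hy
    simp only [List.mem_cons, List.mem_singleton, List.not_mem_nil, or_false] at hy
    rcases hy with rfl | rfl <;> rfl
  rw [hD] at hpmem
  have hpw : a ++ (b ++ b) ++ c = w2 (p + b.length) q := by
    rw [ha, hb, hc]
    unfold w2
    simp only [List.append_assoc, ← List.replicate_add]
    rw [← List.append_assoc, ← List.replicate_add]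
    congr 2
    simp only [List.length_replicate]
    omega
  rw [hpw] at hpmem
  obtain ⟨s1, hs1⟩ := (mem_lang_iff _).mp hpmem
  have e1 : p + b.length = q + g + 2*(T g) := even_unique g _ q s1 hs1 (by omega)
  have e0 : p = q + g + 2*(T g) := by omega
  have hb0 : b.length = 0 := by omega
  exact hbne (List.length_eq_zero_iff.mp hb0)

end B2

namespace B2

lemma SX_eq :
    {pq : ℕ × ℕ | pv pq.1 pq.2 ∈ {x : ℕ | ∃ s, x = T s}} = {pq : ℕ × ℕ | pq.2 = 0} := by
  ext ⟨p, q⟩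
  simp only [Set.mem_setOf_eq]
  constructor
  · rintro ⟨s, hs⟩
    by_contra hq
    have hq1 : 1 ≤ q := by omega
    have he : pv p q = T (p+q) + q := rfl
    rw [he] at hs
    have h1 : T (p+q) < T s := by omega
    have h2 : p + q < s := T_lt_iff.mp h1
    have h3 : T (p+q+1) ≤ T s := T_mono (by omega)
    have h4 := T_succ (p+q)
    omega
  · rintro rfl
    exact ⟨p, by simp [pv]⟩

lemma triangular_lang_regular :
    Language.IsRegular
      {w : List (Fin 2) | ∃ x ∈ {x : ℕ | ∃ s, x = T s}, w = wordB 2 (repB 2 x)} := by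
  rw [lang_eq_id, SX_eq]
  refine good_regular _ 1 1 ⟨le_refl 1, fun p q => ⟨fun _ => Iff.rfl, fun hq => ?_⟩⟩
  simp only [Set.mem_setOf_eq]
  omega

lemma even_conclusion_eq (g : ℕ) :
    {w : List (Fin 2) | ∃ x ∈ {x : ℕ | ∃ s, x = T s},
        w = wordB 2 (repB 2 ((2*(g+1))^2 * x))} = lang (S2 g) := by
  rw [lang_eq_mulgen ((2*(g+1))^2) _]
  have hset : {pq : ℕ × ℕ | ∃ x ∈ {x : ℕ | ∃ s, x = T s},
      pv pq.1 pq.2 = (2*(g+1))^2 * x} = S2 g := by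
    ext ⟨p, q⟩
    simp only [Set.mem_setOf_eq, S2]
    constructor
    · rintro ⟨x, ⟨s, rfl⟩, hpv⟩
      exact ⟨s, hpv⟩
    · rintro ⟨s, hpv⟩
      exact ⟨T s, ⟨s, rfl⟩, hpv⟩
  rw [hset]

end B2

/-- Multiplication by `β²` preserves `B_2`-recognizability iff `β` is odd. -/
theorem mul_sq_preserves_B2_recognizability_iff (β : ℕ) (hβ : 1 ≤ β) :
    (∀ X : Set ℕ,
        Language.IsRegular {w : List (Fin 2) | ∃ x ∈ X, w = wordB 2 (repB 2 x)} →
        Language.IsRegular {w : List (Fin 2) | ∃ x ∈ X, w = wordB 2 (repB 2 (β ^ 2 * x))}) ↔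
      Odd β := by
  constructor
  · intro h
    by_contra hodd
    rw [Nat.not_odd_iff_even] at hodd
    obtain ⟨g, hg⟩ : ∃ g, β = 2*(g+1) := by
      obtain ⟨k, hk⟩ := hodd
      exact ⟨k - 1, by omega⟩
    subst hg
    have h2 := h {x : ℕ | ∃ s, x = B2.T s} B2.triangular_lang_regular
    rw [B2.even_conclusion_eq g] at h2
    exact B2.even_not_regular g h2
  · intro hodd X hX
    obtain ⟨t, ht⟩ := hodd
    have ht' : β = 2*t+1 := by omega
    subst ht'
    exact B2.odd_preserves t X hX
end

section
/- For every integer ℓ ≥ 1 and every n = (n_1,…,n_ℓ) ∈ ℕ^ℓ, the set of tuples m ∈ ℕ^ℓ that are genealogically smaller than n is finite, and its cardinality equals Σ_{i=1}^{ℓ} C(n_i + n_{i+1} + ⋯ + n_ℓ + ℓ − i, ℓ − i + 1). In other words, val_ℓ(n) is the position (counting from 0) of the word word(n) in the genealogically ordered bounded language B_ℓ. -/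
open Finset

lemma multichoose_sum (c n : ℕ) :
    ∑ b ∈ range (n+1), Nat.multichoose c b = Nat.multichoose (c+1) n := by
  induction n with
  | zero => simp
  | succ n ih => rw [sum_range_succ, ih, Nat.multichoose_succ_succ, add_comm]

lemma card_piAntidiag {ι : Type*} [DecidableEq ι] (s : Finset ι) (t : ℕ) :
    (s.piAntidiag t).card = Nat.multichoose s.card t := by
  induction s using Finset.cons_induction generalizing t with
  | empty =>
      rw [piAntidiag_empty]
      split
      · subst ‹t = 0›; simp
      · obtain ⟨t', rfl⟩ : ∃ t', t = t' + 1 := ⟨t-1, by omega⟩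
        simp
  | cons i s hi ih =>
      rw [piAntidiag_cons, card_disjiUnion]
      simp only [card_map, ih]
      rw [Finset.Nat.sum_antidiagonal_eq_sum_range_succ (fun a b => Nat.multichoose s.card b)]
      have h2 : ∑ k ∈ range (t+1), Nat.multichoose s.card (t - k)
          = ∑ k ∈ range (t+1), Nat.multichoose s.card k := by
        rw [← Finset.sum_range_reflect (fun k => Nat.multichoose s.card k) (t+1)]
        refine sum_congr rfl fun k hk => ?_
        simp only [mem_range] at hk
        congr 1
      rw [h2, multichoose_sum, card_cons]


def sumLe {ι : Type*} [DecidableEq ι] [DecidableEq (ι → ℕ)] (s : Finset ι) (M : ℕ) :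
    Finset (ι → ℕ) :=
  (range (M+1)).biUnion (fun t => s.piAntidiag t)

lemma mem_sumLe {ι : Type*} [DecidableEq ι] [DecidableEq (ι → ℕ)] {s : Finset ι} {M : ℕ}
    {f : ι → ℕ} :
    f ∈ sumLe s M ↔ (∑ j ∈ s, f j ≤ M ∧ ∀ i, f i ≠ 0 → i ∈ s) := by
  simp only [sumLe, mem_biUnion, mem_range, mem_piAntidiag, Nat.lt_succ_iff]
  constructor
  · rintro ⟨t, ht, rfl, h⟩; exact ⟨ht, h⟩
  · rintro ⟨h1, h2⟩; exact ⟨_, h1, rfl, h2⟩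

lemma card_sumLe {ι : Type*} [DecidableEq ι] [DecidableEq (ι → ℕ)] (s : Finset ι) (M : ℕ) :
    (sumLe s M).card = (M + s.card).choose s.card := by
  rw [sumLe, card_biUnion]
  · have : ∀ t ∈ range (M+1), (s.piAntidiag t).card = Nat.multichoose s.card t :=
      fun t _ => card_piAntidiag s t
    rw [sum_congr rfl this, multichoose_sum, Nat.multichoose_eq]
    have h : s.card + 1 + M - 1 = M + s.card := by omega
    rw [h, Nat.choose_symm_add]
  · intro t _ t' _ htt'
    simp only [disjoint_left, mem_piAntidiag]
    rintro f ⟨rfl, -⟩ ⟨rfl, -⟩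
    exact htt' rfl

lemma sum_split {ℓ : ℕ} (i : Fin ℓ) (f : Fin ℓ → ℕ) :
    ∑ j, f j = (∑ j ∈ Iio i, f j) + f i + ∑ j ∈ Ioi i, f j := by
  have huniv : (univ : Finset (Fin ℓ)) = Iio i ∪ Ici i := by
    ext j; simpa using lt_or_ge j i
  have hdisj : Disjoint (Iio i) (Ici i) := by
    simp only [disjoint_left, mem_Iio, mem_Ici]
    exact fun a h => not_le.2 h
  rw [huniv, sum_union hdisj, Ici_eq_cons_Ioi, sum_cons]
  ring

lemma card_F2i (ℓ : ℕ) (n : Fin ℓ → ℕ) (i : Fin ℓ) :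
    ((sumLe univ (∑ j, n j)).filter fun m =>
        (∑ j, m j = ∑ j, n j) ∧ n i < m i ∧ ∀ j, j < i → m j = n j).card
      = if (∑ j ∈ Ioi i, n j) = 0 then 0
        else ((∑ j ∈ Ioi i, n j) - 1 + (Ioi i).card).choose (Ioi i).card := by
  classical
  set S := ∑ j, n j with hS
  set T := ∑ j ∈ Ioi i, n j with hT
  have hsplitn : S = (∑ j ∈ Iio i, n j) + n i + T := sum_split i n
  -- a key identity for members of the filter
  have key : ∀ m : Fin ℓ → ℕ, (∑ j, m j = S) → (∀ j, j < i → m j = n j) →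
      m i + ∑ j ∈ Ioi i, m j = n i + T := by
    intro m hsum hpre
    have h1 : (∑ j ∈ Iio i, m j) = ∑ j ∈ Iio i, n j :=
      sum_congr rfl fun j hj => hpre j (mem_Iio.mp hj)
    have h2 := sum_split i m
    omega
  by_cases hT0 : T = 0
  · rw [if_pos hT0]
    rw [card_eq_zero, eq_empty_iff_forall_notMem]
    rintro m hm
    rw [mem_filter] at hm
    obtain ⟨-, hsum, hlt, hpre⟩ := hm
    have := key m hsum hpre
    omega
  · rw [if_neg hT0, ← card_sumLe (Ioi i) (T - 1)]
    refine card_nbij' (fun m => fun j => if i < j then m j else 0)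
      (fun g => fun j => if j < i then n j else if i < j then g j
        else n i + (T - ∑ j' ∈ Ioi i, g j')) ?_ ?_ ?_ ?_
    · -- forward membership
      intro m hm
      rw [mem_coe, mem_filter, mem_sumLe] at hm
      obtain ⟨-, hsum, hlt, hpre⟩ := hm
      have hk := key m hsum hpre
      rw [mem_coe, mem_sumLe]
      dsimp only
      constructor
      · have : (∑ j ∈ Ioi i, if i < j then m j else 0) = ∑ j ∈ Ioi i, m j :=
          sum_congr rfl fun j hj => if_pos (mem_Ioi.mp hj)
        omega
      · intro j hj
        rw [mem_Ioi]
        by_contra h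
        simp [h] at hj
    · -- backward membership
      intro g hg
      rw [mem_coe, mem_sumLe] at hg
      obtain ⟨hg1, hg2⟩ := hg
      have hIio : ∀ j : Fin ℓ, j < i →
          (if j < i then n j else if i < j then g j
            else n i + (T - ∑ j' ∈ Ioi i, g j')) = n j := fun j hj => if_pos hj
      have hIoi : ∀ j : Fin ℓ, i < j →
          (if j < i then n j else if i < j then g j
            else n i + (T - ∑ j' ∈ Ioi i, g j')) = g j := fun j hj => by
        rw [if_neg (by exact fun h => absurd (h.trans hj) (lt_irrefl j)), if_pos hj]
      have hii : (if i < i then n i else if i < i then g i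
            else n i + (T - ∑ j' ∈ Ioi i, g j')) = n i + (T - ∑ j' ∈ Ioi i, g j') := by
        rw [if_neg (lt_irrefl i), if_neg (lt_irrefl i)]
      have hsum1 : (∑ j ∈ Iio i, if j < i then n j else if i < j then g j
            else n i + (T - ∑ j' ∈ Ioi i, g j')) = ∑ j ∈ Iio i, n j :=
        sum_congr rfl fun j hj => hIio j (mem_Iio.mp hj)
      have hsum2 : (∑ j ∈ Ioi i, if j < i then n j else if i < j then g j
            else n i + (T - ∑ j' ∈ Ioi i, g j')) = ∑ j ∈ Ioi i, g j :=
        sum_congr rfl fun j hj => hIoi j (mem_Ioi.mp hj)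
      have hsplit := sum_split i (fun j => if j < i then n j else if i < j then g j
            else n i + (T - ∑ j' ∈ Ioi i, g j'))
      rw [hsum1, hsum2, hii] at hsplit
      have htot : (∑ j, if j < i then n j else if i < j then g j
            else n i + (T - ∑ j' ∈ Ioi i, g j')) = S := by omega
      rw [mem_coe, mem_filter, mem_sumLe]
      dsimp only
      refine ⟨⟨le_of_eq htot, fun _ _ => mem_univ _⟩, htot, ?_, fun j hj => hIio j hj⟩
      rw [hii]; omega
    · -- left inverse
      intro m hm
      rw [mem_coe, mem_filter, mem_sumLe] at hm
      obtain ⟨-, hsum, hlt, hpre⟩ := hm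
      have hk := key m hsum hpre
      have hsg : (∑ j' ∈ Ioi i, if i < j' then m j' else 0) = ∑ j' ∈ Ioi i, m j' :=
        sum_congr rfl fun j hj => if_pos (mem_Ioi.mp hj)
      funext j
      dsimp only
      rcases lt_trichotomy j i with h | rfl | h
      · simp only [if_pos h]
        exact (hpre j h).symm
      · simp only [if_neg (lt_irrefl j), hsg]
        omega
      · rw [if_neg (by exact fun h' => absurd (h'.trans h) (lt_irrefl j)), if_pos h, if_pos h]
    · -- right inverse
      intro g hg
      rw [mem_coe, mem_sumLe] at hg
      obtain ⟨-, hg2⟩ := hg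
      funext j
      dsimp only
      rcases lt_or_ge i j with h | h
      · rw [if_pos h, if_neg (by exact fun h' => absurd (h.trans h') (lt_irrefl i)), if_pos h]
      · rw [if_neg (not_lt.2 h)]
        by_contra hne
        have := hg2 j (Ne.symm hne)
        rw [mem_Ioi] at this
        omega

lemma valB_eq (ℓ : ℕ) (hℓ : 1 ≤ ℓ) (n : Fin ℓ → ℕ) :
    valB ℓ n = ((∑ j, n j) + (ℓ - 1)).choose ℓ
      + ∑ i : Fin ℓ, (if (∑ j ∈ Ioi i, n j) = 0 then 0
          else ((∑ j ∈ Ioi i, n j) - 1 + (Ioi i).card).choose ((Ioi i).card)) := by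
  obtain ⟨L, rfl⟩ : ∃ L, ℓ = L + 1 := ⟨ℓ - 1, by omega⟩
  set NT : ℕ → ℕ := fun k => ∑ j : Fin (L+1), if k ≤ (j:ℕ) then n j else 0 with hNT
  have hvalB : valB (L+1) n = ∑ k ∈ range (L+1), (NT k + (L - k)).choose (L + 1 - k) := by
    rw [valB, ← Fin.sum_univ_eq_sum_range (fun k => (NT k + (L - k)).choose (L + 1 - k)) (L+1)]
    refine Fintype.sum_congr _ _ fun i => ?_
    congr 1
    · congr 1
      · rw [sum_filter]
        exact sum_congr rfl fun j _ => if_congr (by rw [Fin.le_def]) rfl rfl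
  have hT : ∀ i : Fin (L+1), ∑ j ∈ Ioi i, n j = NT ((i:ℕ)+1) := by
    intro i
    rw [hNT]
    have : Ioi i = univ.filter (fun j : Fin (L+1) => (i:ℕ)+1 ≤ (j:ℕ)) := by
      ext j
      rw [mem_Ioi, mem_filter, Fin.lt_def]; exact ⟨fun h => ⟨mem_univ _, h⟩, fun h => h.2⟩
    rw [this, sum_filter]
  have hcardIoi : ∀ i : Fin (L+1), (Ioi i).card = L - (i:ℕ) := by
    intro i
    rw [Fin.card_Ioi]
    omega
  have hrhs : (∑ i : Fin (L+1), (if (∑ j ∈ Ioi i, n j) = 0 then 0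
          else ((∑ j ∈ Ioi i, n j) - 1 + (Ioi i).card).choose ((Ioi i).card)))
      = ∑ k ∈ range (L+1), (if NT (k+1) = 0 then 0
          else (NT (k+1) - 1 + (L - k)).choose (L - k)) := by
    rw [← Fin.sum_univ_eq_sum_range (fun k => if NT (k+1) = 0 then 0
          else (NT (k+1) - 1 + (L - k)).choose (L - k)) (L+1)]
    refine Fintype.sum_congr _ _ fun i => ?_
    rw [hT i, hcardIoi i]
  have hNT0 : NT 0 = ∑ j, n j := by
    rw [hNT]
    exact sum_congr rfl fun j _ => if_pos (Nat.zero_le _)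
  have hNTL : NT (L+1) = 0 := by
    rw [hNT]
    exact sum_eq_zero fun j _ => if_neg (by have := j.isLt; omega)
  rw [hvalB, hrhs, sum_range_succ' _ L, sum_range_succ _ L]
  rw [if_pos hNTL]
  have hmain : ∀ k ∈ range L, (NT (k+1) + (L - (k+1))).choose (L + 1 - (k+1))
      = (if NT (k+1) = 0 then 0 else (NT (k+1) - 1 + (L - k)).choose (L - k)) := by
    intro k hk
    rw [mem_range] at hk
    by_cases h0 : NT (k+1) = 0
    · rw [if_pos h0, h0]
      have h1 : L + 1 - (k+1) = L - k := by omega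
      rw [h1]
      exact Nat.choose_eq_zero_of_lt (by omega)
    · rw [if_neg h0]
      have h1 : L + 1 - (k+1) = L - k := by omega
      have h2 : NT (k+1) + (L - (k+1)) = NT (k+1) - 1 + (L - k) := by omega
      rw [h1, h2]
  rw [sum_congr rfl hmain, hNT0]
  have : L + 1 - 1 = L := by omega
  rw [this]
  simp only [Nat.sub_zero]
  omega


/-- The genealogical (shortlex) order on `ℕ^ℓ`, i.e. the genealogical order of the
corresponding words `a_1^{m_1} ⋯ a_ℓ^{m_ℓ}` of the bounded language `B_ℓ`:
`m < n` iff the length of the word of `m` is smaller, or the lengths agree and at the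
first differing coordinate `i` one has `m_i > n_i`. -/
def GenLt (ℓ : ℕ) (m n : Fin ℓ → ℕ) : Prop :=
  (∑ i, m i) < (∑ i, n i) ∨
    ((∑ i, m i) = (∑ i, n i) ∧ ∃ i : Fin ℓ, n i < m i ∧ ∀ j : Fin ℓ, j < i → m j = n j)

/-- The set of tuples genealogically smaller than `n` is finite, of cardinality
`valB ℓ n`; i.e. `valB ℓ n` is the position of the word of `n` in the genealogically
ordered bounded language `B_ℓ`. -/
theorem genLt_finite_card (ℓ : ℕ) (hℓ : 1 ≤ ℓ) (n : Fin ℓ → ℕ) :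
    {m : Fin ℓ → ℕ | GenLt ℓ m n}.Finite ∧
      {m : Fin ℓ → ℕ | GenLt ℓ m n}.ncard = valB ℓ n := by
  have hsub : ∀ m : Fin ℓ → ℕ, GenLt ℓ m n → m ∈ sumLe (univ : Finset (Fin ℓ)) (∑ j, n j) := by
    intro m hm
    rw [mem_sumLe]
    refine ⟨?_, fun _ _ => mem_univ _⟩
    rcases hm with h | ⟨h, -⟩
    · exact h.le
    · exact h.le
  set F1 := (sumLe (univ : Finset (Fin ℓ)) (∑ j, n j)).filter
      (fun m => ∑ j, m j < ∑ j, n j) with hF1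
  set F2 := (univ : Finset (Fin ℓ)).biUnion
      (fun i => (sumLe (univ : Finset (Fin ℓ)) (∑ j, n j)).filter
        (fun m => (∑ j, m j = ∑ j, n j) ∧ n i < m i ∧ ∀ j, j < i → m j = n j)) with hF2
  have hset : {m : Fin ℓ → ℕ | GenLt ℓ m n} = ↑(F1 ∪ F2) := by
    ext m
    rw [Set.mem_setOf_eq, mem_coe, mem_union]
    constructor
    · intro hm
      rcases hm with h | ⟨h, i, h1, h2⟩
      · exact Or.inl (mem_filter.mpr ⟨hsub m (Or.inl h), h⟩)
      · exact Or.inr (mem_biUnion.mpr ⟨i, mem_univ i,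
          mem_filter.mpr ⟨hsub m (Or.inr ⟨h, i, h1, h2⟩), h, h1, h2⟩⟩)
    · intro hm
      rcases hm with h | h
      · exact Or.inl (mem_filter.mp h).2
      · obtain ⟨i, -, h⟩ := mem_biUnion.mp h
        obtain ⟨-, h1, h2, h3⟩ := mem_filter.mp h
        exact Or.inr ⟨h1, i, h2, h3⟩
  constructor
  · rw [hset]
    exact (F1 ∪ F2).finite_toSet
  · rw [hset, Set.ncard_coe_finset]
    have hdisj : Disjoint F1 F2 := by
      simp only [hF1, hF2, disjoint_left, mem_filter, mem_biUnion]
      rintro m ⟨-, hlt⟩ ⟨i, -, -, heq, -⟩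
      omega
    rw [card_union_of_disjoint hdisj]
    have hcard2 : F2.card = ∑ i : Fin ℓ, (if (∑ j ∈ Ioi i, n j) = 0 then 0
        else ((∑ j ∈ Ioi i, n j) - 1 + (Ioi i).card).choose ((Ioi i).card)) := by
      rw [hF2, card_biUnion]
      · exact sum_congr rfl fun i _ => card_F2i ℓ n i
      · intro i _ i' _ hne
        simp only [disjoint_left, mem_filter]
        rintro m ⟨-, -, hlt, hpre⟩ ⟨-, -, hlt', hpre'⟩
        rcases hne.lt_or_gt with h | h
        · have := hpre' i h; omega
        · have := hpre i' h; omega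
    have hcard1 : F1.card = ((∑ j, n j) + (ℓ - 1)).choose ℓ := by
      rcases Nat.eq_zero_or_pos (∑ j, n j) with h0 | hpos
      · have hemp : F1 = ∅ := by
          rw [eq_empty_iff_forall_notMem]
          intro m hm
          rw [hF1, mem_filter] at hm
          omega
        rw [hemp, card_empty]
        exact (Nat.choose_eq_zero_of_lt (by omega)).symm
      · have hEq : F1 = sumLe (univ : Finset (Fin ℓ)) ((∑ j, n j) - 1) := by
          ext m
          rw [hF1, mem_filter, mem_sumLe, mem_sumLe]
          constructor
          · rintro ⟨⟨h1, h2⟩, h3⟩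
            exact ⟨by simpa using by omega, h2⟩
          · rintro ⟨h1, h2⟩
            have h1' : ∑ j ∈ univ, m j ≤ (∑ j, n j) - 1 := h1
            exact ⟨⟨by omega, h2⟩, by omega⟩
        rw [hEq, card_sumLe, card_univ, Fintype.card_fin]
        congr 1
        omega
    rw [hcard1, hcard2, valB_eq ℓ hℓ n]
end

section
/- For every integer ℓ ≥ 1 and all n, k ∈ ℕ, the coordinate sum of rep_ℓ(n) equals k (i.e., the B_ℓ-representation of n is a word of length k) if and only if C(k+ℓ−1, ℓ) ≤ n ≤ Σ_{i=1}^{ℓ} C(k+i−1, i). -/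
lemma valB_zero (m : Fin 0 → ℕ) : valB 0 m = 0 := by simp [valB]

lemma valB_succ (ℓ : ℕ) (m : Fin (ℓ+1) → ℕ) :
    valB (ℓ+1) m = Nat.choose ((∑ i, m i) + ℓ) (ℓ+1) + valB ℓ (fun j => m j.succ) := by
  unfold valB
  rw [Fin.sum_univ_succ]
  congr 1
  · have : (Finset.univ.filter (fun j : Fin (ℓ+1) => (0 : Fin (ℓ+1)) ≤ j)) = Finset.univ := by
      apply Finset.filter_true_of_mem; intro j _; exact Fin.zero_le j
    simp [this]
  · apply Finset.sum_congr rfl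
    intro i _
    have h1 : ∑ j ∈ Finset.univ.filter (fun j : Fin (ℓ+1) => i.succ ≤ j), m j
        = ∑ j ∈ Finset.univ.filter (fun j : Fin ℓ => i ≤ j), m j.succ := by
      rw [Finset.sum_filter, Finset.sum_filter, Fin.sum_univ_succ]
      have h0 : ¬ (i.succ ≤ (0 : Fin (ℓ+1))) := by
        simp [Fin.le_def]
      rw [if_neg h0, zero_add]
      apply Finset.sum_congr rfl
      intro j _
      congr 1
      simp [Fin.succ_le_succ_iff]
    rw [h1]
    congr 1 <;> simp [Fin.val_succ] <;> omega

lemma valB_lt (ℓ : ℕ) (m : Fin ℓ → ℕ) :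
    valB ℓ m < Nat.choose ((∑ i, m i) + ℓ) ℓ := by
  induction ℓ with
  | zero => simp [valB_zero]
  | succ ℓ ih =>
    rw [valB_succ]
    have hsum : (∑ i, m i) = m 0 + ∑ j : Fin ℓ, m j.succ := Fin.sum_univ_succ m
    have h1 : valB ℓ (fun j => m j.succ) < Nat.choose ((∑ j : Fin ℓ, m j.succ) + ℓ) ℓ :=
      ih _
    have h2 : Nat.choose ((∑ j : Fin ℓ, m j.succ) + ℓ) ℓ ≤ Nat.choose ((∑ i, m i) + ℓ) ℓ := by
      apply Nat.choose_le_choose; omega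
    have hp : Nat.choose ((∑ i, m i) + ℓ + 1) (ℓ + 1)
        = Nat.choose ((∑ i, m i) + ℓ) ℓ + Nat.choose ((∑ i, m i) + ℓ) (ℓ+1) :=
      Nat.choose_succ_succ' _ _
    have : (∑ i, m i) + (ℓ+1) = ((∑ i, m i) + ℓ) + 1 := by omega
    rw [this, hp]
    omega

lemma hockey (ℓ k : ℕ) :
    (∑ i ∈ Finset.range ℓ, Nat.choose (k + i) (i + 1)) + 1 = Nat.choose (k + ℓ) ℓ := by
  induction ℓ with
  | zero => simp
  | succ ℓ ih =>
    rw [Finset.sum_range_succ]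
    have hp : Nat.choose (k + ℓ + 1) (ℓ + 1)
        = Nat.choose (k + ℓ) ℓ + Nat.choose (k + ℓ) (ℓ+1) := Nat.choose_succ_succ' _ _
    have : k + (ℓ+1) = (k + ℓ) + 1 := by omega
    rw [this, hp]
    omega

lemma valB_surj_aux : ∀ ℓ k n : ℕ, n < Nat.choose (k + ℓ) ℓ →
    ∃ m : Fin ℓ → ℕ, (∑ i, m i) ≤ k ∧ valB ℓ m = n := by
  intro ℓ
  induction ℓ with
  | zero =>
    intro k n hn
    simp at hn
    exact ⟨fun i => 0, by simp, by simp [valB_zero, hn]⟩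
  | succ ℓ ih =>
    intro k n hn
    set P := fun j => Nat.choose (j + ℓ) (ℓ+1) ≤ n with hP
    set k' := Nat.findGreatest P k with hk'
    have hP0 : P 0 := by
      simp only [hP, zero_add]
      rw [Nat.choose_eq_zero_of_lt (by omega)]
      exact Nat.zero_le n
    have hk'le : k' ≤ k := Nat.findGreatest_le k
    have hspec : Nat.choose (k' + ℓ) (ℓ+1) ≤ n :=
      Nat.findGreatest_spec (Nat.zero_le k) hP0
    have hmax : n < Nat.choose (k' + 1 + ℓ) (ℓ+1) := by
      rcases eq_or_lt_of_le hk'le with heq | hlt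
      · have h : k' + 1 + ℓ = k + (ℓ+1) := by omega
        rw [h]; exact hn
      · have h := Nat.findGreatest_is_greatest (Nat.lt_succ_self k') (by omega : k' + 1 ≤ k)
        simp only [hP, not_le] at h
        exact h
    have hp : Nat.choose (k' + ℓ + 1) (ℓ + 1)
        = Nat.choose (k' + ℓ) ℓ + Nat.choose (k' + ℓ) (ℓ+1) := Nat.choose_succ_succ' _ _
    have hn' : n - Nat.choose (k' + ℓ) (ℓ+1) < Nat.choose (k' + ℓ) ℓ := by
      have : k' + 1 + ℓ = k' + ℓ + 1 := by omega
      rw [this] at hmax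
      omega
    obtain ⟨m', hm'le, hm'val⟩ := ih k' (n - Nat.choose (k' + ℓ) (ℓ+1)) hn'
    refine ⟨(Fin.cons (k' - ∑ i, m' i) m' : Fin (ℓ+1) → ℕ), ?_, ?_⟩
    · rw [Fin.sum_univ_succ]
      simp only [Fin.cons_zero, Fin.cons_succ]
      omega
    · rw [valB_succ]
      have htail : (fun j : Fin ℓ => (Fin.cons (k' - ∑ i, m' i) m' : Fin (ℓ+1) → ℕ) j.succ) = m' := by
        funext j; simp
      have hsum : (∑ i, (Fin.cons (k' - ∑ i, m' i) m' : Fin (ℓ+1) → ℕ) i) = k' := by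
        rw [Fin.sum_univ_succ]
        simp only [Fin.cons_zero, Fin.cons_succ]
        omega
      rw [htail, hm'val, hsum]
      omega


lemma valB_surj (ℓ : ℕ) (hℓ : 1 ≤ ℓ) (n : ℕ) : ∃ m : Fin ℓ → ℕ, valB ℓ m = n := by
  have h1 : n < Nat.choose (n + ℓ) ℓ := by
    have h2 : Nat.choose (n + ℓ) ℓ = Nat.choose (n + ℓ) n := (Nat.choose_symm_add).symm ▸ by
      rw [add_comm n ℓ, Nat.choose_symm_add]
    have h3 : Nat.choose (n + 1) n ≤ Nat.choose (n + ℓ) n :=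
      Nat.choose_le_choose n (by omega)
    rw [h2]
    have := Nat.choose_succ_self_right n
    omega
  obtain ⟨m, _, hm⟩ := valB_surj_aux ℓ n n h1
  exact ⟨m, hm⟩

/-- The `B_ℓ`-representation of `n` has length `k` iff
`C(k+ℓ−1, ℓ) ≤ n ≤ Σ_{i=1}^{ℓ} C(k+i−1, i)`. -/
theorem repB_length_iff (ℓ : ℕ) (hℓ : 1 ≤ ℓ) (n k : ℕ) :
    (∑ i : Fin ℓ, repB ℓ n i) = k ↔
      Nat.choose (k + ℓ - 1) ℓ ≤ n ∧
        n ≤ ∑ i ∈ Finset.range ℓ, Nat.choose (k + i) (i + 1) := by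
  obtain ⟨ℓ', rfl⟩ : ∃ ℓ', ℓ = ℓ' + 1 := ⟨ℓ - 1, by omega⟩
  set g : ℕ → ℕ := fun j => Nat.choose (j + ℓ') (ℓ' + 1) with hg
  have hgmono : StrictMono g := by
    apply strictMono_nat_of_lt_succ
    intro j
    have hp : Nat.choose (j + ℓ' + 1) (ℓ' + 1)
        = Nat.choose (j + ℓ') ℓ' + Nat.choose (j + ℓ') (ℓ'+1) := Nat.choose_succ_succ' _ _
    have hpos : 0 < Nat.choose (j + ℓ') ℓ' := Nat.choose_pos (by omega)
    simp only [hg]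
    have : j + 1 + ℓ' = j + ℓ' + 1 := by omega
    rw [this, hp]
    omega
  have hrep : valB (ℓ'+1) (repB (ℓ'+1) n) = n :=
    Function.invFun_eq (valB_surj (ℓ'+1) (by omega) n)
  set k' := ∑ i, repB (ℓ'+1) n i with hk'
  -- bounds for k'
  have hlow : g k' ≤ n := by
    conv_rhs => rw [← hrep]
    rw [valB_succ]
    exact Nat.le_add_right _ _
  have hhigh : n < g (k' + 1) := by
    conv_lhs => rw [← hrep]
    have := valB_lt (ℓ'+1) (repB (ℓ'+1) n)
    simp only [hg]
    have heq : k' + 1 + ℓ' = k' + (ℓ'+1) := by omega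
    rw [heq]
    exact this
  have hrange : ∀ j, (∑ i ∈ Finset.range (ℓ'+1), Nat.choose (j + i) (i + 1)) + 1 = g (j+1) := by
    intro j
    rw [hockey]
    simp only [hg]
    congr 1
    omega
  have hgk : ∀ j, Nat.choose (j + (ℓ'+1) - 1) (ℓ'+1) = g j := by
    intro j
    have h : j + (ℓ'+1) - 1 = j + ℓ' := by omega
    rw [h]
  constructor
  · rintro rfl
    constructor
    · rw [hgk]; exact hlow
    · have := hrange k'; omega
  · rintro ⟨h1, h2⟩
    rw [hgk] at h1
    have h2' : n < g (k + 1) := by have := hrange k; omega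
    by_contra hne
    rcases Nat.lt_or_ge k' k with hlt | hge
    · have : g (k' + 1) ≤ g k := hgmono.le_iff_le.mpr (by omega)
      omega
    · have hklt : k < k' := by omega
      have : g (k + 1) ≤ g k' := hgmono.le_iff_le.mpr (by omega)
      omega
end

section
/- Let ℓ ≥ 1 be an integer. A set X ⊆ ℕ is B_ℓ-recognizable, i.e., the language {word(rep_ℓ(x)) : x ∈ X} is regular, if and only if rep_ℓ(X) ⊆ ℕ^ℓ is a finite union of sets of the form {(s_1 + k_1·t_1, s_2 + k_2·t_2, …, s_ℓ + k_ℓ·t_ℓ) : k_1,…,k_ℓ ∈ ℕ} with s_1,…,s_ℓ, t_1,…,t_ℓ ∈ ℕ (a semi-linear set all of whose periods are integer multiples of the canonical basis vectors). -/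
namespace BlAux


/-- Arithmetic progression `{s + k t : k ∈ ℕ}`. -/
def AP (s t : ℕ) : Set ℕ := {x | ∃ k, x = s + k * t}

/-- Box: product of arithmetic progressions. -/
def Box {ℓ : ℕ} (s t : Fin ℓ → ℕ) : Set (Fin ℓ → ℕ) :=
  {n | ∃ k : Fin ℓ → ℕ, ∀ i, n i = s i + k i * t i}

/-- The class of sets in the conclusion of the theorem. -/
def Good {ℓ : ℕ} (S : Set (Fin ℓ → ℕ)) : Prop :=
  ∃ (m : ℕ) (s t : Fin m → Fin ℓ → ℕ), S = ⋃ r : Fin m, Box (s r) (t r)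

def Good1 (A : Set ℕ) : Prop :=
  ∃ (m : ℕ) (s t : Fin m → ℕ), A = ⋃ r : Fin m, AP (s r) (t r)

/-- Reindex a fintype-indexed union by `Fin m`. -/
lemma iUnion_fin_reindex {γ β : Type*} {ι : Type*} [Fintype ι] (C : β → Set γ) (f : ι → β) :
    ∃ (m : ℕ) (g : Fin m → β), (⋃ j, C (f j)) = ⋃ r : Fin m, C (g r) := by
  classical
  refine ⟨Fintype.card ι, f ∘ (Fintype.equivFin ι).symm, ?_⟩
  ext x
  simp only [Set.mem_iUnion, Function.comp_apply]
  constructor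
  · rintro ⟨j, hj⟩
    exact ⟨Fintype.equivFin ι j, by simpa using hj⟩
  · rintro ⟨r, hr⟩
    exact ⟨(Fintype.equivFin ι).symm r, hr⟩

lemma good_iUnion {ℓ : ℕ} {ι : Type*} [Fintype ι] (f : ι → Set (Fin ℓ → ℕ))
    (h : ∀ j, Good (f j)) : Good (⋃ j, f j) := by
  classical
  choose m s t hst using h
  have h1 : (⋃ j, f j) = ⋃ p : Σ j : ι, Fin (m j), Box (s p.1 p.2) (t p.1 p.2) := by
    rw [Set.iUnion_sigma]
    exact Set.iUnion_congr hst
  obtain ⟨M, g, hg⟩ := iUnion_fin_reindex (fun p : (Fin ℓ → ℕ) × (Fin ℓ → ℕ) => Box p.1 p.2)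
    (fun p : Σ j : ι, Fin (m j) => (s p.1 p.2, t p.1 p.2))
  exact ⟨M, fun r => (g r).1, fun r => (g r).2, by rw [h1]; exact hg⟩

lemma good1_iUnion {ι : Type*} [Fintype ι] (f : ι → Set ℕ)
    (h : ∀ j, Good1 (f j)) : Good1 (⋃ j, f j) := by
  classical
  choose m s t hst using h
  have h1 : (⋃ j, f j) = ⋃ p : Σ j : ι, Fin (m j), AP (s p.1 p.2) (t p.1 p.2) := by
    rw [Set.iUnion_sigma]
    exact Set.iUnion_congr hst
  obtain ⟨M, g, hg⟩ := iUnion_fin_reindex (fun p : ℕ × ℕ => AP p.1 p.2)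
    (fun p : Σ j : ι, Fin (m j) => (s p.1 p.2, t p.1 p.2))
  exact ⟨M, fun r => (g r).1, fun r => (g r).2, by rw [h1]; exact hg⟩

lemma good_empty {ℓ : ℕ} : Good (∅ : Set (Fin ℓ → ℕ)) :=
  ⟨0, Fin.elim0, Fin.elim0, by simp⟩

lemma good_univ {ℓ : ℕ} : Good (Set.univ : Set (Fin ℓ → ℕ)) := by
  refine ⟨1, fun _ _ => 0, fun _ _ => 1, ?_⟩
  ext n
  simp only [Set.mem_univ, Set.mem_iUnion, true_iff]
  exact ⟨0, n, fun i => by simp [Box]⟩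

lemma box_cons {ℓ : ℕ} (a b : ℕ) (s t : Fin ℓ → ℕ) :
    Box (Fin.cons a s) (Fin.cons b t) =
      {n : Fin (ℓ + 1) → ℕ | n 0 ∈ AP a b ∧ (n ∘ Fin.succ) ∈ Box s t} := by
  ext n
  constructor
  · rintro ⟨k, hk⟩
    refine ⟨⟨k 0, by simpa using hk 0⟩, k ∘ Fin.succ, fun i => by simpa using hk i.succ⟩
  · rintro ⟨⟨k0, hk0⟩, k', hk'⟩
    refine ⟨Fin.cons k0 k', fun i => ?_⟩
    refine Fin.cases ?_ ?_ i
    · simpa using hk0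
    · intro j; simpa using hk' j

lemma good_cons {ℓ : ℕ} {A : Set ℕ} {T : Set (Fin ℓ → ℕ)} (hA : Good1 A) (hT : Good T) :
    Good {n : Fin (ℓ + 1) → ℕ | n 0 ∈ A ∧ (n ∘ Fin.succ) ∈ T} := by
  classical
  obtain ⟨m1, s1, t1, rfl⟩ := hA
  obtain ⟨m2, s2, t2, rfl⟩ := hT
  have h1 : {n : Fin (ℓ + 1) → ℕ | n 0 ∈ ⋃ r, AP (s1 r) (t1 r) ∧
      (n ∘ Fin.succ) ∈ ⋃ r, Box (s2 r) (t2 r)} =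
      ⋃ p : Fin m1 × Fin m2, Box (Fin.cons (s1 p.1) (s2 p.2)) (Fin.cons (t1 p.1) (t2 p.2)) := by
    ext n
    simp only [Set.mem_setOf_eq, Set.mem_iUnion, box_cons, Set.mem_setOf_eq, Prod.exists]
    constructor
    · rintro ⟨⟨r1, h1⟩, ⟨r2, h2⟩⟩; exact ⟨r1, r2, h1, h2⟩
    · rintro ⟨r1, r2, h1, h2⟩; exact ⟨⟨r1, h1⟩, ⟨r2, h2⟩⟩
  rw [h1]
  exact good_iUnion _ (fun p => ⟨1, fun _ => Fin.cons (s1 p.1) (s2 p.2),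
    fun _ => Fin.cons (t1 p.1) (t2 p.2), by simp [Set.iUnion_const]⟩)

/-- The set of iteration exponents hitting a given state is a finite union of APs. -/
lemma good1_iterate {σ : Type*} [Finite σ] (g : σ → σ) (p q : σ) :
    ∃ (m : ℕ) (s t : Fin m → ℕ), {x : ℕ | g^[x] p = q} = ⋃ r : Fin m, AP (s r) (t r) := by
  classical
  obtain ⟨x, y, hxy, hfe⟩ := Finite.exists_ne_map_eq_of_infinite (fun n : ℕ => g^[n] p)
  obtain ⟨N, T, hT, hper⟩ : ∃ N T, 0 < T ∧ g^[N + T] p = g^[N] p := by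
    rcases Nat.lt_or_ge x y with h | h
    · exact ⟨x, y - x, by omega, by rw [show x + (y - x) = y by omega]; exact hfe.symm⟩
    · exact ⟨y, x - y, by omega, by rw [show y + (x - y) = x by omega]; exact hfe⟩
  have key : ∀ d n, N ≤ n → g^[n + d * T] p = g^[n] p := by
    intro d
    induction d with
    | zero => simp
    | succ d ih =>
      intro n hn
      have h1 : n + (d + 1) * T = (n - N + d * T) + (N + T) := by
        rw [Nat.succ_mul]; omega
      have h2 : g^[(n - N + d * T) + (N + T)] p = g^[n - N + d * T] (g^[N + T] p) :=
        Function.iterate_add_apply g _ _ p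
      rw [h1, h2, hper, ← Function.iterate_add_apply,
        show n - N + d * T + N = n + d * T by omega]
      exact ih n hn
  let I := {j : Fin (N + T) // g^[(j : ℕ)] p = q}
  obtain ⟨m, gg, hgg⟩ := iUnion_fin_reindex (fun pq : ℕ × ℕ => AP pq.1 pq.2)
      (fun j : I => (((j : Fin (N + T)) : ℕ), if ((j : Fin (N + T)) : ℕ) < N then 0 else T))
  refine ⟨m, fun r => (gg r).1, fun r => (gg r).2, ?_⟩
  rw [← hgg]
  ext x
  simp only [Set.mem_setOf_eq, Set.mem_iUnion]
  constructor
  · intro hx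
    by_cases hlt : x < N + T
    · exact ⟨⟨⟨x, hlt⟩, hx⟩, 0, by simp⟩
    · have hxN : N ≤ x := by omega
      have hmd : (x - N) % T + T * ((x - N) / T) = x - N := Nat.mod_add_div (x - N) T
      have hxeq : x = (N + (x - N) % T) + ((x - N) / T) * T := by
        rw [Nat.mul_comm ((x - N) / T) T]; omega
      have hred : g^[N + (x - N) % T] p = q := by
        rw [← hx]
        conv_rhs => rw [hxeq]
        exact (key ((x - N) / T) (N + (x - N) % T) (Nat.le_add_right _ _)).symm
      have hlt2 : N + (x - N) % T < N + T := by
        have := Nat.mod_lt (x - N) hT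
        omega
      refine ⟨⟨⟨N + (x - N) % T, hlt2⟩, hred⟩, (x - N) / T, ?_⟩
      simp only [if_neg (by omega : ¬ N + (x - N) % T < N)]
      exact hxeq
  · rintro ⟨⟨⟨j, hj⟩, hjq⟩, k, hk⟩
    simp only at hjq hk
    by_cases hlt : j < N
    · simp only [if_pos hlt] at hk
      rw [show x = j by omega]
      exact hjq
    · simp only [if_neg hlt] at hk
      rw [hk]
      rw [key k j (by omega)]
      exact hjq


lemma evalFrom_replicate {α σ : Type*} (M : DFA α σ) (a : α) :
    ∀ (x : ℕ) (p : σ), M.evalFrom p (List.replicate x a) = (fun q => M.step q a)^[x] p := by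
  intro x
  induction x with
  | zero => intro p; rfl
  | succ x ih =>
    intro p
    rw [List.replicate_succ]
    show M.evalFrom (M.step p a) (List.replicate x a) = _
    rw [ih, ← Function.iterate_succ_apply]

/-- Core forward lemma: the set of block-length tuples whose block word lands in `F` is Good. -/
lemma good_blocks {α σ : Type*} [Finite σ] (M : DFA α σ) :
    ∀ (k : ℕ) (c : Fin k → α) (p : σ) (F : Set σ),
      Good {n : Fin k → ℕ |
        M.evalFrom p (List.ofFn fun i => List.replicate (n i) (c i)).flatten ∈ F} := by
  intro k
  induction k with
  | zero =>
    intro c p F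
    by_cases hp : p ∈ F
    · have : {n : Fin 0 → ℕ |
          M.evalFrom p (List.ofFn fun i => List.replicate (n i) (c i)).flatten ∈ F} =
          Set.univ := by
        ext n; simp [hp]
      rw [this]; exact good_univ
    · have : {n : Fin 0 → ℕ |
          M.evalFrom p (List.ofFn fun i => List.replicate (n i) (c i)).flatten ∈ F} =
          ∅ := by
        ext n; simp [hp]
      rw [this]; exact good_empty
  | succ k ih =>
    intro c p F
    classical
    have hdec : ∀ n : Fin (k+1) → ℕ,
        M.evalFrom p (List.ofFn fun i => List.replicate (n i) (c i)).flatten =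
        M.evalFrom (M.evalFrom p (List.replicate (n 0) (c 0)))
          (List.ofFn fun i : Fin k => List.replicate ((n ∘ Fin.succ) i) ((c ∘ Fin.succ) i)).flatten := by
      intro n
      rw [List.ofFn_succ, List.flatten_cons, DFA.evalFrom_of_append]
      rfl
    have hset : {n : Fin (k+1) → ℕ |
        M.evalFrom p (List.ofFn fun i => List.replicate (n i) (c i)).flatten ∈ F} =
        ⋃ q : σ, {n : Fin (k+1) → ℕ |
          (n 0) ∈ {x : ℕ | M.evalFrom p (List.replicate x (c 0)) = q} ∧
          (n ∘ Fin.succ) ∈ {n' : Fin k → ℕ |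
            M.evalFrom q (List.ofFn fun i => List.replicate (n' i) ((c ∘ Fin.succ) i)).flatten ∈ F}} := by
      ext n
      simp only [Set.mem_setOf_eq, Set.mem_iUnion, hdec n]
      constructor
      · intro h
        exact ⟨M.evalFrom p (List.replicate (n 0) (c 0)), rfl, h⟩
      · rintro ⟨q, hq, h⟩
        rw [hq]; exact h
    rw [hset]
    haveI : Fintype σ := Fintype.ofFinite σ
    refine good_iUnion _ (fun q => ?_)
    refine good_cons ?_ (ih (c ∘ Fin.succ) q F)
    · -- Good1 of {x | evalFrom p (replicate x (c 0)) = q}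
      have hrep : {x : ℕ | M.evalFrom p (List.replicate x (c 0)) = q} =
          {x : ℕ | (fun q' => M.step q' (c 0))^[x] p = q} := by
        ext x; simp [evalFrom_replicate]
      rw [hrep]
      obtain ⟨m, s, t, h⟩ := good1_iterate (fun q' => M.step q' (c 0)) p q
      exact ⟨m, s, t, h⟩

/-- Forward direction. -/
lemma good_of_regular {ℓ : ℕ} (L : Language (Fin ℓ)) (hL : L.IsRegular) :
    Good {n : Fin ℓ → ℕ | (List.ofFn fun i => List.replicate (n i) i).flatten ∈ L} := by
  obtain ⟨σ, _, M, rfl⟩ := hL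
  have := good_blocks M ℓ (fun i => i) M.start M.accept
  convert this using 2
  funext n; exact propext (DFA.mem_accepts M)

lemma count_wordB {ℓ : ℕ} (n : Fin ℓ → ℕ) (i : Fin ℓ) : (wordB ℓ n).count i = n i := by
  classical
  rw [wordB, List.count_flatten, List.map_ofFn, List.sum_ofFn]
  have : ∀ j : Fin ℓ, (List.count i ∘ fun j => List.replicate (n j) j) j
      = if j = i then n j else 0 := by
    intro j
    simp [List.count_replicate]
  rw [Finset.sum_congr rfl (fun j _ => this j)]
  simp

lemma wordB_injective {ℓ : ℕ} : Function.Injective (wordB ℓ) := by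
  intro n m h
  funext i
  rw [← count_wordB n i, ← count_wordB m i, h]

lemma image_repB {ℓ : ℕ} (X : Set ℕ) :
    repB ℓ '' X = {n : Fin ℓ → ℕ |
      wordB ℓ n ∈ {w : List (Fin ℓ) | ∃ x ∈ X, w = wordB ℓ (repB ℓ x)}} := by
  ext n
  simp only [Set.mem_image, Set.mem_setOf_eq]
  constructor
  · rintro ⟨x, hx, rfl⟩
    exact ⟨x, hx, rfl⟩
  · rintro ⟨x, hx, h⟩
    exact ⟨x, hx, (wordB_injective h.symm)⟩



lemma succ_mod (x T : ℕ) (hT : 0 < T) :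
    (x + 1) % T = if x % T = T - 1 then 0 else x % T + 1 := by
  have hd := Nat.div_add_mod x T
  have hm := Nat.mod_lt x hT
  split_ifs with h
  · have : x + 1 = T * (x / T) + T := by omega
    rw [this, ← Nat.mul_succ, Nat.mul_mod_right]
  · have h1 : x + 1 = T * (x / T) + (x % T + 1) := by omega
    rw [h1, Nat.mul_add_mod, Nat.mod_eq_of_lt (by omega)]

section Piece
variable {ℓ : ℕ} (s t : Fin ℓ → ℕ)

def capB : ℕ := (Finset.univ.sup fun i : Fin ℓ => s i + t i) + 2

lemma le_capB (i : Fin ℓ) : s i + t i + 2 ≤ capB s t := by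
  have : s i + t i ≤ Finset.univ.sup fun i : Fin ℓ => s i + t i :=
    Finset.le_sup (f := fun i => s i + t i) (Finset.mem_univ i)
  unfold capB; omega

def phi (i : Fin ℓ) (m : ℕ) : ℕ :=
  if m ≤ s i then m else if t i = 0 then s i + 1 else s i + 1 + (m - s i - 1) % t i

lemma phi_le (i : Fin ℓ) (m : ℕ) : phi s t i m ≤ s i + t i + 1 := by
  unfold phi
  split_ifs with h1 h2
  · omega
  · omega
  · have := Nat.mod_lt (m - s i - 1) (show 0 < t i by omega)
    omega

lemma phi_lt (i : Fin ℓ) (m : ℕ) : phi s t i m < capB s t := by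
  have := phi_le s t i m
  have := le_capB s t i
  omega

def bump (i : Fin ℓ) (c : ℕ) : ℕ :=
  if c ≤ s i + t i then
    (if c < s i then c + 1 else if c = s i + t i then s i + 1 else c + 1)
  else c

lemma bump_lt (i : Fin ℓ) {c : ℕ} (hc : c < capB s t) : bump s t i c < capB s t := by
  have := le_capB s t i
  unfold bump
  split_ifs <;> omega

lemma bump_phi (i : Fin ℓ) (m : ℕ) : bump s t i (phi s t i m) = phi s t i (m + 1) := by
  unfold bump phi
  rcases Nat.lt_or_ge (s i) m with hm | hm
  · -- m > s i
    rcases Nat.eq_zero_or_pos (t i) with ht | ht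
    · -- t i = 0 : phi m = s i + 1, guard fails
      simp only [if_neg (by omega : ¬ m ≤ s i), if_pos ht, if_neg (by omega : ¬ m + 1 ≤ s i)]
      rw [if_neg (by omega : ¬ s i + 1 ≤ s i + t i)]
    · have hr := Nat.mod_lt (m - s i - 1) ht
      set r := (m - s i - 1) % t i with hrdef
      simp only [if_neg (by omega : ¬ m ≤ s i), if_neg (by omega : ¬ t i = 0),
        if_neg (by omega : ¬ m + 1 ≤ s i)]
      have hsm : (m - s i) % t i = if r = t i - 1 then 0 else r + 1 := by
        have : m - s i = (m - s i - 1) + 1 := by omega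
        rw [this, succ_mod _ _ ht, ← hrdef]
      have hms : m + 1 - s i - 1 = m - s i := by omega
      rw [hms]
      by_cases hcase : r = t i - 1
      · rw [if_pos (by omega : s i + 1 + r ≤ s i + t i), if_neg (by omega : ¬ s i + 1 + r < s i),
          if_pos (by omega : s i + 1 + r = s i + t i), hsm, if_pos hcase]
      · rw [if_pos (by omega : s i + 1 + r ≤ s i + t i), if_neg (by omega : ¬ s i + 1 + r < s i),
          if_neg (by omega : ¬ s i + 1 + r = s i + t i), hsm, if_neg hcase]
        omega
  · -- m ≤ s i : phi m = m
    simp only [if_pos hm]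
    have h0 : m + 1 - s i - 1 = 0 := by omega
    rw [h0, Nat.zero_mod]
    split_ifs <;> omega

def goodC (i : Fin ℓ) (c : ℕ) : Prop := c = s i ∨ (0 < t i ∧ c = s i + t i)

instance (i : Fin ℓ) (c : ℕ) : Decidable (goodC s t i c) := by
  unfold goodC; infer_instance

lemma goodC_phi (i : Fin ℓ) (m : ℕ) : goodC s t i (phi s t i m) ↔ m ∈ AP (s i) (t i) := by
  unfold goodC phi AP
  rcases Nat.lt_or_ge (s i) m with hm | hm
  · rcases Nat.eq_zero_or_pos (t i) with ht | ht
    · simp only [if_neg (by omega : ¬ m ≤ s i), if_pos ht, Set.mem_setOf_eq]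
      constructor
      · rintro (h | ⟨h1, _⟩)
        · exact absurd h (by omega)
        · exact absurd h1 (by omega)
      · rintro ⟨k, hk⟩
        rw [ht, Nat.mul_zero] at hk
        exact absurd hk (by omega)
    · have hr := Nat.mod_lt (m - s i - 1) ht
      simp only [if_neg (by omega : ¬ m ≤ s i), if_neg (by omega : ¬ t i = 0), Set.mem_setOf_eq]
      set r := (m - s i - 1) % t i with hrdef
      have hsm : (m - s i) % t i = if r = t i - 1 then 0 else r + 1 := by
        have h2 : m - s i = (m - s i - 1) + 1 := by omega
        rw [h2, succ_mod _ _ ht, ← hrdef]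
      constructor
      · intro h
        have hrt : r = t i - 1 := by omega
        have hmod : (m - s i) % t i = 0 := by rw [hsm, if_pos hrt]
        have hdm := Nat.div_add_mod (m - s i) (t i)
        refine ⟨(m - s i) / t i, ?_⟩
        have : t i * ((m - s i) / t i) = m - s i := by omega
        rw [Nat.mul_comm] at this
        omega
      · rintro ⟨k, hk⟩
        right
        have hmod : (m - s i) % t i = 0 := by
          have : m - s i = k * t i := by omega
          rw [this, Nat.mul_mod_left]
        have hrt : r = t i - 1 := by
          by_contra hne
          rw [hsm, if_neg hne] at hmod
          omega
        omega
  · simp only [if_pos hm, Set.mem_setOf_eq]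
    constructor
    · intro h
      rcases h with h | ⟨ht, h⟩
      · exact ⟨0, by omega⟩
      · omega
    · rintro ⟨k, hk⟩
      left
      have : k * t i ≤ 0 := by
        have h1 : s i + k * t i ≤ s i + 0 := by omega
        exact Nat.le_of_add_le_add_left h1
      omega

end Piece


lemma flatten_ofFn_nil {α : Type*} {k : ℕ} (F : Fin k → List α) (h : ∀ j, F j = []) :
    (List.ofFn F).flatten = [] := by
  rw [List.flatten_eq_nil_iff]
  intro l hl
  obtain ⟨j, rfl⟩ := (List.mem_ofFn.mp hl)
  exact h j

lemma flatten_ofFn_congr {α : Type*} {k : ℕ} {F G : Fin k → List α} (h : ∀ j, F j = G j) :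
    (List.ofFn F).flatten = (List.ofFn G).flatten := by
  congr 1
  exact congrArg List.ofFn (funext h)

/-- Splitting a flatten of blocks at position `b`. -/
lemma flatten_split3 {α : Type*} :
    ∀ {k : ℕ} (F : Fin k → List α) (b : ℕ) (hb : b < k),
      (List.ofFn F).flatten =
        (List.ofFn fun j => if (j : ℕ) < b then F j else []).flatten ++ F ⟨b, hb⟩ ++
        (List.ofFn fun j => if b < (j : ℕ) then F j else []).flatten := by
  intro k
  induction k with
  | zero => intro F b hb; omega
  | succ k ih =>
    intro F b hb
    rw [List.ofFn_succ (f := F), List.flatten_cons]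
    rcases b with _ | b0
    · -- b = 0
      have h1 : (List.ofFn fun j : Fin (k+1) => if (j : ℕ) < 0 then F j else []).flatten = [] :=
        flatten_ofFn_nil _ (fun j => by simp)
      rw [h1, List.nil_append]
      have h2 : (List.ofFn fun j : Fin (k+1) => if 0 < (j : ℕ) then F j else []).flatten =
          (List.ofFn fun j : Fin k => F j.succ).flatten := by
        rw [List.ofFn_succ (f := fun j : Fin (k+1) => if 0 < (j : ℕ) then F j else [])]
        simp only [Fin.val_zero, Nat.lt_irrefl, if_neg (by omega : ¬ (0:ℕ) < 0)]
        rw [List.flatten_cons]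
        have : ∀ j : Fin k, (if 0 < ((j.succ : Fin (k+1)) : ℕ) then F j.succ else []) = F j.succ := by
          intro j
          rw [if_pos]
          simp [Fin.val_succ]
        rw [flatten_ofFn_congr this]
        simp
      rw [h2]
      rfl
    · -- b = b0 + 1
      have hb0 : b0 < k := by omega
      rw [ih (fun j => F j.succ) b0 hb0]
      have e1 : (List.ofFn fun j : Fin (k+1) => if (j : ℕ) < b0 + 1 then F j else []).flatten =
          F 0 ++ (List.ofFn fun j : Fin k => if (j : ℕ) < b0 then F j.succ else []).flatten := by
        rw [List.ofFn_succ (f := fun j : Fin (k+1) => if (j : ℕ) < b0 + 1 then F j else [])]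
        rw [List.flatten_cons]
        congr 1
        · simp
      have e2 : (List.ofFn fun j : Fin (k+1) => if b0 + 1 < (j : ℕ) then F j else []).flatten =
          (List.ofFn fun j : Fin k => if b0 < (j : ℕ) then F j.succ else []).flatten := by
        rw [List.ofFn_succ (f := fun j : Fin (k+1) => if b0 + 1 < (j : ℕ) then F j else [])]
        rw [List.flatten_cons]
        have h0 : (if b0 + 1 < ((0 : Fin (k+1)) : ℕ) then F 0 else []) = [] := by
          rw [if_neg]; simp
        rw [h0, List.nil_append]
        refine flatten_ofFn_congr (fun j => ?_)
        simp only [Fin.val_succ]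
        by_cases h : b0 < (j : ℕ)
        · rw [if_pos (by omega), if_pos h]
        · rw [if_neg (by omega), if_neg h]
      rw [e1, e2]
      have e3 : F ⟨b0 + 1, hb⟩ = F (Fin.succ ⟨b0, hb0⟩) := rfl
      rw [e3]
      simp [List.append_assoc]


section PieceDFA

variable {ℓ : ℕ} (hℓ : 0 < ℓ) (s t : Fin ℓ → ℕ)

def phiF (i : Fin ℓ) (m : ℕ) : Fin (capB s t) := ⟨phi s t i m, phi_lt s t i m⟩

def pieceDFA : DFA (Fin ℓ) (Option (Fin ℓ × Fin (capB s t))) where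
  step st a := st.bind fun p =>
    if (a : ℕ) < (p.1 : ℕ) then none
    else if a = p.1 then some (p.1, ⟨bump s t p.1 p.2, bump_lt s t p.1 p.2.isLt⟩)
    else if goodC s t p.1 (p.2 : ℕ) ∧
        (∀ j : Fin ℓ, (p.1 : ℕ) < (j : ℕ) → (j : ℕ) < (a : ℕ) → s j = 0)
      then some (a, phiF s t a 1) else none
  start := some (⟨0, hℓ⟩, phiF s t ⟨0, hℓ⟩ 0)
  accept := {st | ∃ i c, st = some (i, c) ∧ goodC s t i (c : ℕ) ∧
    ∀ j : Fin ℓ, (i : ℕ) < (j : ℕ) → s j = 0}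

lemma pieceDFA_step_some (i : Fin ℓ) (c : Fin (capB s t)) (a : Fin ℓ) :
    (pieceDFA hℓ s t).step (some (i, c)) a =
      if (a : ℕ) < (i : ℕ) then none
      else if a = i then some (i, ⟨bump s t i c, bump_lt s t i c.isLt⟩)
      else if goodC s t i (c : ℕ) ∧
          (∀ j : Fin ℓ, (i : ℕ) < (j : ℕ) → (j : ℕ) < (a : ℕ) → s j = 0)
        then some (a, phiF s t a 1) else none := rfl

lemma pieceDFA_step_same (i : Fin ℓ) (c : Fin (capB s t)) :
    (pieceDFA hℓ s t).step (some (i, c)) i =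
      some (i, ⟨bump s t i c, bump_lt s t i c.isLt⟩) := by
  rw [pieceDFA_step_some, if_neg (lt_irrefl _), if_pos rfl]

lemma pieceDFA_eval_cons (q : Option (Fin ℓ × Fin (capB s t))) (a : Fin ℓ)
    (w : List (Fin ℓ)) :
    (pieceDFA hℓ s t).evalFrom q (a :: w) =
      (pieceDFA hℓ s t).evalFrom ((pieceDFA hℓ s t).step q a) w := rfl

lemma eval_replicate_piece (i : Fin ℓ) :
    ∀ (m r : ℕ), (pieceDFA hℓ s t).evalFrom (some (i, phiF s t i r))
      (List.replicate m i) = some (i, phiF s t i (r + m)) := by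
  intro m
  induction m with
  | zero => intro r; rfl
  | succ m ih =>
    intro r
    rw [List.replicate_succ, pieceDFA_eval_cons, pieceDFA_step_same]
    have h1 : (⟨bump s t i (phiF s t i r), bump_lt s t i (phiF s t i r).isLt⟩ :
        Fin (capB s t)) = phiF s t i (r + 1) := by
      apply Fin.ext
      exact bump_phi s t i r
    rw [h1, ih (r + 1), show r + 1 + m = r + (m + 1) by omega]

/-- The blocks strictly above `i`. -/
def Wgt (b : ℕ) (n : Fin ℓ → ℕ) : List (Fin ℓ) :=
  (List.ofFn fun j : Fin ℓ => if b < (j : ℕ) then List.replicate (n j) j else []).flatten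

/-- The blocks up to `i` (inclusive). -/
def Wle (b : ℕ) (n : Fin ℓ → ℕ) : List (Fin ℓ) :=
  (List.ofFn fun j : Fin ℓ => if (j : ℕ) ≤ b then List.replicate (n j) j else []).flatten

lemma ap_zero_mem {a b : ℕ} (h : (0 : ℕ) ∈ AP a b) : a = 0 := by
  obtain ⟨k, hk⟩ := h
  omega

lemma zero_mem_ap {a b : ℕ} (h : a = 0) : (0 : ℕ) ∈ AP a b := ⟨0, by omega⟩

lemma eval_accept_piece :
    ∀ (d : ℕ) (i : Fin ℓ) (r m : ℕ) (n : Fin ℓ → ℕ), ℓ - (i : ℕ) = d →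
      r + m ∈ AP (s i) (t i) →
      (∀ j : Fin ℓ, (i : ℕ) < (j : ℕ) → n j ∈ AP (s j) (t j)) →
      (pieceDFA hℓ s t).evalFrom (some (i, phiF s t i r))
        (List.replicate m i ++ Wgt (i : ℕ) n) ∈ (pieceDFA hℓ s t).accept := by
  intro d
  induction d using Nat.strong_induction_on with
  | _ d ih =>
    intro i r m n hd hAP hrest
    rw [DFA.evalFrom_of_append, eval_replicate_piece]
    by_cases hz : ∀ j : Fin ℓ, (i : ℕ) < (j : ℕ) → n j = 0
    · have hW : Wgt (i : ℕ) n = [] := by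
        apply flatten_ofFn_nil
        intro j
        by_cases h : (i : ℕ) < (j : ℕ)
        · simp only [if_pos h, hz j h, List.replicate_zero]
        · simp only [if_neg h]
      rw [hW, DFA.evalFrom_nil]
      refine ⟨i, _, rfl, ?_, ?_⟩
      · exact (goodC_phi s t i (r + m)).mpr hAP
      · intro j hj
        have := hrest j hj
        rw [hz j hj] at this
        exact ap_zero_mem this
    · push_neg at hz
      obtain ⟨j1, hj1, hj1n⟩ := hz
      set Tset := Finset.univ.filter (fun j : Fin ℓ => (i : ℕ) < (j : ℕ) ∧ n j ≠ 0) with hTset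
      have hne : Tset.Nonempty :=
        ⟨j1, Finset.mem_filter.mpr ⟨Finset.mem_univ _, hj1, hj1n⟩⟩
      set j₀ := Tset.min' hne with hj₀def
      have hj₀mem : j₀ ∈ Tset := Tset.min'_mem hne
      have hij₀ : (i : ℕ) < (j₀ : ℕ) := by
        have := Finset.mem_filter.mp hj₀mem
        exact this.2.1
      have hnj₀ : n j₀ ≠ 0 := (Finset.mem_filter.mp hj₀mem).2.2
      have hmin : ∀ j : Fin ℓ, (i : ℕ) < (j : ℕ) → (j : ℕ) < (j₀ : ℕ) → n j = 0 := by
        intro j hij hjj₀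
        by_contra hne2
        have hmem : j ∈ Tset := Finset.mem_filter.mpr ⟨Finset.mem_univ _, hij, hne2⟩
        have := Tset.min'_le j hmem
        rw [← hj₀def] at this
        have : (j₀ : ℕ) ≤ (j : ℕ) := this
        omega
      -- split the remaining word at j₀
      have hsplit : Wgt (i : ℕ) n =
          List.replicate (n j₀) j₀ ++ Wgt (j₀ : ℕ) n := by
        rw [Wgt, flatten_split3 _ (j₀ : ℕ) j₀.isLt]
        have h1 : (List.ofFn fun j : Fin ℓ =>
            if (j : ℕ) < (j₀ : ℕ) then
              (if (i : ℕ) < (j : ℕ) then List.replicate (n j) j else []) else []).flatten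
            = [] := by
          apply flatten_ofFn_nil
          intro j
          by_cases h : (j : ℕ) < (j₀ : ℕ)
          · by_cases h2 : (i : ℕ) < (j : ℕ)
            · simp only [if_pos h, if_pos h2, hmin j h2 h, List.replicate_zero]
            · simp only [if_pos h, if_neg h2]
          · simp only [if_neg h]
        rw [h1, List.nil_append]
        congr 1
        · have : (⟨(j₀ : ℕ), j₀.isLt⟩ : Fin ℓ) = j₀ := Fin.eta j₀ j₀.isLt
          rw [this, if_pos hij₀]
        · rw [Wgt]
          apply flatten_ofFn_congr
          intro j
          by_cases h : (j₀ : ℕ) < (j : ℕ)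
          · simp only [if_pos h, if_pos (show (i : ℕ) < (j : ℕ) by omega)]
          · simp only [if_neg h]
      rw [hsplit]
      have hrepl : List.replicate (n j₀) j₀ = j₀ :: List.replicate (n j₀ - 1) j₀ := by
        conv_lhs => rw [show n j₀ = (n j₀ - 1) + 1 by omega]
        rw [List.replicate_succ]
      rw [hrepl]
      show (pieceDFA hℓ s t).evalFrom
        ((pieceDFA hℓ s t).step (some (i, phiF s t i (r + m))) j₀)
        (List.replicate (n j₀ - 1) j₀ ++ Wgt (j₀ : ℕ) n) ∈ _
      have hstep : (pieceDFA hℓ s t).step (some (i, phiF s t i (r + m))) j₀ =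
          some (j₀, phiF s t j₀ 1) := by
        rw [pieceDFA_step_some, if_neg (by omega), if_neg (by intro h; rw [h] at hij₀; omega)]
        rw [if_pos]
        refine ⟨(goodC_phi s t i (r + m)).mpr hAP, ?_⟩
        intro j h1 h2
        have := hrest j h1
        rw [hmin j h1 h2] at this
        exact ap_zero_mem this
      rw [hstep]
      have : 1 + (n j₀ - 1) = n j₀ := by omega
      refine ih (ℓ - (j₀ : ℕ)) (by omega) j₀ 1 (n j₀ - 1) n rfl ?_ ?_
      · rw [this]; exact hrest j₀ hij₀
      · intro j hj
        exact hrest j (by omega)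

end PieceDFA

section PieceInv

variable {ℓ : ℕ} (hℓ : 0 < ℓ) (s t : Fin ℓ → ℕ)

lemma Wle_split (b : Fin ℓ) (n : Fin ℓ → ℕ) :
    Wle (b : ℕ) n =
      (List.ofFn fun j : Fin ℓ =>
        if (j : ℕ) < (b : ℕ) then List.replicate (n j) j else []).flatten ++
      List.replicate (n b) b := by
  rw [Wle, flatten_split3 _ (b : ℕ) b.isLt]
  have h2 : (List.ofFn fun j : Fin ℓ =>
      if (b : ℕ) < (j : ℕ) then
        (if (j : ℕ) ≤ (b : ℕ) then List.replicate (n j) j else []) else []).flatten = [] := by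
    apply flatten_ofFn_nil
    intro j
    by_cases h : (b : ℕ) < (j : ℕ)
    · simp only [if_pos h, if_neg (show ¬ (j : ℕ) ≤ (b : ℕ) by omega)]
    · simp only [if_neg h]
  rw [h2, List.append_nil]
  congr 1
  · apply flatten_ofFn_congr
    intro j
    by_cases h : (j : ℕ) < (b : ℕ)
    · simp only [if_pos h, if_pos (show (j : ℕ) ≤ (b : ℕ) by omega)]
    · simp only [if_neg h]
  · rw [Fin.eta, if_pos (le_refl _)]

lemma eval_inv_piece :
    ∀ (w : List (Fin ℓ)) (i : Fin ℓ) (c : Fin (capB s t)),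
      (pieceDFA hℓ s t).evalFrom (pieceDFA hℓ s t).start w = some (i, c) →
      ∃ n : Fin ℓ → ℕ, w = Wle (i : ℕ) n ∧
        (∀ j : Fin ℓ, (j : ℕ) < (i : ℕ) → n j ∈ AP (s j) (t j)) ∧
        (∀ j : Fin ℓ, (i : ℕ) < (j : ℕ) → n j = 0) ∧
        (c : ℕ) = phi s t i (n i) := by
  intro w
  induction w using List.reverseRecOn with
  | nil =>
    intro i c h
    rw [DFA.evalFrom_nil] at h
    have h1 : (⟨0, hℓ⟩ : Fin ℓ) = i ∧ phiF s t ⟨0, hℓ⟩ 0 = c := by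
      have h' : (some (⟨0, hℓ⟩, phiF s t ⟨0, hℓ⟩ 0) :
          Option (Fin ℓ × Fin (capB s t))) = some (i, c) := h
      rw [Option.some_inj] at h'
      exact ⟨congrArg Prod.fst h', congrArg Prod.snd h'⟩
    obtain ⟨hi, hc⟩ := h1
    refine ⟨fun _ => 0, ?_, ?_, fun _ _ => rfl, ?_⟩
    · symm
      apply flatten_ofFn_nil
      intro j
      by_cases h2 : (j : ℕ) ≤ (i : ℕ)
      · simp only [if_pos h2, List.replicate_zero]
      · simp only [if_neg h2]
    · intro j hj
      rw [← hi] at hj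
      simp at hj
    · rw [← hc, ← hi]
      rfl
  | append_singleton w a ih =>
    intro i c h
    rw [DFA.evalFrom_append_singleton] at h
    rcases hq : (pieceDFA hℓ s t).evalFrom (pieceDFA hℓ s t).start w with _ | ⟨i', c'⟩
    · rw [hq] at h
      exact absurd h (by simp [pieceDFA])
    · rw [hq, pieceDFA_step_some] at h
      obtain ⟨n', hw', hap', hz', hc'⟩ := ih i' c' hq
      by_cases h1 : (a : ℕ) < (i' : ℕ)
      · rw [if_pos h1] at h
        exact absurd h (by simp)
      · rw [if_neg h1] at h
        by_cases h2 : a = i'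
        · rw [if_pos h2] at h
          rw [Option.some_inj] at h
          have hi : i' = i := congrArg Prod.fst h
          have hcc : (⟨bump s t i' c', bump_lt s t i' c'.isLt⟩ : Fin (capB s t)) = c :=
            congrArg Prod.snd h
          subst hi
          subst h2
          refine ⟨Function.update n' a (n' a + 1), ?_, ?_, ?_, ?_⟩
          · rw [hw', Wle_split a, Wle_split a (Function.update n' a (n' a + 1))]
            rw [Function.update_self, List.replicate_succ', ← List.append_assoc]
            congr 2
            apply flatten_ofFn_congr
            intro j
            by_cases hj : (j : ℕ) < (a : ℕ)
            · have : j ≠ a := by intro hh; rw [hh] at hj; omega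
              simp only [if_pos hj, Function.update_of_ne this]
            · simp only [if_neg hj]
          · intro j hj
            have : j ≠ a := by intro hh; rw [hh] at hj; omega
            rw [Function.update_of_ne this]
            exact hap' j hj
          · intro j hj
            have : j ≠ a := by intro hh; rw [hh] at hj; omega
            rw [Function.update_of_ne this]
            exact hz' j hj
          · rw [← hcc]
            show bump s t a (c' : ℕ) = _
            rw [hc', bump_phi, Function.update_self]
        · rw [if_neg h2] at h
          by_cases h3 : goodC s t i' (c' : ℕ) ∧
              (∀ j : Fin ℓ, (i' : ℕ) < (j : ℕ) → (j : ℕ) < (a : ℕ) → s j = 0)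
          · rw [if_pos h3] at h
            rw [Option.some_inj] at h
            have hi : a = i := congrArg Prod.fst h
            have hcc : phiF s t a 1 = c := congrArg Prod.snd h
            have hia : (i' : ℕ) < (a : ℕ) := by
              rcases Nat.lt_or_ge (i' : ℕ) (a : ℕ) with hh | hh
              · exact hh
              · exfalso
                have : (a : ℕ) = (i' : ℕ) := by omega
                exact h2 (Fin.ext this)
            subst hi
            refine ⟨Function.update n' a 1, ?_, ?_, ?_, ?_⟩
            · rw [hw', Wle_split a, Function.update_self, List.replicate_one]
              congr 1
              rw [Wle]
              apply flatten_ofFn_congr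
              intro j
              by_cases hj : (j : ℕ) ≤ (i' : ℕ)
              · have hj2 : (j : ℕ) < (a : ℕ) := by omega
                have : j ≠ a := by intro hh; rw [hh] at hj; omega
                simp only [if_pos hj, if_pos hj2, Function.update_of_ne this]
              · simp only [if_neg hj]
                by_cases hj2 : (j : ℕ) < (a : ℕ)
                · have : j ≠ a := by intro hh; rw [hh] at hj2; omega
                  simp only [if_pos hj2, Function.update_of_ne this,
                    hz' j (by omega), List.replicate_zero]
                · simp only [if_neg hj2]
            · intro j hj
              by_cases hji : (j : ℕ) < (i' : ℕ)
              · have : j ≠ a := by intro hh; rw [hh] at hji; omega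
                rw [Function.update_of_ne this]
                exact hap' j hji
              · by_cases hji2 : (j : ℕ) = (i' : ℕ)
                · have hjeq : j = i' := Fin.ext hji2
                  subst hjeq
                  have : j ≠ a := by intro hh; rw [hh] at hji2; omega
                  rw [Function.update_of_ne this]
                  have := h3.1
                  rw [hc'] at this
                  exact (goodC_phi s t j (n' j)).mp this
                · have hji3 : (i' : ℕ) < (j : ℕ) := by omega
                  have : j ≠ a := by intro hh; rw [hh] at hj; omega
                  rw [Function.update_of_ne this, hz' j hji3]
                  exact zero_mem_ap (h3.2 j hji3 hj)
            · intro j hj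
              have : j ≠ a := by intro hh; rw [hh] at hj; omega
              rw [Function.update_of_ne this]
              exact hz' j (by omega)
            · rw [← hcc, Function.update_self]
              rfl
          · rw [if_neg h3] at h
            exact absurd h (by simp)

lemma pieceDFA_accepts :
    (pieceDFA hℓ s t).accepts = wordB ℓ '' Box s t := by
  ext w
  rw [DFA.mem_accepts]
  constructor
  · intro hw
    obtain ⟨i, c, heq, hg, hzero⟩ := hw
    obtain ⟨n, hwle, hap, hz, hc⟩ := eval_inv_piece hℓ s t w i c heq
    have hall : ∀ j : Fin ℓ, n j ∈ AP (s j) (t j) := by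
      intro j
      rcases lt_trichotomy ((j : ℕ)) ((i : ℕ)) with hlt | heq2 | hgt
      · exact hap j hlt
      · have : j = i := Fin.ext heq2
        subst this
        rw [hc] at hg
        exact (goodC_phi s t j (n j)).mp hg
      · rw [hz j hgt]
        exact zero_mem_ap (hzero j hgt)
    refine ⟨n, ?_, ?_⟩
    · choose k hk using hall
      exact ⟨k, hk⟩
    · rw [hwle, wordB]
      symm
      apply flatten_ofFn_congr
      intro j
      by_cases hj : (j : ℕ) ≤ (i : ℕ)
      · rw [if_pos hj]
      · rw [if_neg hj, hz j (by omega), List.replicate_zero]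
  · rintro ⟨n, hn, rfl⟩
    obtain ⟨k, hk⟩ := hn
    have hall : ∀ j : Fin ℓ, n j ∈ AP (s j) (t j) := fun j => ⟨k j, hk j⟩
    have hsplit : wordB ℓ n = List.replicate (n ⟨0, hℓ⟩) ⟨0, hℓ⟩ ++ Wgt 0 n := by
      rw [wordB, flatten_split3 _ 0 hℓ]
      have h1 : (List.ofFn fun j : Fin ℓ =>
          if (j : ℕ) < 0 then List.replicate (n j) j else []).flatten = [] := by
        apply flatten_ofFn_nil
        intro j
        simp
      rw [h1, List.nil_append, Wgt]
    rw [hsplit]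
    show (pieceDFA hℓ s t).evalFrom (some (⟨0, hℓ⟩, phiF s t ⟨0, hℓ⟩ 0)) _ ∈ _
    have h0 : (0 : ℕ) + n ⟨0, hℓ⟩ ∈ AP (s ⟨0, hℓ⟩) (t ⟨0, hℓ⟩) := by
      rw [Nat.zero_add]; exact hall _
    exact eval_accept_piece hℓ s t (ℓ - 0) ⟨0, hℓ⟩ 0 (n ⟨0, hℓ⟩) n rfl h0
      (fun j _ => hall j)

end PieceInv

section UnionDFA

variable {α : Type*} {m : ℕ} {σ : Fin m → Type} (Ms : ∀ r, DFA α (σ r))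

def unionDFA : DFA α (∀ r, σ r) where
  step st a := fun r => (Ms r).step (st r) a
  start := fun r => (Ms r).start
  accept := {st | ∃ r, st r ∈ (Ms r).accept}

lemma unionDFA_evalFrom :
    ∀ (w : List α) (st : ∀ r, σ r),
      (unionDFA Ms).evalFrom st w = fun r => (Ms r).evalFrom (st r) w := by
  intro w
  induction w with
  | nil => intro st; rfl
  | cons a w ih =>
    intro st
    show (unionDFA Ms).evalFrom ((unionDFA Ms).step st a) w = _
    rw [ih]
    rfl

lemma unionDFA_accepts : (unionDFA Ms).accepts = ⋃ r, (Ms r).accepts := by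
  ext w
  rw [DFA.mem_accepts]
  show (unionDFA Ms).evalFrom (unionDFA Ms).start w ∈ _ ↔ _
  rw [unionDFA_evalFrom]
  constructor
  · rintro ⟨r, hr⟩
    exact Set.mem_iUnion.mpr ⟨r, hr⟩
  · intro hw
    obtain ⟨r, hr⟩ := Set.mem_iUnion.mp hw
    exact ⟨r, hr⟩

end UnionDFA

end BlAux

/-- `X ⊆ ℕ` is `B_ℓ`-recognizable iff `repB ℓ '' X ⊆ ℕ^ℓ` is a finite union of linear
sets all of whose periods are integer multiples of the canonical basis vectors. -/
theorem Bl_recognizable_iff_semilinear (ℓ : ℕ) (hℓ : 1 ≤ ℓ) (X : Set ℕ) :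
    Language.IsRegular {w : List (Fin ℓ) | ∃ x ∈ X, w = wordB ℓ (repB ℓ x)} ↔
      ∃ (m : ℕ) (s t : Fin m → Fin ℓ → ℕ),
        repB ℓ '' X =
          ⋃ r : Fin m, {n : Fin ℓ → ℕ | ∃ k : Fin ℓ → ℕ, ∀ i, n i = s r i + k i * t r i} := by
  classical
  constructor
  · intro hreg
    have hgood := BlAux.good_of_regular _ hreg
    rw [BlAux.image_repB X]
    obtain ⟨m, s, t, hst⟩ := hgood
    exact ⟨m, s, t, hst⟩
  · rintro ⟨m, s, t, hX⟩
    have hL : {w : List (Fin ℓ) | ∃ x ∈ X, w = wordB ℓ (repB ℓ x)} =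
        ⋃ r : Fin m, wordB ℓ '' BlAux.Box (s r) (t r) := by
      have h1 : {w : List (Fin ℓ) | ∃ x ∈ X, w = wordB ℓ (repB ℓ x)} =
          wordB ℓ '' (repB ℓ '' X) := by
        ext w
        simp only [Set.mem_setOf_eq, Set.mem_image]
        constructor
        · rintro ⟨x, hx, rfl⟩
          exact ⟨repB ℓ x, ⟨x, hx, rfl⟩, rfl⟩
        · rintro ⟨n, ⟨x, hx, rfl⟩, rfl⟩
          exact ⟨x, hx, rfl⟩
      rw [h1, hX, Set.image_iUnion]
      rfl
    rw [hL]
    have hpos : 0 < ℓ := hℓ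
    have hacc : (BlAux.unionDFA (fun r : Fin m => BlAux.pieceDFA hpos (s r) (t r))).accepts =
        ⋃ r : Fin m, (wordB ℓ '' BlAux.Box (s r) (t r) : Language (Fin ℓ)) := by
      rw [BlAux.unionDFA_accepts]
      exact Set.iUnion_congr (fun r => BlAux.pieceDFA_accepts hpos (s r) (t r))
    exact ⟨_, inferInstance, _, hacc⟩
end
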